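/- arXiv:0902.3039 — 10 statements merged into one kernel-verified Lean document; each statement's English description precedes it below -/
import Mathlib

section
/- Let a, b be real numbers and define f_{a,b}(x) = (1+x)^b (1-x)^{-a} · arccos(x) for x ∈ (0,1). Then f_{a,b} is strictly decreasing on (0,1) if and only if b ≤ 2/π − a and a ≤ 1/2. -/
open Real Set
open Filter Topology


lemma flip_step {g : ℝ → ℝ} (hg : Differentiable ℝ g) {p B : ℝ} (hp : 0 < p) (hpB : p < B)
    (h0 : g 0 = 0) (hB : g B < 0)
    (hpos : ∀ t ∈ Ioo 0 p, 0 < deriv g t) (hneg : ∀ t ∈ Ioo p B, deriv g t < 0) :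
    ∃ z, p < z ∧ z < B ∧ (∀ t ∈ Ioo 0 z, 0 < g t) ∧ (∀ t ∈ Ioo z B, g t < 0) := by
  have hmono : StrictMonoOn g (Icc 0 p) :=
    strictMonoOn_of_deriv_pos (convex_Icc 0 p) hg.continuous.continuousOn
      (by rwa [interior_Icc])
  have hanti : StrictAntiOn g (Icc p B) :=
    strictAntiOn_of_deriv_neg (convex_Icc p B) hg.continuous.continuousOn
      (by rwa [interior_Icc])
  have hgp : 0 < g p := by
    have := hmono (left_mem_Icc.2 hp.le) (right_mem_Icc.2 hp.le) hp
    rwa [h0] at this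
  obtain ⟨z, hzmem, hgz⟩ : ∃ z ∈ Ioo p B, g z = 0 := by
    have h := intermediate_value_Ioo' hpB.le hg.continuous.continuousOn (a := p) (b := B)
    have : (0:ℝ) ∈ g '' Ioo p B := h ⟨hB, hgp⟩
    obtain ⟨z, hz, hz0⟩ := this
    exact ⟨z, hz, hz0⟩
  refine ⟨z, hzmem.1, hzmem.2, ?_, ?_⟩
  · intro t ht
    rcases le_or_gt t p with h | h
    · have := hmono (left_mem_Icc.2 hp.le) ⟨ht.1.le, h⟩ ht.1
      rwa [h0] at this
    · have := hanti ⟨h.le, (ht.2.trans hzmem.2).le⟩ ⟨hzmem.1.le, hzmem.2.le⟩ ht.2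
      rwa [hgz] at this
  · intro t ht
    have := hanti ⟨hzmem.1.le, hzmem.2.le⟩ ⟨(hzmem.1.trans ht.1).le, ht.2.le⟩ ht.1
    rwa [hgz] at this

lemma flip_base {g : ℝ → ℝ} (hg : Differentiable ℝ g) {B : ℝ} (hB0 : 0 < B)
    (h0 : 0 < g 0) (hB : g B < 0)
    (hneg : ∀ t ∈ Ioo 0 B, deriv g t < 0) :
    ∃ z, 0 < z ∧ z < B ∧ (∀ t ∈ Ioo 0 z, 0 < g t) ∧ (∀ t ∈ Ioo z B, g t < 0) := by
  have hanti : StrictAntiOn g (Icc 0 B) :=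
    strictAntiOn_of_deriv_neg (convex_Icc 0 B) hg.continuous.continuousOn
      (by rwa [interior_Icc])
  obtain ⟨z, hzmem, hgz⟩ : ∃ z ∈ Ioo 0 B, g z = 0 := by
    have h := intermediate_value_Ioo' hB0.le hg.continuous.continuousOn (a := 0) (b := B)
    have : (0:ℝ) ∈ g '' Ioo 0 B := h ⟨hB, h0⟩
    obtain ⟨z, hz, hz0⟩ := this
    exact ⟨z, hz, hz0⟩
  refine ⟨z, hzmem.1, hzmem.2, ?_, ?_⟩
  · intro t ht
    have := hanti ⟨ht.1.le, (ht.2.trans hzmem.2).le⟩ ⟨hzmem.1.le, hzmem.2.le⟩ ht.2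
    rwa [hgz] at this
  · intro t ht
    have := hanti ⟨hzmem.1.le, hzmem.2.le⟩ ⟨(hzmem.1.trans ht.1).le, ht.2.le⟩ ht.1
    rwa [hgz] at this

lemma flip_final {g : ℝ → ℝ} (hg : Differentiable ℝ g) {p B : ℝ} (hp : 0 < p) (hpB : p < B)
    (h0 : g 0 = 0) (hB : g B = 0)
    (hpos : ∀ t ∈ Ioo 0 p, 0 < deriv g t) (hneg : ∀ t ∈ Ioo p B, deriv g t < 0) :
    ∀ t ∈ Ioo 0 B, 0 < g t := by
  have hmono : StrictMonoOn g (Icc 0 p) :=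
    strictMonoOn_of_deriv_pos (convex_Icc 0 p) hg.continuous.continuousOn
      (by rwa [interior_Icc])
  have hanti : StrictAntiOn g (Icc p B) :=
    strictAntiOn_of_deriv_neg (convex_Icc p B) hg.continuous.continuousOn
      (by rwa [interior_Icc])
  intro t ht
  rcases le_or_gt t p with h | h
  · have := hmono (left_mem_Icc.2 hp.le) ⟨ht.1.le, h⟩ ht.1
    rwa [h0] at this
  · have := hanti ⟨h.le, ht.2.le⟩ ⟨hpB.le, le_refl B⟩ ht.2
    rwa [hB] at this
noncomputable def hh (t : ℝ) : ℝ := Real.sin t - (2/π)*t - (1-2/π)*(t*Real.cos t)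
noncomputable def hh1 (t : ℝ) : ℝ := (2/π)*Real.cos t - 2/π + (1-2/π)*(t*Real.sin t)
noncomputable def hh2 (t : ℝ) : ℝ := (1-4/π)*Real.sin t + (1-2/π)*(t*Real.cos t)
noncomputable def hh3 (t : ℝ) : ℝ := (2-6/π)*Real.cos t - (1-2/π)*(t*Real.sin t)
noncomputable def hh4 (t : ℝ) : ℝ := -((3-8/π)*Real.sin t) - (1-2/π)*(t*Real.cos t)

lemma hasDerivAt_tcos (t : ℝ) :
    HasDerivAt (fun t : ℝ => t * Real.cos t) (Real.cos t - t * Real.sin t) t := by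
  have := (hasDerivAt_id t).mul (Real.hasDerivAt_cos t)
  convert this using 1 <;> try rfl
  simp only [id_eq]; ring

lemma hasDerivAt_tsin (t : ℝ) :
    HasDerivAt (fun t : ℝ => t * Real.sin t) (Real.sin t + t * Real.cos t) t := by
  have := (hasDerivAt_id t).mul (Real.hasDerivAt_sin t)
  convert this using 1 <;> try rfl
  simp only [id_eq]; ring

lemma hd_hh (t : ℝ) : HasDerivAt hh (hh1 t) t := by
  have h := ((Real.hasDerivAt_sin t).sub (((hasDerivAt_id t).const_mul (2/π)))).sub
    ((hasDerivAt_tcos t).const_mul (1-2/π))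
  convert h using 1 <;> try rfl
  unfold hh1; ring

lemma hd_hh1 (t : ℝ) : HasDerivAt hh1 (hh2 t) t := by
  have h := (((Real.hasDerivAt_cos t).const_mul (2/π)).sub_const (2/π)).add
    ((hasDerivAt_tsin t).const_mul (1-2/π))
  convert h using 1 <;> try rfl
  unfold hh2; ring

lemma hd_hh2 (t : ℝ) : HasDerivAt hh2 (hh3 t) t := by
  have h := ((Real.hasDerivAt_sin t).const_mul (1-4/π)).add
    ((hasDerivAt_tcos t).const_mul (1-2/π))
  convert h using 1 <;> try rfl
  unfold hh3; ring

lemma hd_hh3 (t : ℝ) : HasDerivAt hh3 (hh4 t) t := by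
  have h := ((Real.hasDerivAt_cos t).const_mul (2-6/π)).sub
    ((hasDerivAt_tsin t).const_mul (1-2/π))
  convert h using 1 <;> try rfl
  unfold hh4; ring

lemma key : ∀ t ∈ Ioo (0:ℝ) (π/2), (2/π)*t + (1-2/π)*(t*Real.cos t) < Real.sin t := by
  have hπ3 : (3:ℝ) < π := Real.pi_gt_three
  have hπ315 : π < 3.15 := Real.pi_lt_d2
  have hπ : (0:ℝ) < π := by linarith
  have hπ2 : (0:ℝ) < π/2 := by linarith
  have hi2 : 2/π*π = 2 := div_mul_cancel₀ (2:ℝ) hπ.ne'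
  have hi4 : 4/π*π = 4 := div_mul_cancel₀ (4:ℝ) hπ.ne'
  have hi6 : 6/π*π = 6 := div_mul_cancel₀ (6:ℝ) hπ.ne'
  have hi8 : 8/π*π = 8 := div_mul_cancel₀ (8:ℝ) hπ.ne'
  have hc1 : 2/π < 1 := by rw [div_lt_one hπ]; linarith
  have hc2 : 6/π < 2 := by rw [div_lt_iff₀ hπ]; linarith
  have hc3 : 8/π < 3 := by rw [div_lt_iff₀ hπ]; linarith
  have hc4 : 1 < 4/π := by rw [lt_div_iff₀ hπ]; linarith
  have hc0 : 0 < 2/π := by positivity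
  have d3 : Differentiable ℝ hh3 := fun t => (hd_hh3 t).differentiableAt
  have d2 : Differentiable ℝ hh2 := fun t => (hd_hh2 t).differentiableAt
  have d1 : Differentiable ℝ hh1 := fun t => (hd_hh1 t).differentiableAt
  have d0 : Differentiable ℝ hh := fun t => (hd_hh t).differentiableAt
  have e3 : ∀ t, deriv hh3 t = hh4 t := fun t => (hd_hh3 t).deriv
  have e2 : ∀ t, deriv hh2 t = hh3 t := fun t => (hd_hh2 t).deriv
  have e1 : ∀ t, deriv hh1 t = hh2 t := fun t => (hd_hh1 t).deriv
  have e0 : ∀ t, deriv hh t = hh1 t := fun t => (hd_hh t).deriv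
  have hsc : ∀ t ∈ Ioo (0:ℝ) (π/2), 0 < Real.sin t ∧ 0 < Real.cos t := by
    intro t ht
    exact ⟨Real.sin_pos_of_pos_of_lt_pi ht.1 (by linarith [ht.2]),
      Real.cos_pos_of_mem_Ioo ⟨by linarith [ht.1], ht.2⟩⟩
  obtain ⟨z3, hz3p, hz3B, h3pos, h3neg⟩ :
      ∃ z, 0 < z ∧ z < π/2 ∧ (∀ t ∈ Ioo 0 z, 0 < hh3 t) ∧ (∀ t ∈ Ioo z (π/2), hh3 t < 0) := by
    apply flip_base d3 hπ2
    · unfold hh3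
      rw [Real.cos_zero, Real.sin_zero]
      nlinarith
    · unfold hh3
      rw [Real.cos_pi_div_two, Real.sin_pi_div_two]
      nlinarith
    · intro t ht
      rw [e3]
      obtain ⟨hs, hc⟩ := hsc t ht
      unfold hh4
      nlinarith [mul_pos (show (0:ℝ) < 3 - 8/π by linarith) hs,
        mul_pos (show (0:ℝ) < 1 - 2/π by linarith) (mul_pos ht.1 hc)]
  obtain ⟨z2, hz2p, hz2B, h2pos, h2neg⟩ :
      ∃ z, z3 < z ∧ z < π/2 ∧ (∀ t ∈ Ioo 0 z, 0 < hh2 t) ∧ (∀ t ∈ Ioo z (π/2), hh2 t < 0) := by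
    apply flip_step d2 hz3p hz3B
    · unfold hh2; simp
    · unfold hh2
      rw [Real.cos_pi_div_two, Real.sin_pi_div_two]
      nlinarith
    · intro t ht; rw [e2]; exact h3pos t ht
    · intro t ht; rw [e2]; exact h3neg t ht
  obtain ⟨z1, hz1p, hz1B, h1pos, h1neg⟩ :
      ∃ z, z2 < z ∧ z < π/2 ∧ (∀ t ∈ Ioo 0 z, 0 < hh1 t) ∧ (∀ t ∈ Ioo z (π/2), hh1 t < 0) := by
    apply flip_step d1 (hz3p.trans hz2p) hz2B
    · unfold hh1; simp
    · unfold hh1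
      rw [Real.cos_pi_div_two, Real.sin_pi_div_two]
      nlinarith
    · intro t ht; rw [e1]; exact h2pos t ht
    · intro t ht; rw [e1]; exact h2neg t ht
  have h0pos : ∀ t ∈ Ioo (0:ℝ) (π/2), 0 < hh t := by
    apply flip_final d0 (hz3p.trans (hz2p.trans hz1p)) hz1B
    · unfold hh; simp
    · unfold hh
      rw [Real.cos_pi_div_two, Real.sin_pi_div_two]
      nlinarith
    · intro t ht; rw [e0]; exact h1pos t ht
    · intro t ht; rw [e0]; exact h1neg t ht
  intro t ht
  have := h0pos t ht
  unfold hh at this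
  linarith
lemma hdf (a b : ℝ) {x : ℝ} (hx : x ∈ Ioo (0:ℝ) 1) :
    HasDerivAt (fun x : ℝ => (1 + x) ^ b * (1 - x) ^ (-a) * Real.arccos x)
      ((1+x)^b * (1-x)^(-a) *
        (b*Real.arccos x/(1+x) + a*Real.arccos x/(1-x) - 1/Real.sqrt (1-x^2))) x := by
  have hp1 : (0:ℝ) < 1 + x := by linarith [hx.1]
  have hp2 : (0:ℝ) < 1 - x := by linarith [hx.2]
  have h1x2 : (0:ℝ) < 1 - x^2 := by nlinarith [hx.1, hx.2]
  have hs : (0:ℝ) < Real.sqrt (1 - x^2) := Real.sqrt_pos.2 h1x2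
  have g1 : HasDerivAt (fun x : ℝ => (1+x)^b) (1 * b * (1+x)^(b-1)) x :=
    ((hasDerivAt_id x).const_add 1).rpow_const (Or.inl hp1.ne')
  have g2 : HasDerivAt (fun x : ℝ => (1-x)^(-a)) ((-1) * (-a) * (1-x)^(-a-1)) x :=
    ((hasDerivAt_id x).const_sub 1).rpow_const (Or.inl hp2.ne')
  have g3 : HasDerivAt Real.arccos (-(1/Real.sqrt (1-x^2))) x :=
    Real.hasDerivAt_arccos (by linarith [hx.1] : x ≠ -1) (by linarith [hx.2] : x ≠ 1)
  have h := (g1.mul g2).mul g3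
  convert h using 1 <;> try rfl
  have e1 : (1+x)^(b-1) = (1+x)^b / (1+x) := by
    rw [Real.rpow_sub hp1, Real.rpow_one]
  have e2 : (1-x)^(-a-1) = (1-x)^(-a) / (1-x) := by
    rw [Real.rpow_sub hp2, Real.rpow_one]
  rw [e1, e2, Pi.mul_apply]
  field_simp
  ring
set_option maxHeartbeats 1600000 in
theorem carlson_arccos_strict_anti_iff (a b : ℝ) :
    StrictAntiOn (fun x : ℝ => (1 + x) ^ b * (1 - x) ^ (-a) * Real.arccos x) (Set.Ioo 0 1) ↔
      (b ≤ 2 / Real.pi - a ∧ a ≤ 1 / 2) := by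
  have hπ : (0:ℝ) < π := Real.pi_pos
  have hπ2 : (0:ℝ) < π/2 := by linarith
  constructor
  · -- necessity
    intro S
    have hDle : ∀ x ∈ Ioo (0:ℝ) 1,
        b*Real.arccos x/(1+x) + a*Real.arccos x/(1-x) - 1/Real.sqrt (1-x^2) ≤ 0 := by
      intro x hx
      have hp1 : (0:ℝ) < 1 + x := by linarith [hx.1]
      have hp2 : (0:ℝ) < 1 - x := by linarith [hx.2]
      have hP : (0:ℝ) < (1+x)^b * (1-x)^(-a) :=
        mul_pos (Real.rpow_pos_of_pos hp1 b) (Real.rpow_pos_of_pos hp2 (-a))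
      have hd := hdf a b hx
      have hsl := hasDerivAt_iff_tendsto_slope.1 hd
      have hD : (1+x)^b * (1-x)^(-a) *
          (b*Real.arccos x/(1+x) + a*Real.arccos x/(1-x) - 1/Real.sqrt (1-x^2)) ≤ 0 := by
        refine le_of_tendsto hsl ?_
        have hmem : Ioo (0:ℝ) 1 ∈ 𝓝 x := isOpen_Ioo.mem_nhds hx
        have hmem' : Ioo (0:ℝ) 1 ∈ 𝓝[≠] x := nhdsWithin_le_nhds hmem
        filter_upwards [hmem', self_mem_nhdsWithin] with y hyI hy
        have hyne : (y : ℝ) ≠ x := hy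
        rcases lt_or_gt_of_ne hyne with h | h
        · rw [slope_def_field]
          refine div_nonpos_iff.mpr (Or.inl ⟨?_, by linarith⟩)
          have := S hyI hx h
          dsimp only at this
          linarith
        · rw [slope_def_field]
          refine div_nonpos_iff.mpr (Or.inr ⟨?_, by linarith⟩)
          have := S hx hyI h
          dsimp only at this
          linarith
      by_contra hcon
      push_neg at hcon
      exact absurd (mul_pos hP hcon) (by linarith)
    have hI : ∀ θ ∈ Ioo (0:ℝ) (π/2),
        (b*(1-Real.cos θ) + a*(1+Real.cos θ))*θ ≤ Real.sin θ := by
      intro θ hθ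
      have hθπ : θ < π := by linarith [hθ.2]
      have hcpos : 0 < Real.cos θ := Real.cos_pos_of_mem_Ioo ⟨by linarith [hθ.1], hθ.2⟩
      have hclt : Real.cos θ < 1 := by
        have := Real.cos_lt_cos_of_nonneg_of_le_pi (le_refl 0) hθπ.le hθ.1
        simpa using this
      have hsin : 0 < Real.sin θ := Real.sin_pos_of_pos_of_lt_pi hθ.1 hθπ
      have hx : Real.cos θ ∈ Ioo (0:ℝ) 1 := ⟨hcpos, hclt⟩
      have harc : Real.arccos (Real.cos θ) = θ := Real.arccos_cos hθ.1.le hθπ.le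
      have hsq : Real.sqrt (1 - Real.cos θ^2) = Real.sin θ := by
        rw [← Real.sin_arccos, harc]
      have h0 := hDle (Real.cos θ) hx
      rw [harc, hsq] at h0
      set x := Real.cos θ with hxdef
      have hp1 : (0:ℝ) < 1 + x := by linarith [hx.1]
      have hp2 : (0:ℝ) < 1 - x := by linarith [hx.2]
      have h2 : b*θ/(1+x) + a*θ/(1-x) ≤ 1/Real.sin θ := by linarith
      rw [div_add_div _ _ hp1.ne' hp2.ne', div_le_div_iff₀ (mul_pos hp1 hp2) hsin] at h2
      have hpyth := Real.sin_sq_add_cos_sq θ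
      nlinarith [h2, mul_pos hsin hsin, hsin]
    have hab : b + a ≤ 2/π := by
      have hFc : Continuous (fun θ : ℝ =>
          Real.sin θ - (b*(1-Real.cos θ) + a*(1+Real.cos θ))*θ) := by continuity
      have htend := hFc.continuousAt (x := π/2) |>.continuousWithinAt (s := Iio (π/2))
      have hev : ∀ᶠ θ in 𝓝[<] (π/2),
          (0:ℝ) ≤ Real.sin θ - (b*(1-Real.cos θ) + a*(1+Real.cos θ))*θ := by
        filter_upwards [Ioo_mem_nhdsLT_of_mem (⟨hπ2, le_refl _⟩ : π/2 ∈ Ioc (0:ℝ) (π/2))]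
          with θ hθ
        have := hI θ hθ
        linarith
      have h1 : (0:ℝ) ≤ Real.sin (π/2) -
          (b*(1-Real.cos (π/2)) + a*(1+Real.cos (π/2)))*(π/2) := ge_of_tendsto htend hev
      rw [Real.sin_pi_div_two, Real.cos_pi_div_two] at h1
      rw [le_div_iff₀ hπ]
      nlinarith
    refine ⟨by linarith [hab], ?_⟩
    -- limit at 0 : a ≤ 1/2
    have hslope := hasDerivAt_iff_tendsto_slope.1 (Real.hasDerivAt_sin 0)
    rw [Real.cos_zero] at hslope
    have hsl' : Tendsto (fun θ : ℝ => Real.sin θ / θ) (𝓝[≠] (0:ℝ)) (𝓝 1) := by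
      have : slope Real.sin 0 = fun θ : ℝ => Real.sin θ / θ := by
        funext θ
        rw [slope_def_field]
        simp
      rwa [this] at hslope
    have htend2 : Tendsto (fun θ : ℝ => Real.sin θ / θ) (𝓝[>] (0:ℝ)) (𝓝 1) :=
      hsl'.mono_left (nhdsWithin_mono 0 (fun y hy => ne_of_gt hy))
    have hinv : Tendsto (fun θ : ℝ => θ / Real.sin θ) (𝓝[>] (0:ℝ)) (𝓝 1) := by
      have := htend2.inv₀ one_ne_zero
      simpa [inv_div] using this
    have hc : Continuous (fun θ : ℝ => b*(1-Real.cos θ) + a*(1+Real.cos θ)) := by continuity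
    have hcoef : Tendsto (fun θ : ℝ => b*(1-Real.cos θ) + a*(1+Real.cos θ)) (𝓝[>] (0:ℝ))
        (𝓝 (2*a)) := by
      have h := hc.continuousAt (x := (0:ℝ)) |>.continuousWithinAt (s := Ioi (0:ℝ))
      have h' := h.tendsto
      simp only [Real.cos_zero] at h'
      convert h' using 2
      ring
    have hG : Tendsto (fun θ : ℝ => (b*(1-Real.cos θ) + a*(1+Real.cos θ)) * (θ / Real.sin θ))
        (𝓝[>] (0:ℝ)) (𝓝 (2*a*1)) := hcoef.mul hinv
    have hevG : ∀ᶠ θ in 𝓝[>] (0:ℝ),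
        (b*(1-Real.cos θ) + a*(1+Real.cos θ)) * (θ / Real.sin θ) ≤ 1 := by
      filter_upwards [Ioo_mem_nhdsGT_of_mem (⟨le_refl 0, hπ2⟩ : (0:ℝ) ∈ Ico (0:ℝ) (π/2))]
        with θ hθ
      have hsin : 0 < Real.sin θ := Real.sin_pos_of_pos_of_lt_pi hθ.1 (by linarith [hθ.2])
      rw [show (b*(1-Real.cos θ) + a*(1+Real.cos θ)) * (θ / Real.sin θ)
          = ((b*(1-Real.cos θ) + a*(1+Real.cos θ)) * θ) / Real.sin θ from
          (mul_div_assoc _ _ _).symm, div_le_one hsin]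
      exact hI θ hθ
    have := le_of_tendsto hG hevG
    linarith
  · -- sufficiency
    rintro ⟨hb, ha⟩
    have c1 : ContinuousOn (fun x : ℝ => (1 + x) ^ b) (Ioo 0 1) :=
      ContinuousOn.rpow_const ((continuous_const.add continuous_id).continuousOn)
        (fun x hx => Or.inl (by rcases hx with ⟨hx1, hx2⟩; intro h; linarith))
    have c2 : ContinuousOn (fun x : ℝ => (1 - x) ^ (-a)) (Ioo 0 1) :=
      ContinuousOn.rpow_const ((continuous_const.sub continuous_id).continuousOn)
        (fun x hx => Or.inl (by rcases hx with ⟨hx1, hx2⟩; intro h; linarith))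
    have hcont : ContinuousOn (fun x : ℝ => (1 + x) ^ b * (1 - x) ^ (-a) * Real.arccos x)
        (Ioo 0 1) := (c1.mul c2).mul Real.continuous_arccos.continuousOn
    apply strictAntiOn_of_deriv_neg (convex_Ioo 0 1) hcont
    rw [interior_Ioo]
    intro x hx
    rw [(hdf a b hx).deriv]
    have hp1 : (0:ℝ) < 1 + x := by linarith [hx.1]
    have hp2 : (0:ℝ) < 1 - x := by linarith [hx.2]
    have h1x2 : (0:ℝ) < 1 - x^2 := by nlinarith [hx.1, hx.2]
    have hs : (0:ℝ) < Real.sqrt (1-x^2) := Real.sqrt_pos.2 h1x2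
    have hs2 : Real.sqrt (1-x^2)^2 = 1 - x^2 := Real.sq_sqrt h1x2.le
    have hθ0 : 0 < Real.arccos x := Real.arccos_pos.2 hx.2
    have hθπ : Real.arccos x < π/2 := Real.arccos_lt_pi_div_two.2 hx.1
    have hcos : Real.cos (Real.arccos x) = x := Real.cos_arccos (by linarith [hx.1]) hx.2.le
    have hsin : Real.sin (Real.arccos x) = Real.sqrt (1-x^2) := Real.sin_arccos x
    have hkey := key (Real.arccos x) ⟨hθ0, hθπ⟩
    rw [hcos, hsin] at hkey
    set θ := Real.arccos x with hθdef
    set s := Real.sqrt (1-x^2) with hsdef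
    have hL : b*θ*(1-x) + a*θ*(1+x) < s := by
      nlinarith [mul_nonneg (mul_nonneg (sub_nonneg.2 hb) hθ0.le)
          (show (0:ℝ) ≤ 1-x by linarith [hx.2]),
        mul_nonneg (sub_nonneg.2 ha) (mul_pos hθ0 hx.1).le,
        mul_pos hθ0 hx.1]
    have hE : b*θ/(1+x) + a*θ/(1-x) < 1/s := by
      rw [div_add_div _ _ hp1.ne' hp2.ne', div_lt_div_iff₀ (mul_pos hp1 hp2) hs]
      nlinarith [mul_lt_mul_of_pos_right hL hs]
    exact mul_neg_of_pos_of_neg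
      (mul_pos (Real.rpow_pos_of_pos hp1 b) (Real.rpow_pos_of_pos hp2 (-a)))
      (by linarith)
end

section
/- Let a, b be real numbers and define f_{a,b}(x) = (1+x)^b (1-x)^{-a} · arccos(x) for x ∈ (0,1). If (a,b) satisfies at least one of the following three conditions: (i) 2/π − a ≤ b ≤ a − 4/π²; (ii) 1/2 ≤ a ≤ b + 1/3; (iii) 1/3 < a − b < 4/π² and a + b ≥ 2(a−b)^{3/2} / √(4(a−b) − 1); then f_{a,b} is strictly increasing on (0,1). -/
set_option maxHeartbeats 1000000

open Real Set


lemma pos_on_Ioc {c : ℝ} (F F' : ℝ → ℝ) (hd : ∀ x, HasDerivAt F (F' x) x)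
    (h0 : F 0 = 0) (hp : ∀ x ∈ Ioo 0 c, 0 < F' x) :
    ∀ x ∈ Ioc 0 c, 0 < F x := by
  intro x hx
  have hmono : StrictMonoOn F (Icc 0 c) := by
    apply strictMonoOn_of_deriv_pos (convex_Icc 0 c)
    · exact fun y _ => (hd y).continuousAt.continuousWithinAt
    · intro y hy
      rw [interior_Icc] at hy
      rw [(hd y).deriv]
      exact hp y hy
  have h1 := hmono (left_mem_Icc.2 (hx.1.le.trans hx.2)) ⟨hx.1.le, hx.2⟩ hx.1
  rwa [h0] at h1

lemma T1 (x : ℝ) (hx : 0 < x) : 1 - x^2/2 < cos x := by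
  have key := pos_on_Ioc (c := x) (fun y => cos y - 1 + y^2/2) (fun y => y - sin y)
    (fun y => by
      have h := ((Real.hasDerivAt_cos y).sub_const 1).add ((hasDerivAt_pow 2 y).div_const 2)
      exact h.congr_deriv (by push_cast; ring))
    (by norm_num)
    (fun y hy => by simpa using Real.sin_lt hy.1)
    x ⟨hx, le_refl x⟩
  (try dsimp at key); linarith

lemma T2 (x : ℝ) (hx : 0 < x) : x - x^3/6 < sin x := by
  have key := pos_on_Ioc (c := x) (fun y => sin y - y + y^3/6) (fun y => cos y - 1 + y^2/2)
    (fun y => by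
      have h := ((Real.hasDerivAt_sin y).sub (hasDerivAt_id y)).add ((hasDerivAt_pow 3 y).div_const 6)
      exact h.congr_deriv (by push_cast; ring))
    (by norm_num)
    (fun y hy => by have := T1 y hy.1; (try dsimp); linarith)
    x ⟨hx, le_refl x⟩
  (try dsimp at key); linarith

lemma T3 (x : ℝ) (hx : 0 < x) : cos x < 1 - x^2/2 + x^4/24 := by
  have key := pos_on_Ioc (c := x) (fun y => 1 - y^2/2 + y^4/24 - cos y) (fun y => -y + y^3/6 + sin y)
    (fun y => by
      have h := ((((hasDerivAt_pow 2 y).div_const 2).const_sub 1).add ((hasDerivAt_pow 4 y).div_const 24)).sub (Real.hasDerivAt_cos y)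
      exact h.congr_deriv (by push_cast; ring))
    (by norm_num)
    (fun y hy => by have := T2 y hy.1; (try dsimp); linarith)
    x ⟨hx, le_refl x⟩
  (try dsimp at key); linarith

lemma T4 (x : ℝ) (hx : 0 < x) : sin x < x - x^3/6 + x^5/120 := by
  have key := pos_on_Ioc (c := x) (fun y => y - y^3/6 + y^5/120 - sin y) (fun y => 1 - y^2/2 + y^4/24 - cos y)
    (fun y => by
      have h := (((hasDerivAt_id y).sub ((hasDerivAt_pow 3 y).div_const 6)).add ((hasDerivAt_pow 5 y).div_const 120)).sub (Real.hasDerivAt_sin y)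
      exact h.congr_deriv (by push_cast; ring))
    (by norm_num)
    (fun y hy => by have := T3 y hy.1; (try dsimp); linarith)
    x ⟨hx, le_refl x⟩
  (try dsimp at key); linarith

lemma T5 (x : ℝ) (hx : 0 < x) : 1 - x^2/2 + x^4/24 - x^6/720 < cos x := by
  have key := pos_on_Ioc (c := x) (fun y => cos y - (1 - y^2/2 + y^4/24 - y^6/720))
    (fun y => y - y^3/6 + y^5/120 - sin y)
    (fun y => by
      have h := (Real.hasDerivAt_cos y).sub (((((hasDerivAt_pow 2 y).div_const 2).const_sub 1).add ((hasDerivAt_pow 4 y).div_const 24)).sub ((hasDerivAt_pow 6 y).div_const 720))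
      exact h.congr_deriv (by push_cast; ring))
    (by norm_num)
    (fun y hy => by have := T4 y hy.1; (try dsimp); linarith)
    x ⟨hx, le_refl x⟩
  (try dsimp at key); linarith

lemma T6 (x : ℝ) (hx : 0 < x) : x - x^3/6 + x^5/120 - x^7/5040 < sin x := by
  have key := pos_on_Ioc (c := x) (fun y => sin y - (y - y^3/6 + y^5/120 - y^7/5040))
    (fun y => cos y - (1 - y^2/2 + y^4/24 - y^6/720))
    (fun y => by
      have h := (Real.hasDerivAt_sin y).sub ((((hasDerivAt_id y).sub ((hasDerivAt_pow 3 y).div_const 6)).add ((hasDerivAt_pow 5 y).div_const 120)).sub ((hasDerivAt_pow 7 y).div_const 5040))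
      exact h.congr_deriv (by push_cast; ring))
    (by norm_num)
    (fun y hy => by have := T5 y hy.1; (try dsimp); linarith)
    x ⟨hx, le_refl x⟩
  (try dsimp at key); linarith

lemma bigH (θ : ℝ) (h1 : 13/10 ≤ θ) (h2 : θ < π/2) :
    π^2 * sin θ < 2*π*θ + 4*θ*cos θ := by
  have pi1 := Real.pi_gt_d6
  have pi2 := Real.pi_lt_d6
  have hsin13 : (0.96:ℝ) < sin (13/10) := by
    have := T6 (13/10) (by norm_num); nlinarith
  have hcos13 : cos (13/10) < 0.275 := by
    have := T3 (13/10) (by norm_num); nlinarith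
  have hmem : ∀ y : ℝ, 13/10 ≤ y → y ≤ π/2 → (0.96:ℝ) < sin y ∧ cos y ≤ cos (13/10) ∧ 0 ≤ cos y := by
    intro y hy1 hy2
    refine ⟨lt_of_lt_of_le hsin13 ?_, ?_, Real.cos_nonneg_of_mem_Icc ⟨by linarith, hy2⟩⟩
    · rcases eq_or_lt_of_le hy1 with rfl | hlt
      · exact le_refl _
      · exact le_of_lt (Real.strictMonoOn_sin ⟨by linarith, by linarith⟩ ⟨by linarith, by linarith⟩ hlt)
    · rcases eq_or_lt_of_le hy1 with rfl | hlt
      · exact le_refl _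
      · exact le_of_lt (Real.strictAntiOn_cos ⟨by norm_num, by linarith⟩ ⟨by linarith, by linarith⟩ hlt)
  -- H' is strictly monotone on [13/10, π/2]
  have hd' : ∀ y : ℝ, HasDerivAt (fun y => 2*π + (4-π^2)*cos y - 4*(y*sin y))
      ((π^2-8)*sin y - 4*(y*cos y)) y := by
    intro y
    have h := (((Real.hasDerivAt_cos y).const_mul (4-π^2)).const_add (2*π)).sub
      (((hasDerivAt_id y).mul (Real.hasDerivAt_sin y)).const_mul 4)
    exact h.congr_deriv (by simp only [id_eq]; ring)
  have hmono' : StrictMonoOn (fun y => 2*π + (4-π^2)*cos y - 4*(y*sin y)) (Icc (13/10) (π/2)) := by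
    apply strictMonoOn_of_deriv_pos (convex_Icc _ _)
    · exact fun y _ => (hd' y).continuousAt.continuousWithinAt
    · intro y hy
      rw [interior_Icc] at hy
      rw [(hd' y).deriv]
      obtain ⟨hs, hc, hc0⟩ := hmem y hy.1.le hy.2.le
      have hyr := hy.2
      have hyc : y * cos y ≤ (π/2) * cos (13/10) := by
        calc y * cos y ≤ (π/2) * cos y := by nlinarith [mul_nonneg (by linarith : (0:ℝ) ≤ π/2 - y) hc0]
          _ ≤ (π/2) * cos (13/10) := by nlinarith
      have e1 : (π^2-8)*0.96 < (π^2-8)*sin y := by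
        apply mul_lt_mul_of_pos_left hs; nlinarith
      have e2 : y * cos y ≤ (π/2)*0.275 := hyc.trans (by nlinarith)
      nlinarith
  have hH'half : (fun y => 2*π + (4-π^2)*cos y - 4*(y*sin y)) (π/2) = 0 := by
    simp [Real.cos_pi_div_two, Real.sin_pi_div_two]; ring
  have hH'neg : ∀ y : ℝ, 13/10 ≤ y → y < π/2 → 2*π + (4-π^2)*cos y - 4*(y*sin y) < 0 := by
    intro y hy1 hy2
    have := hmono' ⟨hy1, hy2.le⟩ ⟨by linarith, le_refl _⟩ hy2
    rw [hH'half] at this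
    exact this
  -- H is strictly decreasing on [13/10, π/2]
  have hdH : ∀ y : ℝ, HasDerivAt (fun y => 2*π*y + 4*(y*cos y) - π^2*sin y)
      (2*π + (4-π^2)*cos y - 4*(y*sin y)) y := by
    intro y
    have h := (((hasDerivAt_id y).const_mul (2*π)).add
      (((hasDerivAt_id y).mul (Real.hasDerivAt_cos y)).const_mul 4)).sub
      ((Real.hasDerivAt_sin y).const_mul (π^2))
    exact h.congr_deriv (by simp only [id_eq]; ring)
  have hanti : StrictAntiOn (fun y => 2*π*y + 4*(y*cos y) - π^2*sin y) (Icc (13/10) (π/2)) := by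
    apply strictAntiOn_of_deriv_neg (convex_Icc _ _)
    · exact fun y _ => (hdH y).continuousAt.continuousWithinAt
    · intro y hy
      rw [interior_Icc] at hy
      rw [(hdH y).deriv]
      exact hH'neg y hy.1.le hy.2
  have hHhalf : (fun y => 2*π*y + 4*(y*cos y) - π^2*sin y) (π/2) = 0 := by
    simp [Real.cos_pi_div_two, Real.sin_pi_div_two]; ring
  have := hanti ⟨h1, h2.le⟩ ⟨by linarith, le_refl _⟩ h2
  rw [hHhalf] at this
  dsimp at this
  linarith

lemma case2 (s t θ : ℝ) (ht : t ≤ 1/3) (hst : 1 ≤ s + t) (h1 : 0 < θ) (h2 : θ < π/2) :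
    sin θ < (s + t*cos θ)*θ := by
  have hc1 : cos θ ≤ 1 := Real.cos_le_one θ
  have hsl := Real.sin_lt h1
  rcases le_or_gt t 0 with ht0 | ht0
  · nlinarith [mul_nonneg (le_of_lt h1) (sub_nonneg.2 hc1)]
  · -- U : 0 < 2θ + θ cos θ - 3 sin θ
    have hV : ∀ y ∈ Ioc (0:ℝ) (π/2), 0 < sin y - y*cos y := by
      apply pos_on_Ioc _ (fun y => y * sin y)
      · intro y
        have h := (Real.hasDerivAt_sin y).sub ((hasDerivAt_id y).mul (Real.hasDerivAt_cos y))
        exact h.congr_deriv (by simp only [id_eq]; ring)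
      · simp
      · intro y hy
        exact mul_pos hy.1 (Real.sin_pos_of_pos_of_lt_pi hy.1 (by have := hy.2; linarith [Real.pi_gt_three]))
    have hU' : ∀ y ∈ Ioc (0:ℝ) (π/2), 0 < 2 - 2*cos y - y*sin y := by
      apply pos_on_Ioc _ (fun y => sin y - y*cos y)
      · intro y
        have h := (((Real.hasDerivAt_cos y).const_mul 2).const_sub 2).sub
          ((hasDerivAt_id y).mul (Real.hasDerivAt_sin y))
        exact h.congr_deriv (by simp only [id_eq]; ring)
      · simp
      · intro y hy
        exact hV y ⟨hy.1, hy.2.le⟩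
    have hU : ∀ y ∈ Ioc (0:ℝ) (π/2), 0 < 2*y + y*cos y - 3*sin y := by
      apply pos_on_Ioc _ (fun y => 2 - 2*cos y - y*sin y)
      · intro y
        have h := (((hasDerivAt_id y).const_mul 2).add
          ((hasDerivAt_id y).mul (Real.hasDerivAt_cos y))).sub
          ((Real.hasDerivAt_sin y).const_mul 3)
        exact h.congr_deriv (by simp only [id_eq]; ring)
      · simp
      · intro y hy
        exact hU' y ⟨hy.1, hy.2.le⟩
    have h3 := hU θ ⟨h1, h2.le⟩
    have hmul : t*(θ*(1-cos θ)) ≤ (1/3)*(θ*(1-cos θ)) :=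
      mul_le_mul_of_nonneg_right ht (by nlinarith)
    nlinarith

lemma case1 (s t θ : ℝ) (hs : 2/π ≤ s) (ht : 4/π^2 ≤ t) (h1 : 0 < θ) (h2 : θ < π/2) :
    sin θ < (s + t*cos θ)*θ := by
  have pi1 := Real.pi_gt_d6
  have pi2 := Real.pi_lt_d6
  have hπ0 : (0:ℝ) < π := by linarith
  have hcos0 : 0 ≤ cos θ := Real.cos_nonneg_of_mem_Icc ⟨by linarith, h2.le⟩
  have hred : (2/π)*θ + (4/π^2)*(θ*cos θ) ≤ (s + t*cos θ)*θ := by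
    have e1 : (2/π)*θ ≤ s*θ := mul_le_mul_of_nonneg_right hs h1.le
    have e2 : (4/π^2)*(θ*cos θ) ≤ t*(θ*cos θ) :=
      mul_le_mul_of_nonneg_right ht (mul_nonneg h1.le hcos0)
    nlinarith
  rcases le_or_gt θ (13/10) with hcase | hcase
  · -- polynomial regime
    have c4 := T4 θ h1
    have c5 := T5 θ h1
    have hu : θ^2 ≤ 1.69 := by nlinarith
    have core : π^2*(1 - θ^2/6 + (θ^2)^2/120) ≤ 2*π + 4*(1 - θ^2/2 + (θ^2)^2/24 - (θ^2)^3/720) := by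
      have h1' : π^2 < 9.86960864 := by nlinarith
      have h2' : 0 < 1 - θ^2/6 + (θ^2)^2/120 := by nlinarith [sq_nonneg (θ^2)]
      have h3' : (θ^2)^3 ≤ 1.69*(θ^2)^2 := by nlinarith [sq_nonneg (θ^2), sq_nonneg θ]
      nlinarith [mul_nonneg (sub_nonneg.2 hu) (sq_nonneg θ), sq_nonneg (θ^2-169/100),
        mul_nonneg (sub_nonneg.2 hu) (sq_nonneg (θ^2))]
    -- divide core by π^2 and combine
    have hπ2 : (0:ℝ) < π^2 := by positivity
    have core' : 1 - θ^2/6 + (θ^2)^2/120 ≤ 2/π + (4/π^2)*(1 - θ^2/2 + (θ^2)^2/24 - (θ^2)^3/720) := by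
      rw [← sub_nonneg]
      have expand : 2/π + (4/π^2)*(1 - θ^2/2 + (θ^2)^2/24 - (θ^2)^3/720) - (1 - θ^2/6 + (θ^2)^2/120)
          = (2*π + 4*(1 - θ^2/2 + (θ^2)^2/24 - (θ^2)^3/720) - π^2*(1 - θ^2/6 + (θ^2)^2/120))/π^2 := by
        field_simp
      rw [expand]
      apply div_nonneg _ hπ2.le
      linarith [core]
    have hfin : θ*(1 - θ^2/6 + (θ^2)^2/120) ≤ (2/π)*θ + (4/π^2)*(θ*cos θ) := by
      have e1 : θ*(1 - θ^2/6 + (θ^2)^2/120) ≤ θ*(2/π + (4/π^2)*(1 - θ^2/2 + (θ^2)^2/24 - (θ^2)^3/720)) :=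
        mul_le_mul_of_nonneg_left core' h1.le
      have e2 : (4/π^2)*(θ*(1 - θ^2/2 + (θ^2)^2/24 - (θ^2)^3/720)) ≤ (4/π^2)*(θ*cos θ) := by
        apply mul_le_mul_of_nonneg_left _ (by positivity)
        exact mul_le_mul_of_nonneg_left (by nlinarith) h1.le
      nlinarith [e1, e2]
    nlinarith [hred, hfin]
  · -- bigH regime
    have hb := bigH θ hcase.le h2
    have hπ2 : (0:ℝ) < π^2 := by positivity
    have e : (2*π*θ + 4*θ*cos θ)/π^2 = (2/π)*θ + (4/π^2)*(θ*cos θ) := by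
      field_simp
    have : sin θ < (2*π*θ + 4*θ*cos θ)/π^2 := by
      rw [lt_div_iff₀ hπ2]; nlinarith
    rw [e] at this
    linarith

lemma case3 (s t θ : ℝ) (ht1 : 1/3 < t) (ht2 : t < 4/π^2)
    (hs : 2*t^((3:ℝ)/2)/Real.sqrt (4*t-1) ≤ s) (h1 : 0 < θ) (h2 : θ < π/2) :
    sin θ < (s + t*cos θ)*θ := by
  have pi1 := Real.pi_gt_d6
  have pi2 := Real.pi_lt_d6
  have hπ2 : π^2 < 9.8697 := by nlinarith
  have hπ2' : (9.8696:ℝ) < π^2 := by nlinarith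
  have ht0 : 0 < t := by linarith
  have ht406 : t ≤ 0.406 := by
    have h4 : 4/π^2 < 0.406 := by
      rw [div_lt_iff₀ (by positivity)]; nlinarith
    linarith
  have h4t : (0:ℝ) < 4*t-1 := by linarith
  -- gamma
  obtain ⟨γ, hγdef⟩ : ∃ g : ℝ, g = (3671/96000)*t - 1/120 := ⟨_, rfl⟩
  have hγ : 0 < γ := by rw [hγdef]; nlinarith
  obtain ⟨r, hrdef⟩ : ∃ r : ℝ, r = (1-t) + (3*t-1)^2/(144*γ) := ⟨_, rfl⟩
  have hrpos : 0 < r := by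
    have h1' : 0 ≤ (3*t-1)^2/(144*γ) := by positivity
    rw [hrdef]; nlinarith
  -- step: r ≤ psi(t)
  have hψ : r ≤ 2*t^((3:ℝ)/2)/Real.sqrt (4*t-1) := by
    have hsq4 : Real.sqrt (4*t-1) > 0 := Real.sqrt_pos.2 h4t
    rw [le_div_iff₀ hsq4]
    have ht32 : t^((3:ℝ)/2) = t*Real.sqrt t := by
      rw [show (3:ℝ)/2 = 1 + 1/2 by norm_num, Real.rpow_add ht0, Real.rpow_one,
        Real.sqrt_eq_rpow]
    rw [ht32]
    have hQ : 0 < 1/25 - (1013/5000)*t - (5373831/4000000)*t^2 + (2013/250)*t^3 := by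
      nlinarith
    have hN : r*(144*γ) = (1-t)*(144*γ) + (3*t-1)^2 := by
      rw [hrdef]; field_simp
    have hkey : (r*Real.sqrt (4*t-1))^2 ≤ (2*(t*Real.sqrt t))^2 := by
      have e1 : (r*Real.sqrt (4*t-1))^2 = r^2*(4*t-1) := by
        rw [mul_pow, Real.sq_sqrt h4t.le]
      have e2 : (2*(t*Real.sqrt t))^2 = 4*t^3 := by
        rw [mul_pow, mul_pow, Real.sq_sqrt ht0.le]; ring
      rw [e1, e2]
      have hΔ : 4*t^3*(144*γ)^2 - (4*t-1)*((1-t)*(144*γ) + (3*t-1)^2)^2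
          = (3*t-1)^2 * (1/25 - (1013/5000)*t - (5373831/4000000)*t^2 + (2013/250)*t^3) := by
        rw [hγdef]; ring
      have h144 : (0:ℝ) < 144*γ := by linarith
      have : r^2*(4*t-1)*(144*γ)^2 ≤ 4*t^3*(144*γ)^2 := by
        have : r^2*(144*γ)^2 = ((1-t)*(144*γ) + (3*t-1)^2)^2 := by
          rw [← mul_pow, hN]
        rw [mul_right_comm, this]
        linarith [hΔ, mul_nonneg (sq_nonneg (3*t-1)) hQ.le]
      have h2' : (0:ℝ) < (144*γ)^2 := by positivity
      exact le_of_mul_le_mul_right (by linarith) h2'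
    have := Real.sqrt_le_sqrt hkey
    rwa [Real.sqrt_sq (by positivity), Real.sqrt_sq (by positivity)] at this
  have hsr : r ≤ s := le_trans hψ hs
  -- now the theta part
  obtain ⟨u, hudef⟩ : ∃ u : ℝ, u = θ^2 := ⟨_, rfl⟩
  have hu0 : 0 < u := by rw [hudef]; positivity
  have huB : u ≤ 2.46741 := by
    rw [hudef]
    have hθθ : θ*θ ≤ (π/2)*(π/2) := mul_le_mul h2.le h2.le h1.le (by positivity)
    nlinarith [hθθ]
  have c5 := T5 θ h1
  have c4 := T4 θ h1
  have hu3 : t*(u^3/720) ≤ t*((329/96000)*u^2) := by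
    apply mul_le_mul_of_nonneg_left _ ht0.le
    have hh : 0 ≤ (2.4675 - u)*(u^2) := mul_nonneg (by linarith) (sq_nonneg u)
    nlinarith [hh]
  have hquad : ((3*t-1)/6)*u - γ*u^2 ≤ (3*t-1)^2/(144*γ) := by
    rw [le_div_iff₀ (by linarith : (0:ℝ) < 144*γ)]
    nlinarith [sq_nonneg ((3*t-1) - 12*γ*u)]
  have main : 1 - u/6 + u^2/120 ≤ s + t*(1 - u/2 + u^2/24 - u^3/720) := by
    have expand : s + t*(1 - u/2 + u^2/24 - u^3/720) - (1 - u/6 + u^2/120)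
        = s - ((1-t) + ((3*t-1)/6)*u - ((1/24 - 329/96000)*t - 1/120)*u^2
            + (t*(u^3/720) - t*((329/96000)*u^2))) := by ring
    have hgg : ((1/24 - 329/96000)*t - 1/120) = γ := by rw [hγdef]; ring
    rw [← sub_nonneg, expand, hgg]
    have : ((3*t-1)/6)*u - γ*u^2 + (1-t) ≤ r := by
      rw [hrdef]; linarith [hquad]
    linarith [hu3, hsr]
  -- conclude
  have step1 : θ*(1 - u/6 + u^2/120) ≤ θ*(s + t*(1 - u/2 + u^2/24 - u^3/720)) :=
    mul_le_mul_of_nonneg_left main h1.le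
  have step2 : θ*(s + t*(1 - u/2 + u^2/24 - u^3/720)) ≤ θ*(s + t*cos θ) := by
    apply mul_le_mul_of_nonneg_left _ h1.le
    have : t*(1 - u/2 + u^2/24 - u^3/720) ≤ t*cos θ := by
      apply mul_le_mul_of_nonneg_left _ ht0.le
      rw [hudef]; nlinarith [c5]
    linarith
  have : sin θ < θ*(1 - u/6 + u^2/120) := by rw [hudef]; nlinarith [c4]
  nlinarith [step1, step2]

lemma keyineq (a b θ : ℝ)
    (h : (2 / Real.pi - a ≤ b ∧ b ≤ a - 4 / Real.pi ^ 2) ∨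
         (1 / 2 ≤ a ∧ a ≤ b + 1 / 3) ∨
         (1 / 3 < a - b ∧ a - b < 4 / Real.pi ^ 2 ∧
           a + b ≥ 2 * (a - b) ^ ((3 : ℝ) / 2) / Real.sqrt (4 * (a - b) - 1)))
    (h1 : 0 < θ) (h2 : θ < π/2) :
    sin θ < ((a+b) + (a-b)*cos θ)*θ := by
  rcases h with ⟨hA, hB⟩ | ⟨hA, hB⟩ | ⟨hA, hB, hC⟩
  · exact case1 (a+b) (a-b) θ (by linarith) (by linarith) h1 h2
  · exact case2 (a+b) (a-b) θ (by linarith) (by linarith) h1 h2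
  · exact case3 (a+b) (a-b) θ hA hB hC h1 h2

theorem carlson_arccos_strict_mono_sufficient (a b : ℝ)
    (h : (2 / Real.pi - a ≤ b ∧ b ≤ a - 4 / Real.pi ^ 2) ∨
         (1 / 2 ≤ a ∧ a ≤ b + 1 / 3) ∨
         (1 / 3 < a - b ∧ a - b < 4 / Real.pi ^ 2 ∧
           a + b ≥ 2 * (a - b) ^ ((3 : ℝ) / 2) / Real.sqrt (4 * (a - b) - 1))) :
    StrictMonoOn (fun x : ℝ => (1 + x) ^ b * (1 - x) ^ (-a) * Real.arccos x) (Set.Ioo 0 1) := by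
  have hD : ∀ x ∈ Set.Ioo (0:ℝ) 1,
      HasDerivAt (fun x : ℝ => (1 + x) ^ b * (1 - x) ^ (-a) * Real.arccos x)
        ((1*b*(1+x)^(b-1) * (1-x)^(-a) + (1+x)^b * ((-1)*(-a)*(1-x)^(-a-1))) * Real.arccos x
          + (1+x)^b * (1-x)^(-a) * (-(1/Real.sqrt (1-x^2)))) x := by
    intro x hx
    have hx1 : (0:ℝ) < 1 + x := by linarith [hx.1]
    have hx2 : (0:ℝ) < 1 - x := by linarith [hx.2]
    have hd1 : HasDerivAt (fun y : ℝ => (1+y)^b) (1*b*(1+x)^(b-1)) x :=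
      HasDerivAt.rpow_const ((hasDerivAt_id x).const_add 1) (Or.inl (ne_of_gt hx1))
    have hd2 : HasDerivAt (fun y : ℝ => (1-y)^(-a)) ((-1)*(-a)*(1-x)^(-a-1)) x :=
      HasDerivAt.rpow_const ((hasDerivAt_id x).const_sub 1) (Or.inl (ne_of_gt hx2))
    have hd3 : HasDerivAt Real.arccos (-(1/Real.sqrt (1-x^2))) x :=
      Real.hasDerivAt_arccos (by linarith [hx.1] : x ≠ -1) (by linarith [hx.2] : x ≠ 1)
    exact (hd1.mul hd2).mul hd3
  apply strictMonoOn_of_deriv_pos (convex_Ioo 0 1)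
  · exact fun x hx => ((hD x hx).continuousAt).continuousWithinAt
  · intro x hx
    rw [interior_Ioo] at hx
    rw [(hD x hx).deriv]
    have hx1 : (0:ℝ) < 1 + x := by linarith [hx.1]
    have hx2 : (0:ℝ) < 1 - x := by linarith [hx.2]
    have hP : (0:ℝ) < (1+x)^(b-1) := Real.rpow_pos_of_pos hx1 _
    have hQ : (0:ℝ) < (1-x)^(-a-1) := Real.rpow_pos_of_pos hx2 _
    have hs2 : (0:ℝ) < 1 - x^2 := by nlinarith [hx.1, hx.2]
    have hσ : (0:ℝ) < Real.sqrt (1-x^2) := Real.sqrt_pos.2 hs2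
    have hσ2 : Real.sqrt (1-x^2) * Real.sqrt (1-x^2) = 1-x^2 := Real.mul_self_sqrt hs2.le
    have hA : (1+x)^(b-1)*(1+x) = (1+x)^b := by
      rw [← Real.rpow_add_one (ne_of_gt hx1) (b-1)]; norm_num
    have hB : (1-x)^(-a-1)*(1-x) = (1-x)^(-a) := by
      rw [← Real.rpow_add_one (ne_of_gt hx2) (-a-1)]; norm_num
    -- the key inequality
    have hθ1 : 0 < Real.arccos x := Real.arccos_pos.2 hx.2
    have hθ2 : Real.arccos x < π/2 := Real.arccos_lt_pi_div_two.2 hx.1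
    have hkey := keyineq a b (Real.arccos x) h hθ1 hθ2
    rw [Real.cos_arccos (by linarith [hx.1]) (by linarith [hx.2]), Real.sin_arccos] at hkey
    have hG : 0 < ((a+b) + (a-b)*x)*Real.arccos x - Real.sqrt (1-x^2) := by linarith
    have hfact : (1*b*(1+x)^(b-1) * (1-x)^(-a) + (1+x)^b * ((-1)*(-a)*(1-x)^(-a-1))) * Real.arccos x
          + (1+x)^b * (1-x)^(-a) * (-(1/Real.sqrt (1-x^2)))
        = ((1+x)^(b-1) * (1-x)^(-a-1)) * (((a+b) + (a-b)*x)*Real.arccos x - Real.sqrt (1-x^2)) := by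
      rw [← hA, ← hB]
      have hσ2' : Real.sqrt (1-x^2)^2 = 1-x^2 := by rw [sq]; exact hσ2
      field_simp
      linear_combination hσ2'
    rw [hfact]
    exact mul_pos (mul_pos hP hQ) hG
end

section
/- Let a, b be real numbers with 1/3 < a − b < 4/π² and 2/π − b < a ≤ 1/2, and define f_{a,b}(x) = (1+x)^b (1-x)^{-a} · arccos(x) for x ∈ (0,1). Then f_{a,b} has a unique maximum on (0,1); more precisely, there exists a unique point x₀ ∈ (0,1) such that f_{a,b} is strictly increasing on (0, x₀] and strictly decreasing on [x₀, 1). -/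
open Real Set

-- t * cot t is strictly decreasing on (0, π/2]
private lemma tcot_anti : StrictAntiOn (fun t : ℝ => t * Real.cos t / Real.sin t) (Ioc 0 (π/2)) := by
  have hconv : Convex ℝ (Ioc (0:ℝ) (π/2)) := convex_Ioc _ _
  have hsin : ∀ t ∈ Ioc (0:ℝ) (π/2), Real.sin t ≠ 0 := by
    intro t ht
    exact ne_of_gt (Real.sin_pos_of_pos_of_lt_pi ht.1 (lt_of_le_of_lt ht.2 (by linarith [Real.pi_pos])))
  apply strictAntiOn_of_deriv_neg hconv
  · exact ((continuous_id.mul Real.continuous_cos).continuousOn).div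
      Real.continuous_sin.continuousOn hsin
  · intro t ht
    rw [interior_Ioc] at ht
    have hs : Real.sin t ≠ 0 := hsin t ⟨ht.1, le_of_lt ht.2⟩
    have hder : HasDerivAt (fun t : ℝ => t * Real.cos t / Real.sin t)
        (((1 * Real.cos t + t * (-Real.sin t)) * Real.sin t - t * Real.cos t * Real.cos t)
          / Real.sin t ^ 2) t := by
      exact ((hasDerivAt_id t).mul (Real.hasDerivAt_cos t)).div (Real.hasDerivAt_sin t) hs
    rw [hder.deriv]
    apply div_neg_of_neg_of_pos
    · have h1 : Real.sin t * Real.cos t < t := by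
        have := Real.sin_lt ht.1
        nlinarith [Real.cos_le_one t, Real.sin_pos_of_pos_of_lt_pi ht.1
          (lt_of_lt_of_le ht.2 (by linarith [Real.pi_pos])), Real.neg_one_le_cos t]
      have heq : (1 * Real.cos t + t * (-Real.sin t)) * Real.sin t - t * Real.cos t * Real.cos t
          = Real.sin t * Real.cos t - t := by
        linear_combination (-t) * Real.sin_sq_add_cos_sq t
      rw [heq]; linarith
    · positivity

private lemma f_hasDeriv (a b x : ℝ) (hx : x ∈ Ioo (0:ℝ) 1) :
    HasDerivAt (fun x : ℝ => (1 + x) ^ b * (1 - x) ^ (-a) * Real.arccos x)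
      ((1 + x) ^ (b - 1) * (1 - x) ^ (-a - 1) *
        (Real.arccos x * ((a + b) + (a - b) * Real.cos (Real.arccos x))
          - Real.sin (Real.arccos x))) x := by
  obtain ⟨hx0, hx1⟩ := hx
  have hp : (0:ℝ) < 1 + x := by linarith
  have hm : (0:ℝ) < 1 - x := by linarith
  have hsq : (0:ℝ) < 1 - x ^ 2 := by nlinarith
  have hsqrt : (0:ℝ) < Real.sqrt (1 - x ^ 2) := Real.sqrt_pos.2 hsq
  have hA : HasDerivAt (fun y : ℝ => (1 + y) ^ b) (1 * b * (1 + x) ^ (b - 1)) x := by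
    have h1 : HasDerivAt (fun y : ℝ => 1 + y) 1 x := by
      simpa using (hasDerivAt_id x).const_add (1:ℝ)
    exact h1.rpow_const (Or.inl (ne_of_gt hp))
  have hB : HasDerivAt (fun y : ℝ => (1 - y) ^ (-a)) ((-1) * (-a) * (1 - x) ^ (-a - 1)) x := by
    have h1 : HasDerivAt (fun y : ℝ => 1 - y) (-1) x := by
      simpa using (hasDerivAt_id x).const_sub (1:ℝ)
    exact h1.rpow_const (Or.inl (ne_of_gt hm))
  have hC : HasDerivAt Real.arccos (-(1 / Real.sqrt (1 - x ^ 2))) x :=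
    Real.hasDerivAt_arccos (by linarith) (by linarith)
  have hD := (hA.mul hB).mul hC
  refine hD.congr_deriv ?_
  symm
  simp only [Pi.mul_apply]
  rw [Real.cos_arccos (by linarith) (by linarith), Real.sin_arccos]
  have e1 : (1 + x) ^ b = (1 + x) ^ (b - 1) * (1 + x) := by
    rw [← Real.rpow_add_one (ne_of_gt hp)]; ring_nf
  have e2 : (1 - x) ^ (-a) = (1 - x) ^ (-a - 1) * (1 - x) := by
    rw [← Real.rpow_add_one (ne_of_gt hm)]; ring_nf
  rw [e1, e2]
  have e3 : Real.sqrt (1 - x ^ 2) * Real.sqrt (1 - x ^ 2) = 1 - x ^ 2 :=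
    Real.mul_self_sqrt (le_of_lt hsq)
  field_simp
  ring_nf
  rw [Real.sq_sqrt (le_of_lt hsq)]
  ring

private noncomputable def Vf (S D t : ℝ) : ℝ := t * (S + D * Real.cos t) - Real.sin t
private noncomputable def V1f (S D t : ℝ) : ℝ :=
  S + D * Real.cos t - D * (t * Real.sin t) - Real.cos t
private noncomputable def V2f (D t : ℝ) : ℝ :=
  (1 - 2 * D) * Real.sin t - D * (t * Real.cos t)

private lemma Vf_hasDeriv (S D t : ℝ) : HasDerivAt (Vf S D) (V1f S D t) t := by
  have h1 : HasDerivAt (fun t : ℝ => S + D * Real.cos t) (D * (-Real.sin t)) t :=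
    ((Real.hasDerivAt_cos t).const_mul D).const_add S
  have h2 := ((hasDerivAt_id t).mul h1).sub (Real.hasDerivAt_sin t)
  refine h2.congr_deriv ?_
  simp only [V1f, id_eq]; ring

private lemma V1f_hasDeriv (S D t : ℝ) : HasDerivAt (V1f S D) (V2f D t) t := by
  have h1 : HasDerivAt (fun t : ℝ => S + D * Real.cos t) (D * (-Real.sin t)) t :=
    ((Real.hasDerivAt_cos t).const_mul D).const_add S
  have h2 : HasDerivAt (fun t : ℝ => D * (t * Real.sin t))
      (D * (1 * Real.sin t + t * Real.cos t)) t :=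
    ((hasDerivAt_id t).mul (Real.hasDerivAt_sin t)).const_mul D
  have h3 := (h1.sub h2).sub (Real.hasDerivAt_cos t)
  refine h3.congr_deriv ?_
  simp only [V2f, id_eq]; ring

private lemma Vf_cont (S D : ℝ) : Continuous (Vf S D) := by unfold Vf; fun_prop
private lemma V1f_cont (S D : ℝ) : Continuous (V1f S D) := by unfold V1f; fun_prop

private lemma V_sign (S D : ℝ) (hD1 : 1/3 < D) (hD2 : D * π ^ 2 < 4) (hS : 2 < S * π)
    (hSD : S + D ≤ 1) :
    ∃ t₀ ∈ Ioo (0:ℝ) (π/2), (∀ t ∈ Ioo (0:ℝ) t₀, Vf S D t < 0) ∧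
      (∀ t ∈ Ioo t₀ (π/2), 0 < Vf S D t) := by
  have hπ : (0:ℝ) < π := Real.pi_pos
  have hπ3 : (3:ℝ) < π := Real.pi_gt_three
  have hD0 : (0:ℝ) < D := by linarith
  have hDhalf : D < 1/2 := by nlinarith
  -- φ : the rescaled V''
  set φ : ℝ → ℝ := fun t => (1 - 2 * D) - D * (t * Real.cos t / Real.sin t) with hφ
  have hsin : ∀ t ∈ Ioc (0:ℝ) (π/2), (0:ℝ) < Real.sin t := by
    intro t ht
    exact Real.sin_pos_of_pos_of_lt_pi ht.1 (lt_of_le_of_lt ht.2 (by linarith))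
  have hφmono : StrictMonoOn φ (Ioc 0 (π/2)) := by
    intro x hx y hy hxy
    have := tcot_anti hx hy hxy
    simp only [hφ]
    nlinarith
  have hφcont : ContinuousOn φ (Ioc 0 (π/2)) := by
    apply continuousOn_const.sub
    apply continuousOn_const.mul
    exact ((continuous_id.mul Real.continuous_cos).continuousOn).div
      Real.continuous_sin.continuousOn (fun t ht => ne_of_gt (hsin t ht))
  have hV2eq : ∀ t ∈ Ioc (0:ℝ) (π/2), V2f D t = Real.sin t * φ t := by
    intro t ht
    have h := ne_of_gt (hsin t ht)
    simp only [hφ, V2f]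
    field_simp
  -- the point tₐ where φ < 0
  set c : ℝ := (1 + (1/D - 2))/2 with hc
  have hc0 : 0 < c := by
    have : (2:ℝ) < 1/D := by rw [lt_div_iff₀ hD0]; linarith
    rw [hc]; linarith
  have hc1 : c < 1 := by
    have : 1/D < 3 := by rw [div_lt_iff₀ hD0]; linarith
    rw [hc]; linarith
  set ta : ℝ := Real.arccos c with hta
  have hta0 : 0 < ta := Real.arccos_pos.2 hc1
  have hta2 : ta < π/2 := Real.arccos_lt_pi_div_two.2 hc0
  have htacos : Real.cos ta = c := Real.cos_arccos (by linarith) (le_of_lt hc1)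
  have hφta : φ ta < 0 := by
    have hsinta : 0 < Real.sin ta := hsin ta ⟨hta0, le_of_lt hta2⟩
    have hsinlt : Real.sin ta < ta := Real.sin_lt hta0
    have hψ : c ≤ ta * Real.cos ta / Real.sin ta := by
      rw [htacos, le_div_iff₀ hsinta]
      nlinarith
    have hdc : D * c = (1 - D)/2 := by
      rw [hc]; field_simp; ring
    have : D * (ta * Real.cos ta / Real.sin ta) ≥ D * c :=
      mul_le_mul_of_nonneg_left hψ (le_of_lt hD0)
    simp only [hφ]
    nlinarith
  have hφpi2 : 0 < φ (π/2) := by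
    simp only [hφ, Real.cos_pi_div_two, Real.sin_pi_div_two]
    norm_num
    nlinarith
  -- t₂ : zero of φ
  obtain ⟨t₂, ht₂mem, ht₂⟩ : ∃ t₂ ∈ Ioo ta (π/2), φ t₂ = 0 := by
    have hsub : Icc ta (π/2) ⊆ Ioc 0 (π/2) := fun x hx => ⟨lt_of_lt_of_le hta0 hx.1, hx.2⟩
    have := intermediate_value_Ioo (le_of_lt hta2) (hφcont.mono hsub)
    have h0 : (0:ℝ) ∈ Ioo (φ ta) (φ (π/2)) := ⟨hφta, hφpi2⟩
    obtain ⟨t₂, ht₂mem, ht₂⟩ := this h0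
    exact ⟨t₂, ht₂mem, ht₂⟩
  have ht₂0 : 0 < t₂ := lt_trans hta0 ht₂mem.1
  have ht₂2 : t₂ < π/2 := ht₂mem.2
  have hV2neg : ∀ t ∈ Ioo (0:ℝ) t₂, V2f D t < 0 := by
    intro t ht
    have htm : t ∈ Ioc (0:ℝ) (π/2) := ⟨ht.1, le_of_lt (lt_trans ht.2 ht₂2)⟩
    rw [hV2eq t htm]
    have : φ t < φ t₂ := hφmono htm ⟨ht₂0, le_of_lt ht₂2⟩ ht.2
    exact mul_neg_of_pos_of_neg (hsin t htm) (by linarith [ht₂])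
  have hV2pos : ∀ t ∈ Ioo t₂ (π/2), 0 < V2f D t := by
    intro t ht
    have htm : t ∈ Ioc (0:ℝ) (π/2) := ⟨lt_trans ht₂0 ht.1, le_of_lt ht.2⟩
    rw [hV2eq t htm]
    have : φ t₂ < φ t := hφmono ⟨ht₂0, le_of_lt ht₂2⟩ htm ht.1
    exact mul_pos (hsin t htm) (by linarith [ht₂])
  -- V1 analysis
  have hV1anti : StrictAntiOn (V1f S D) (Icc 0 t₂) := by
    apply strictAntiOn_of_deriv_neg (convex_Icc _ _) (V1f_cont S D).continuousOn
    intro t ht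
    rw [interior_Icc] at ht
    rw [(V1f_hasDeriv S D t).deriv]
    exact hV2neg t ht
  have hV1mono : StrictMonoOn (V1f S D) (Icc t₂ (π/2)) := by
    apply strictMonoOn_of_deriv_pos (convex_Icc _ _) (V1f_cont S D).continuousOn
    intro t ht
    rw [interior_Icc] at ht
    rw [(V1f_hasDeriv S D t).deriv]
    exact hV2pos t ht
  have hV10 : V1f S D 0 ≤ 0 := by
    simp only [V1f, Real.cos_zero, Real.sin_zero]
    linarith
  have hV1t₂ : V1f S D t₂ < 0 := by
    have := hV1anti (left_mem_Icc.2 (le_of_lt ht₂0)) ⟨le_of_lt ht₂0, le_refl _⟩ ht₂0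
    linarith
  have hV1pi2 : 0 < V1f S D (π/2) := by
    simp only [V1f, Real.cos_pi_div_two, Real.sin_pi_div_two]
    nlinarith
  obtain ⟨t₁, ht₁mem, ht₁⟩ : ∃ t₁ ∈ Ioo t₂ (π/2), V1f S D t₁ = 0 := by
    have := intermediate_value_Ioo (le_of_lt ht₂2) (V1f_cont S D).continuousOn
    exact this ⟨hV1t₂, hV1pi2⟩ |>.imp (fun t ⟨h1, h2⟩ => ⟨h1, h2⟩)
  have ht₁0 : 0 < t₁ := lt_trans ht₂0 ht₁mem.1
  have ht₁2 : t₁ < π/2 := ht₁mem.2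
  have hV1neg : ∀ t ∈ Ioo (0:ℝ) t₁, V1f S D t < 0 := by
    intro t ht
    rcases le_or_gt t t₂ with h | h
    · have := hV1anti (left_mem_Icc.2 (le_of_lt ht₂0)) ⟨le_of_lt ht.1, h⟩ ht.1
      linarith
    · have := hV1mono ⟨le_of_lt h, le_of_lt (lt_trans ht.2 ht₁2)⟩
        ⟨le_of_lt ht₁mem.1, le_of_lt ht₁2⟩ ht.2
      linarith
  have hV1pos : ∀ t ∈ Ioo t₁ (π/2), 0 < V1f S D t := by
    intro t ht
    have := hV1mono ⟨le_of_lt ht₁mem.1, le_of_lt ht₁2⟩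
      ⟨le_of_lt (lt_trans ht₁mem.1 ht.1), le_of_lt ht.2⟩ ht.1
    linarith
  -- V analysis
  have hVanti : StrictAntiOn (Vf S D) (Icc 0 t₁) := by
    apply strictAntiOn_of_deriv_neg (convex_Icc _ _) (Vf_cont S D).continuousOn
    intro t ht
    rw [interior_Icc] at ht
    rw [(Vf_hasDeriv S D t).deriv]
    exact hV1neg t ht
  have hVmono : StrictMonoOn (Vf S D) (Icc t₁ (π/2)) := by
    apply strictMonoOn_of_deriv_pos (convex_Icc _ _) (Vf_cont S D).continuousOn
    intro t ht
    rw [interior_Icc] at ht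
    rw [(Vf_hasDeriv S D t).deriv]
    exact hV1pos t ht
  have hV0 : Vf S D 0 = 0 := by simp [Vf]
  have hVt₁ : Vf S D t₁ < 0 := by
    have := hVanti (left_mem_Icc.2 (le_of_lt ht₁0)) ⟨le_of_lt ht₁0, le_refl _⟩ ht₁0
    linarith
  have hVpi2 : 0 < Vf S D (π/2) := by
    simp only [Vf, Real.cos_pi_div_two, Real.sin_pi_div_two]
    nlinarith
  obtain ⟨t₀, ht₀mem, ht₀⟩ : ∃ t₀ ∈ Ioo t₁ (π/2), Vf S D t₀ = 0 := by
    have := intermediate_value_Ioo (le_of_lt ht₁2) (Vf_cont S D).continuousOn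
    exact this ⟨hVt₁, hVpi2⟩ |>.imp (fun t ⟨h1, h2⟩ => ⟨h1, h2⟩)
  refine ⟨t₀, ⟨lt_trans ht₁0 ht₀mem.1, ht₀mem.2⟩, ?_, ?_⟩
  · intro t ht
    rcases le_or_gt t t₁ with h | h
    · have := hVanti (left_mem_Icc.2 (le_of_lt ht₁0)) ⟨le_of_lt ht.1, h⟩ ht.1
      linarith
    · have := hVmono ⟨le_of_lt h, le_of_lt (lt_trans ht.2 ht₀mem.2)⟩
        ⟨le_of_lt ht₀mem.1, le_of_lt ht₀mem.2⟩ ht.2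
      linarith
  · intro t ht
    have := hVmono ⟨le_of_lt ht₀mem.1, le_of_lt ht₀mem.2⟩
      ⟨le_of_lt (lt_trans ht₀mem.1 ht.1), le_of_lt ht.2⟩ ht.1
    linarith

theorem carlson_arccos_unique_maximum (a b : ℝ)
    (h1 : 1 / 3 < a - b) (h2 : a - b < 4 / Real.pi ^ 2)
    (h3 : 2 / Real.pi - b < a) (h4 : a ≤ 1 / 2) :
    ∃! x₀ : ℝ, x₀ ∈ Set.Ioo (0 : ℝ) 1 ∧
      StrictMonoOn (fun x : ℝ => (1 + x) ^ b * (1 - x) ^ (-a) * Real.arccos x)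
        (Set.Ioc 0 x₀) ∧
      StrictAntiOn (fun x : ℝ => (1 + x) ^ b * (1 - x) ^ (-a) * Real.arccos x)
        (Set.Ico x₀ 1) := by
  have hπ : (0:ℝ) < π := Real.pi_pos
  have hπsq : (0:ℝ) < π ^ 2 := by positivity
  set S := a + b with hS
  set D := a - b with hD
  have hD2 : D * π ^ 2 < 4 := by
    have := (lt_div_iff₀ hπsq).1 h2
    linarith
  have hSpi : 2 < S * π := by
    have h3' : 2/π < S := by rw [hS]; linarith
    have := (div_lt_iff₀ hπ).1 h3'
    linarith
  obtain ⟨t₀, ht₀mem, hVneg, hVpos⟩ := V_sign S D h1 hD2 hSpi (by rw [hS, hD]; linarith)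
  set x₀ : ℝ := Real.cos t₀ with hx₀def
  have ht₀0 : 0 < t₀ := ht₀mem.1
  have ht₀2 : t₀ < π/2 := ht₀mem.2
  have hx₀pos : 0 < x₀ := Real.cos_pos_of_mem_Ioo ⟨by linarith, ht₀2⟩
  have hx₀lt1 : x₀ < 1 := by
    have := Real.strictAntiOn_cos (left_mem_Icc.2 (le_of_lt hπ)) ⟨le_of_lt ht₀0, by linarith⟩ ht₀0
    simpa using this
  have harc : Real.arccos x₀ = t₀ := Real.arccos_cos (le_of_lt ht₀0) (by linarith)
  -- derivative sign on each side
  have hderiv_pos : ∀ x ∈ Ioo (0:ℝ) x₀,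
      0 < (1 + x) ^ (b - 1) * (1 - x) ^ (-a - 1) *
        (Real.arccos x * ((a + b) + (a - b) * Real.cos (Real.arccos x))
          - Real.sin (Real.arccos x)) := by
    intro x hx
    have hx1 : x < 1 := lt_trans hx.2 hx₀lt1
    have hxm : x ∈ Icc (-1:ℝ) 1 := ⟨by linarith [hx.1], le_of_lt hx1⟩
    have ht : Real.arccos x ∈ Ioo t₀ (π/2) := by
      constructor
      · rw [← harc]
        exact Real.strictAntiOn_arccos hxm ⟨by linarith, le_of_lt hx₀lt1⟩ hx.2
      · exact Real.arccos_lt_pi_div_two.2 hx.1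
    have hV := hVpos _ ht
    have hpos1 : (0:ℝ) < (1 + x) ^ (b - 1) := Real.rpow_pos_of_pos (by linarith [hx.1]) _
    have hpos2 : (0:ℝ) < (1 - x) ^ (-a - 1) := Real.rpow_pos_of_pos (by linarith) _
    have : Vf S D (Real.arccos x) = Real.arccos x * ((a + b) + (a - b) *
        Real.cos (Real.arccos x)) - Real.sin (Real.arccos x) := by
      simp [Vf, hS, hD]
    rw [this] at hV
    positivity
  have hderiv_neg : ∀ x ∈ Ioo x₀ (1:ℝ),
      (1 + x) ^ (b - 1) * (1 - x) ^ (-a - 1) *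
        (Real.arccos x * ((a + b) + (a - b) * Real.cos (Real.arccos x))
          - Real.sin (Real.arccos x)) < 0 := by
    intro x hx
    have hx0 : 0 < x := lt_trans hx₀pos hx.1
    have hxm : x ∈ Icc (-1:ℝ) 1 := ⟨by linarith, le_of_lt hx.2⟩
    have ht : Real.arccos x ∈ Ioo (0:ℝ) t₀ := by
      constructor
      · exact Real.arccos_pos.2 hx.2
      · rw [← harc]
        exact Real.strictAntiOn_arccos ⟨by linarith, le_of_lt hx₀lt1⟩ hxm hx.1
    have hV := hVneg _ ht
    have hpos1 : (0:ℝ) < (1 + x) ^ (b - 1) := Real.rpow_pos_of_pos (by linarith) _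
    have hpos2 : (0:ℝ) < (1 - x) ^ (-a - 1) := Real.rpow_pos_of_pos (by linarith [hx.2]) _
    have hVeq : Vf S D (Real.arccos x) = Real.arccos x * ((a + b) + (a - b) *
        Real.cos (Real.arccos x)) - Real.sin (Real.arccos x) := by
      simp [Vf, hS, hD]
    rw [hVeq] at hV
    exact mul_neg_of_pos_of_neg (mul_pos hpos1 hpos2) hV
  have hmono : StrictMonoOn (fun x : ℝ => (1 + x) ^ b * (1 - x) ^ (-a) * Real.arccos x)
      (Set.Ioc 0 x₀) := by
    apply strictMonoOn_of_deriv_pos (convex_Ioc _ _)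
    · intro x hx
      have hx' : x ∈ Ioo (0:ℝ) 1 := ⟨hx.1, lt_of_le_of_lt hx.2 hx₀lt1⟩
      exact (f_hasDeriv a b x hx').differentiableAt.continuousAt.continuousWithinAt
    · intro x hx
      rw [interior_Ioc] at hx
      have hx' : x ∈ Ioo (0:ℝ) 1 := ⟨hx.1, lt_trans hx.2 hx₀lt1⟩
      rw [(f_hasDeriv a b x hx').deriv]
      exact hderiv_pos x hx
  have hanti : StrictAntiOn (fun x : ℝ => (1 + x) ^ b * (1 - x) ^ (-a) * Real.arccos x)
      (Set.Ico x₀ 1) := by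
    apply strictAntiOn_of_deriv_neg (convex_Ico _ _)
    · intro x hx
      have hx' : x ∈ Ioo (0:ℝ) 1 := ⟨lt_of_lt_of_le hx₀pos hx.1, hx.2⟩
      exact (f_hasDeriv a b x hx').differentiableAt.continuousAt.continuousWithinAt
    · intro x hx
      rw [interior_Ico] at hx
      have hx' : x ∈ Ioo (0:ℝ) 1 := ⟨lt_trans hx₀pos hx.1, hx.2⟩
      rw [(f_hasDeriv a b x hx').deriv]
      exact hderiv_neg x hx
  refine ⟨x₀, ⟨⟨hx₀pos, hx₀lt1⟩, hmono, hanti⟩, ?_⟩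
  rintro y ⟨⟨hy0, hy1⟩, hymono, hyanti⟩
  by_contra hne
  rcases lt_or_gt_of_ne hne with hlt | hlt
  · -- y < x₀
    have hA := hmono ⟨hy0, le_of_lt hlt⟩ ⟨hx₀pos, le_refl x₀⟩ hlt
    have hB := hyanti ⟨le_refl y, hy1⟩ ⟨le_of_lt hlt, hx₀lt1⟩ hlt
    linarith
  · have hA := hymono ⟨hx₀pos, le_of_lt hlt⟩ ⟨hy0, le_refl y⟩ hlt
    have hB := hanti ⟨le_refl x₀, hx₀lt1⟩ ⟨le_of_lt hlt, hy1⟩ hlt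
    linarith
end

section
/- Let a, b be real numbers with 1/3 < a − b < 4/π² and 1/2 < a ≤ 2/π − b, and define f_{a,b}(x) = (1+x)^b (1-x)^{-a} · arccos(x) for x ∈ (0,1). Then f_{a,b} has a unique minimum on (0,1); more precisely, there exists a unique point x₀ ∈ (0,1) such that f_{a,b} is strictly decreasing on (0, x₀] and strictly increasing on [x₀, 1). -/
open Real Set

noncomputable def carl_g (a b x : ℝ) : ℝ :=
  (a * (1 + x) + b * (1 - x)) * Real.arccos x - Real.sqrt (1 - x ^ 2)

noncomputable def carl_h (a b x : ℝ) : ℝ :=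
  (a - b) * (Real.sqrt (1 - x ^ 2) * Real.arccos x) + (1 - (a - b)) * x - (a + b)

noncomputable def carl_psi (x : ℝ) : ℝ := x * Real.arccos x / Real.sqrt (1 - x ^ 2)

lemma carl_sq_pos {x : ℝ} (h0 : -1 < x) (h1 : x < 1) : 0 < 1 - x ^ 2 := by nlinarith

lemma carl_sqrt_pos {x : ℝ} (h0 : -1 < x) (h1 : x < 1) : 0 < Real.sqrt (1 - x ^ 2) :=
  Real.sqrt_pos.2 (carl_sq_pos h0 h1)

lemma carl_key {x : ℝ} (h0 : 0 < x) (h1 : x < 1) :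
    x * Real.sqrt (1 - x ^ 2) < Real.arccos x := by
  have hθ : 0 < Real.arccos x := Real.arccos_pos.2 h1
  have h2 : Real.sin (2 * Real.arccos x) < 2 * Real.arccos x := Real.sin_lt (by linarith)
  rw [Real.sin_two_mul, Real.sin_arccos, Real.cos_arccos (by linarith) h1.le] at h2
  linarith

lemma carl_sqrt_le_arccos {x : ℝ} (h0 : 0 ≤ x) (h1 : x ≤ 1) :
    Real.sqrt (1 - x ^ 2) ≤ Real.arccos x := by
  have := Real.sin_le (Real.arccos_nonneg x)
  rwa [Real.sin_arccos] at this

lemma carl_hasDerivAt_sqrt {x : ℝ} (h0 : -1 < x) (h1 : x < 1) :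
    HasDerivAt (fun y : ℝ => Real.sqrt (1 - y ^ 2)) (-x / Real.sqrt (1 - x ^ 2)) x := by
  have hinner : HasDerivAt (fun y : ℝ => 1 - y ^ 2) (-(2 * x)) x := by
    simpa using ((hasDerivAt_pow 2 x).const_sub 1)
  have := (Real.hasDerivAt_sqrt (carl_sq_pos h0 h1).ne').comp x hinner
  refine this.congr_deriv (Eq.symm ?_)
  have hs := carl_sqrt_pos h0 h1
  field_simp

lemma carl_psi_deriv {x : ℝ} (h0 : -1 < x) (h1 : x < 1) :
    HasDerivAt carl_psi
      ((Real.arccos x - x * Real.sqrt (1 - x ^ 2)) / (Real.sqrt (1 - x ^ 2) * (1 - x ^ 2))) x := by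
  have hs := carl_sqrt_pos h0 h1
  have hsq := carl_sq_pos h0 h1
  have hu : HasDerivAt (fun y : ℝ => y * Real.arccos y)
      (1 * Real.arccos x + x * -(1 / Real.sqrt (1 - x ^ 2))) x :=
    (hasDerivAt_id x).mul (Real.hasDerivAt_arccos (by linarith) h1.ne)
  have := hu.div (carl_hasDerivAt_sqrt h0 h1) hs.ne'
  refine this.congr_deriv (Eq.symm ?_)
  rw [Real.sq_sqrt hsq.le]
  have h2 : Real.sqrt (1 - x ^ 2) * Real.sqrt (1 - x ^ 2) = 1 - x ^ 2 :=
    Real.mul_self_sqrt hsq.le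
  field_simp
  ring_nf
  nlinarith [h2, Real.arccos_nonneg x, hs]

lemma carl_psi_mono : StrictMonoOn carl_psi (Ioo (0:ℝ) 1) := by
  have hD : Convex ℝ (Ioo (0:ℝ) 1) := convex_Ioo 0 1
  refine strictMonoOn_of_deriv_pos hD (fun x hx => ?_) (fun x hx => ?_)
  · exact (carl_psi_deriv (by linarith [hx.1]) hx.2).continuousAt.continuousWithinAt
  · rw [interior_Ioo] at hx
    obtain ⟨hx0, hx1⟩ := hx
    rw [(carl_psi_deriv (by linarith) hx1).deriv]
    have h1 := carl_key hx0 hx1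
    have h2 := carl_sqrt_pos (by linarith) hx1
    have h3 := carl_sq_pos (by linarith) hx1
    exact div_pos (by linarith) (by positivity)

lemma carl_h_deriv (a b : ℝ) {x : ℝ} (h0 : -1 < x) (h1 : x < 1) :
    HasDerivAt (carl_h a b) ((1 - 2 * (a - b)) - (a - b) * carl_psi x) x := by
  have hs := carl_sqrt_pos h0 h1
  have hw : HasDerivAt (fun y : ℝ => Real.sqrt (1 - y ^ 2) * Real.arccos y)
      (-x / Real.sqrt (1 - x ^ 2) * Real.arccos x +
        Real.sqrt (1 - x ^ 2) * -(1 / Real.sqrt (1 - x ^ 2))) x :=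
    (carl_hasDerivAt_sqrt h0 h1).mul (Real.hasDerivAt_arccos (by linarith) h1.ne)
  have hlin : HasDerivAt (fun y : ℝ => (1 - (a - b)) * y - (a + b)) (1 - (a - b)) x := by
    simpa using ((hasDerivAt_id x).const_mul (1 - (a - b))).sub_const (a + b)
  have := (hw.const_mul (a - b)).add hlin
  have heq : (carl_h a b) = fun y =>
      (a - b) * (Real.sqrt (1 - y ^ 2) * Real.arccos y) + ((1 - (a - b)) * y - (a + b)) := by
    funext y; simp [carl_h]; ring
  rw [heq]
  refine this.congr_deriv (Eq.symm ?_)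
  unfold carl_psi
  field_simp
  ring

lemma carl_g_deriv (a b : ℝ) {x : ℝ} (h0 : -1 < x) (h1 : x < 1) :
    HasDerivAt (carl_g a b) (carl_h a b x / Real.sqrt (1 - x ^ 2)) x := by
  have hs := carl_sqrt_pos h0 h1
  have hlin : HasDerivAt (fun y : ℝ => a * (1 + y) + b * (1 - y)) (a - b) x := by
    have := (((hasDerivAt_id x).const_add 1).const_mul a).add
      (((hasDerivAt_id x).neg.const_add 1).const_mul b)
    have h := this.congr_deriv (by ring : _ = a - b)
    exact h
  have := (hlin.mul (Real.hasDerivAt_arccos (by linarith) h1.ne)).sub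
    (carl_hasDerivAt_sqrt h0 h1)
  refine this.congr_deriv (Eq.symm ?_)
  unfold carl_h
  field_simp
  ring

lemma carl_f_deriv (a b : ℝ) {x : ℝ} (h0 : -1 < x) (h1 : x < 1) :
    HasDerivAt (fun x : ℝ => (1 + x) ^ b * (1 - x) ^ (-a) * Real.arccos x)
      ((1 + x) ^ (b - 1) * (1 - x) ^ (-a - 1) * carl_g a b x) x := by
  have hp : (0:ℝ) < 1 + x := by linarith
  have hm : (0:ℝ) < 1 - x := by linarith
  have hs := carl_sqrt_pos h0 h1
  have hss : Real.sqrt (1 - x ^ 2) * Real.sqrt (1 - x ^ 2) = 1 - x ^ 2 :=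
    Real.mul_self_sqrt (carl_sq_pos h0 h1).le
  have hP : HasDerivAt (fun y : ℝ => (1 + y) ^ b) (b * (1 + x) ^ (b - 1)) x := by
    have := (Real.hasDerivAt_rpow_const (p := b) (Or.inl hp.ne')).comp x
      ((hasDerivAt_id x).const_add 1)
    exact this.congr_deriv (mul_one _)
  have hQ : HasDerivAt (fun y : ℝ => (1 - y) ^ (-a)) (a * (1 - x) ^ (-a - 1)) x := by
    have := (Real.hasDerivAt_rpow_const (p := -a) (Or.inl hm.ne')).comp x
      ((hasDerivAt_id x).neg.const_add 1)
    refine this.congr_deriv (Eq.symm ?_)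
    ring_nf
  have hA : HasDerivAt Real.arccos (-(1 / Real.sqrt (1 - x ^ 2))) x :=
    Real.hasDerivAt_arccos (by linarith) h1.ne
  have := (hP.mul hQ).mul hA
  refine this.congr_deriv (Eq.symm ?_)
  have e1 : (1 + x) ^ b = (1 + x) ^ (b - 1) * (1 + x) := by
    rw [← Real.rpow_add_one hp.ne' (b - 1)]; ring_nf
  have e2 : (1 - x) ^ (-a) = (1 - x) ^ (-a - 1) * (1 - x) := by
    rw [← Real.rpow_add_one hm.ne' (-a - 1)]; ring_nf
  simp only [Pi.mul_apply]
  rw [e1, e2]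
  unfold carl_g
  field_simp
  linear_combination (-1 : ℝ) * hss

lemma carl_g_one (a b : ℝ) : carl_g a b 1 = 0 := by
  simp [carl_g, Real.arccos_one]

lemma carl_g_zero (a b : ℝ) : carl_g a b 0 = (a + b) * (π / 2) - 1 := by
  simp [carl_g, Real.arccos_zero]

lemma carl_h_one (a b : ℝ) : carl_h a b 1 = 1 - (a - b) - (a + b) := by
  simp [carl_h, Real.arccos_one]

lemma carl_h_zero (a b : ℝ) : carl_h a b 0 = (a - b) * (π / 2) - (a + b) := by
  simp [carl_h, Real.arccos_zero]

lemma carl_g_cont (a b : ℝ) : Continuous (carl_g a b) := by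
  unfold carl_g
  exact (((continuous_const.mul (continuous_const.add continuous_id)).add
    (continuous_const.mul (continuous_const.sub continuous_id))).mul
    Real.continuous_arccos).sub
    (Real.continuous_sqrt.comp (continuous_const.sub (continuous_pow 2)))

lemma carl_h_cont (a b : ℝ) : Continuous (carl_h a b) := by
  unfold carl_h
  exact ((continuous_const.mul ((Real.continuous_sqrt.comp
    (continuous_const.sub (continuous_pow 2))).mul Real.continuous_arccos)).add
    (continuous_const.mul continuous_id)).sub continuous_const

lemma carl_m_exists {c : ℝ} (hc3 : 1/3 < c) (hc12 : c < 1/2) :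
    ∃ m ∈ Ioo (0:ℝ) 1, carl_psi m = (1 - 2*c)/c := by
  have hπ : 0 < π := Real.pi_pos
  have hπ315 : π < 3.15 := Real.pi_lt_d2
  have hc0 : 0 < c := by linarith
  set v : ℝ := (1 - 2*c)/c with hv
  have hv0 : 0 < v := div_pos (by linarith) hc0
  have hv1 : v < 1 := (div_lt_one hc0).2 (by linarith)
  set δ : ℝ := v/4 with hδdef
  set x' : ℝ := (1+v)/2 with hx'def
  have hδ0 : 0 < δ := by positivity
  have hδ14 : δ < 1/4 := by simp only [hδdef]; linarith
  have hδ1 : δ < 1 := by linarith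
  have hx'0 : 0 < x' := by positivity
  have hx'1 : x' < 1 := by simp only [hx'def]; linarith
  have hδx' : δ < x' := by simp only [hδdef, hx'def]; linarith
  have hSδ : (4:ℝ)/5 < Real.sqrt (1 - δ^2) := by
    rw [show (4:ℝ)/5 = Real.sqrt ((4/5)^2) by rw [Real.sqrt_sq (by norm_num)]]
    apply Real.sqrt_lt_sqrt (by norm_num)
    nlinarith
  have hψδ : carl_psi δ < v := by
    unfold carl_psi
    rw [div_lt_iff₀ (by linarith)]
    have hA : Real.arccos δ ≤ π/2 := Real.arccos_le_pi_div_two.2 hδ0.le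
    have hAnn : 0 ≤ Real.arccos δ := Real.arccos_nonneg δ
    nlinarith
  have hψx' : v < carl_psi x' := by
    have hS' : 0 < Real.sqrt (1 - x'^2) := carl_sqrt_pos (by linarith) hx'1
    have hle : Real.sqrt (1 - x'^2) ≤ Real.arccos x' := carl_sqrt_le_arccos hx'0.le hx'1.le
    have : x' ≤ carl_psi x' := by
      unfold carl_psi
      rw [le_div_iff₀ hS']
      nlinarith
    linarith
  have hcont : ContinuousOn carl_psi (Icc δ x') := fun x hx =>
    (carl_psi_deriv (by linarith [hx.1]) (lt_of_le_of_lt hx.2 hx'1)).continuousAt.continuousWithinAt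
  obtain ⟨m, hmmem, hm⟩ := intermediate_value_Ioo hδx'.le hcont ⟨hψδ, hψx'⟩
  exact ⟨m, ⟨lt_trans hδ0 hmmem.1, lt_trans hmmem.2 hx'1⟩, hm⟩

lemma carl_sign (a b : ℝ)
    (h1 : 1 / 3 < a - b) (h2 : a - b < 4 / Real.pi ^ 2)
    (h3 : 1 / 2 < a) (h4 : a ≤ 2 / Real.pi - b) :
    ∃ x₀ ∈ Ioo (0:ℝ) 1, (∀ x ∈ Ioo (0:ℝ) x₀, carl_g a b x < 0) ∧
      (∀ x ∈ Ioo x₀ 1, 0 < carl_g a b x) := by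
  have hπ : 0 < π := Real.pi_pos
  have hπ3 : 3 < π := Real.pi_gt_three
  have hc0 : 0 < a - b := by linarith
  have h4π2 : 4 / π^2 < 1/2 := by
    rw [div_lt_iff₀ (by positivity)]; nlinarith
  have hc12 : a - b < 1/2 := lt_trans h2 h4π2
  have hs2π : a + b ≤ 2/π := by linarith
  -- g(0) ≤ 0, g(1) = 0, h(1) < 0
  have hg0 : carl_g a b 0 ≤ 0 := by
    rw [carl_g_zero]
    have h1' : (a+b) * (π/2) ≤ (2/π) * (π/2) :=
      mul_le_mul_of_nonneg_right hs2π (by positivity)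
    have h2' : (2/π) * (π/2) = 1 := by field_simp
    linarith
  have hg1 := carl_g_one a b
  have hh1 : carl_h a b 1 < 0 := by rw [carl_h_one]; linarith
  -- (a-b)·π/2 < 2/π
  have hkey0 : (a - b) * (π/2) < 2/π := by
    have h1' : (a-b) * (π/2) < (4/π^2) * (π/2) :=
      mul_lt_mul_of_pos_right h2 (by positivity)
    have h2' : (4/π^2) * (π/2) = 2/π := by field_simp; ring
    linarith
  -- a witness point where g < 0
  obtain ⟨t, ht01, hgt⟩ : ∃ t ∈ Ioo (0:ℝ) 1, carl_g a b t < 0 := by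
    by_cases hg0' : carl_g a b 0 < 0
    · have hopen : IsOpen {x : ℝ | carl_g a b x < 0} :=
        isOpen_lt (carl_g_cont a b) continuous_const
      obtain ⟨ε, hε, hball⟩ := Metric.isOpen_iff.1 hopen 0 hg0'
      refine ⟨min (ε/2) (1/2), ⟨by positivity, lt_of_le_of_lt (min_le_right _ _) (by norm_num)⟩,
        hball ?_⟩
      rw [Metric.mem_ball, Real.dist_eq, sub_zero,
        abs_of_pos (by positivity : (0:ℝ) < min (ε/2) (1/2))]
      exact lt_of_le_of_lt (min_le_left _ _) (by linarith)
    · have hgeq : carl_g a b 0 = 0 := le_antisymm hg0 (not_lt.1 hg0')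
      rw [carl_g_zero] at hgeq
      have hab : a + b = 2/π := by
        field_simp at hgeq ⊢
        linarith
      have hh0 : carl_h a b 0 < 0 := by
        rw [carl_h_zero, hab]; linarith
      have hopen : IsOpen {x : ℝ | carl_h a b x < 0} :=
        isOpen_lt (carl_h_cont a b) continuous_const
      obtain ⟨ε, hε, hball⟩ := Metric.isOpen_iff.1 hopen 0 hh0
      set t : ℝ := min (ε/2) (1/2) with htdef
      have ht0 : 0 < t := by positivity
      have ht1 : t < 1 := lt_of_le_of_lt (min_le_right _ _) (by norm_num)
      have hhneg : ∀ x ∈ Ico (0:ℝ) t, carl_h a b x < 0 := by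
        intro x hx
        have : x ∈ Metric.ball (0:ℝ) ε := by
          rw [Metric.mem_ball, Real.dist_eq, sub_zero, abs_of_nonneg hx.1]
          exact lt_of_lt_of_le hx.2 (le_trans (min_le_left _ _) (by linarith))
        exact hball this
      have hanti : StrictAntiOn (carl_g a b) (Icc 0 t) := by
        refine strictAntiOn_of_deriv_neg (convex_Icc 0 t)
          (carl_g_cont a b).continuousOn (fun x hx => ?_)
        rw [interior_Icc] at hx
        have hx1 : x < 1 := lt_trans hx.2 ht1
        rw [(carl_g_deriv a b (by linarith [hx.1]) hx1).deriv]
        exact div_neg_of_neg_of_pos (hhneg x ⟨hx.1.le, hx.2⟩)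
          (carl_sqrt_pos (by linarith [hx.1]) hx1)
      have := hanti (left_mem_Icc.2 ht0.le) (right_mem_Icc.2 ht0.le) ht0
      refine ⟨t, ⟨ht0, ht1⟩, by linarith [hg0]⟩
  -- the critical point m of h
  obtain ⟨m, hm01, hψm⟩ := carl_m_exists h1 hc12
  -- h is strictly monotone on [0,m] and strictly antitone on [m,1]
  have hmono : StrictMonoOn (carl_h a b) (Icc 0 m) := by
    refine strictMonoOn_of_deriv_pos (convex_Icc 0 m)
      (carl_h_cont a b).continuousOn (fun x hx => ?_)
    rw [interior_Icc] at hx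
    have hx1 : x < 1 := lt_trans hx.2 hm01.2
    rw [(carl_h_deriv a b (by linarith [hx.1]) hx1).deriv]
    have hψ : carl_psi x < carl_psi m :=
      carl_psi_mono ⟨hx.1, hx1⟩ hm01 hx.2
    rw [hψm] at hψ
    have := (lt_div_iff₀ hc0).1 hψ
    nlinarith
  have hanti : StrictAntiOn (carl_h a b) (Icc m 1) := by
    refine strictAntiOn_of_deriv_neg (convex_Icc m 1)
      (carl_h_cont a b).continuousOn (fun x hx => ?_)
    rw [interior_Icc] at hx
    have hx0 : 0 < x := lt_trans hm01.1 hx.1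
    rw [(carl_h_deriv a b (by linarith) hx.2).deriv]
    have hψ : carl_psi m < carl_psi x :=
      carl_psi_mono hm01 ⟨hx0, hx.2⟩ hx.1
    rw [hψm] at hψ
    have := (div_lt_iff₀ hc0).1 hψ
    nlinarith
  by_cases hhm : carl_h a b m ≤ 0
  · -- then h ≤ 0 everywhere, g is antitone on [0,1], contradicting g t < 0 = g 1
    exfalso
    have hant : AntitoneOn (carl_g a b) (Icc 0 1) := by
      refine antitoneOn_of_deriv_nonpos (convex_Icc 0 1)
        (carl_g_cont a b).continuousOn (fun x hx => ?_) (fun x hx => ?_)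
      · rw [interior_Icc] at hx
        exact (carl_g_deriv a b (by linarith [hx.1]) hx.2).differentiableAt.differentiableWithinAt
      · rw [interior_Icc] at hx
        rw [(carl_g_deriv a b (by linarith [hx.1]) hx.2).deriv]
        apply div_nonpos_of_nonpos_of_nonneg _ (Real.sqrt_nonneg _)
        rcases le_total x m with hxm | hxm
        · exact le_trans (hmono.monotoneOn ⟨hx.1.le, hxm⟩
            ⟨hm01.1.le, le_refl m⟩ hxm) hhm
        · exact le_trans (hanti.antitoneOn ⟨le_refl m, hm01.2.le⟩
            ⟨hxm, hx.2.le⟩ hxm) hhm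
    have := hant ⟨ht01.1.le, ht01.2.le⟩ (right_mem_Icc.2 zero_le_one) ht01.2.le
    rw [hg1] at this
    linarith
  · push_neg at hhm
    -- β : zero of h in (m,1)
    obtain ⟨β, hβmem, hβ⟩ := intermediate_value_Ioo' hm01.2.le
      (carl_h_cont a b).continuousOn (⟨hh1, hhm⟩ : (0:ℝ) ∈ Ioo (carl_h a b 1) (carl_h a b m))
    have hβ01 : β ∈ Ioo (0:ℝ) 1 := ⟨lt_trans hm01.1 hβmem.1, hβmem.2⟩
    have hpos_mβ : ∀ x ∈ Ico m β, 0 < carl_h a b x := by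
      intro x hx
      have := hanti ⟨hx.1, le_trans hx.2.le hβmem.2.le⟩
        ⟨hβmem.1.le, hβmem.2.le⟩ hx.2
      rw [hβ] at this
      linarith
    have hneg_β1 : ∀ x ∈ Ioc β 1, carl_h a b x < 0 := by
      intro x hx
      have := hanti ⟨hβmem.1.le, hβmem.2.le⟩
        ⟨le_trans hβmem.1.le hx.1.le, hx.2⟩ hx.1
      rwa [hβ] at this
    -- α and negativity of g to the left
    obtain ⟨α, hα0, hαm, hposαm, hgneg0α, hgα⟩ :
        ∃ α, 0 ≤ α ∧ α < m ∧ (∀ x ∈ Ioc α m, 0 < carl_h a b x) ∧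
          (∀ x ∈ Ioc (0:ℝ) α, carl_g a b x < 0) ∧ carl_g a b α < 0 := by
      by_cases hh0 : 0 ≤ carl_h a b 0
      · refine ⟨0, le_refl 0, hm01.1, ?_, ?_, ?_⟩
        · intro x hx
          have := hmono (left_mem_Icc.2 hm01.1.le) ⟨hx.1.le, hx.2⟩ hx.1
          linarith
        · intro x hx
          exact absurd hx.2 (not_le.2 hx.1)
        · by_contra hcon
          push_neg at hcon
          have hgeq : carl_g a b 0 = 0 := le_antisymm hg0 hcon
          rw [carl_g_zero] at hgeq
          have hab : a + b = 2/π := by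
            field_simp at hgeq ⊢
            linarith
          rw [carl_h_zero, hab] at hh0
          linarith
      · push_neg at hh0
        obtain ⟨α, hαmem, hα⟩ := intermediate_value_Ioo hm01.1.le
          (carl_h_cont a b).continuousOn (⟨hh0, hhm⟩ : (0:ℝ) ∈ Ioo (carl_h a b 0) (carl_h a b m))
        have hneg0α : ∀ x ∈ Ico (0:ℝ) α, carl_h a b x < 0 := by
          intro x hx
          have := hmono ⟨hx.1, le_trans hx.2.le hαmem.2.le⟩
            ⟨hαmem.1.le, hαmem.2.le⟩ hx.2
          rwa [hα] at this
        have hposs : ∀ x ∈ Ioc α m, 0 < carl_h a b x := by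
          intro x hx
          have := hmono ⟨hαmem.1.le, hαmem.2.le⟩
            ⟨le_trans hαmem.1.le hx.1.le, hx.2⟩ hx.1
          rw [hα] at this
          linarith
        have hganti : StrictAntiOn (carl_g a b) (Icc 0 α) := by
          refine strictAntiOn_of_deriv_neg (convex_Icc 0 α)
            (carl_g_cont a b).continuousOn (fun x hx => ?_)
          rw [interior_Icc] at hx
          have hx1 : x < 1 := lt_trans (lt_trans hx.2 hαmem.2) hm01.2
          rw [(carl_g_deriv a b (by linarith [hx.1]) hx1).deriv]
          exact div_neg_of_neg_of_pos (hneg0α x ⟨hx.1.le, hx.2⟩)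
            (carl_sqrt_pos (by linarith [hx.1]) hx1)
        refine ⟨α, hαmem.1.le, hαmem.2, hposs, ?_, ?_⟩
        · intro x hx
          have := hganti (left_mem_Icc.2 hαmem.1.le) ⟨hx.1.le, hx.2⟩ hx.1
          linarith
        · have := hganti (left_mem_Icc.2 hαmem.1.le)
            (right_mem_Icc.2 hαmem.1.le) hαmem.1
          linarith
    -- g strictly monotone on [α, β]
    have hαβ : α < β := lt_trans hαm hβmem.1
    have hgmono : StrictMonoOn (carl_g a b) (Icc α β) := by
      refine strictMonoOn_of_deriv_pos (convex_Icc α β)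
        (carl_g_cont a b).continuousOn (fun x hx => ?_)
      rw [interior_Icc] at hx
      have hx0 : 0 < x := lt_of_le_of_lt hα0 hx.1
      have hx1 : x < 1 := lt_trans hx.2 hβ01.2
      rw [(carl_g_deriv a b (by linarith) hx1).deriv]
      apply div_pos _ (carl_sqrt_pos (by linarith) hx1)
      rcases le_or_gt x m with hxm | hxm
      · exact hposαm x ⟨hx.1, hxm⟩
      · exact hpos_mβ x ⟨hxm.le, hx.2⟩
    -- g strictly antitone on [β,1], hence positive on [β,1)
    have hganti2 : StrictAntiOn (carl_g a b) (Icc β 1) := by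
      refine strictAntiOn_of_deriv_neg (convex_Icc β 1)
        (carl_g_cont a b).continuousOn (fun x hx => ?_)
      rw [interior_Icc] at hx
      have hx0 : 0 < x := lt_trans hβ01.1 hx.1
      rw [(carl_g_deriv a b (by linarith) hx.2).deriv]
      exact div_neg_of_neg_of_pos (hneg_β1 x ⟨hx.1, hx.2.le⟩)
        (carl_sqrt_pos (by linarith) hx.2)
    have hgposβ : ∀ x ∈ Ico β 1, 0 < carl_g a b x := by
      intro x hx
      have := hganti2 ⟨hx.1, hx.2.le⟩ (right_mem_Icc.2 hβ01.2.le) hx.2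
      rwa [hg1] at this
    have hgβpos : 0 < carl_g a b β := hgposβ β ⟨le_refl β, hβ01.2⟩
    -- the zero of g
    obtain ⟨x₀, hx₀mem, hx₀⟩ := intermediate_value_Ioo hαβ.le
      (carl_g_cont a b).continuousOn (⟨hgα, hgβpos⟩ : (0:ℝ) ∈ Ioo (carl_g a b α) (carl_g a b β))
    refine ⟨x₀, ⟨lt_of_le_of_lt hα0 hx₀mem.1, lt_trans hx₀mem.2 hβ01.2⟩, ?_, ?_⟩
    · intro x hx
      rcases le_or_gt x α with hxα | hxα
      · exact hgneg0α x ⟨hx.1, hxα⟩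
      · have := hgmono ⟨hxα.le, le_trans hx.2.le hx₀mem.2.le⟩
          ⟨hx₀mem.1.le, hx₀mem.2.le⟩ hx.2
        rwa [hx₀] at this
    · intro x hx
      rcases le_or_gt x β with hxβ | hxβ
      · have := hgmono ⟨hx₀mem.1.le, hx₀mem.2.le⟩
          ⟨le_trans hx₀mem.1.le hx.1.le, hxβ⟩ hx.1
        rwa [hx₀] at this
      · exact hgposβ x ⟨hxβ.le, hx.2⟩

theorem carlson_arccos_unique_minimum (a b : ℝ)
    (h1 : 1 / 3 < a - b) (h2 : a - b < 4 / Real.pi ^ 2)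
    (h3 : 1 / 2 < a) (h4 : a ≤ 2 / Real.pi - b) :
    ∃! x₀ : ℝ, x₀ ∈ Set.Ioo (0 : ℝ) 1 ∧
      StrictAntiOn (fun x : ℝ => (1 + x) ^ b * (1 - x) ^ (-a) * Real.arccos x)
        (Set.Ioc 0 x₀) ∧
      StrictMonoOn (fun x : ℝ => (1 + x) ^ b * (1 - x) ^ (-a) * Real.arccos x)
        (Set.Ico x₀ 1) := by
  obtain ⟨x₀, hx₀01, hneg, hpos⟩ := carl_sign a b h1 h2 h3 h4
  set f : ℝ → ℝ := fun x : ℝ => (1 + x) ^ b * (1 - x) ^ (-a) * Real.arccos x with hfdef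
  have hfc : ∀ x ∈ Ioo (0:ℝ) 1, ContinuousAt f x := fun x hx =>
    (carl_f_deriv a b (by linarith [hx.1]) hx.2).continuousAt
  have hanti : StrictAntiOn f (Ioc 0 x₀) := by
    refine strictAntiOn_of_deriv_neg (convex_Ioc 0 x₀)
      (fun x hx => (hfc x ⟨hx.1, lt_of_le_of_lt hx.2 hx₀01.2⟩).continuousWithinAt)
      (fun x hx => ?_)
    rw [interior_Ioc] at hx
    have hx1 : x < 1 := lt_trans hx.2 hx₀01.2
    rw [(carl_f_deriv a b (by linarith [hx.1]) hx1).deriv]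
    have hF : 0 < (1 + x) ^ (b - 1) * (1 - x) ^ (-a - 1) := by
      have := Real.rpow_pos_of_pos (show (0:ℝ) < 1 + x by linarith [hx.1]) (b - 1)
      have := Real.rpow_pos_of_pos (show (0:ℝ) < 1 - x by linarith) (-a - 1)
      positivity
    exact mul_neg_of_pos_of_neg hF (hneg x hx)
  have hmono : StrictMonoOn f (Ico x₀ 1) := by
    refine strictMonoOn_of_deriv_pos (convex_Ico x₀ 1)
      (fun x hx => (hfc x ⟨lt_of_lt_of_le hx₀01.1 hx.1, hx.2⟩).continuousWithinAt)
      (fun x hx => ?_)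
    rw [interior_Ico] at hx
    have hx0 : 0 < x := lt_trans hx₀01.1 hx.1
    rw [(carl_f_deriv a b (by linarith) hx.2).deriv]
    have hF : 0 < (1 + x) ^ (b - 1) * (1 - x) ^ (-a - 1) := by
      have := Real.rpow_pos_of_pos (show (0:ℝ) < 1 + x by linarith) (b - 1)
      have := Real.rpow_pos_of_pos (show (0:ℝ) < 1 - x by linarith [hx.2]) (-a - 1)
      positivity
    exact mul_pos hF (hpos x hx)
  refine ⟨x₀, ⟨hx₀01, hanti, hmono⟩, ?_⟩
  rintro y ⟨hy01, hyanti, hymono⟩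
  by_contra hne
  rcases lt_or_gt_of_ne hne with hlt | hgt
  · -- y < x₀
    have hA : f x₀ < f y := hanti ⟨hy01.1, hlt.le⟩ ⟨hx₀01.1, le_refl x₀⟩ hlt
    have hB : f y < f x₀ := hymono (left_mem_Ico.2 hy01.2) ⟨hlt.le, hx₀01.2⟩ hlt
    linarith
  · -- x₀ < y
    have hA : f y < f x₀ := hyanti ⟨hx₀01.1, hgt.le⟩ ⟨hy01.1, le_refl y⟩ hgt
    have hB : f x₀ < f y := hmono (left_mem_Ico.2 hx₀01.2) ⟨hgt.le, hy01.2⟩ hgt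
    linarith
end

section
/- Let a, b be real numbers and define f_{a,b}(x) = (1+x)^b (1-x)^{-a} · arccos(x) for x ∈ (0,1). If f_{a,b} is strictly increasing on (0,1), then necessarily b ≥ 2/π − a and a ≥ 1/2. -/
open Real Set Filter Topology

theorem carlson_arccos_strict_mono_necessary (a b : ℝ)
    (h : StrictMonoOn (fun x : ℝ => (1 + x) ^ b * (1 - x) ^ (-a) * Real.arccos x)
      (Set.Ioo 0 1)) :
    b ≥ 2 / Real.pi - a ∧ a ≥ 1 / 2 := by
  set f : ℝ → ℝ := fun x => (1 + x) ^ b * (1 - x) ^ (-a) * Real.arccos x with hfdef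
  have hπ := Real.pi_pos
  have hf0 : f 0 = π / 2 := by simp [hfdef, Real.one_rpow, Real.arccos_zero]
  -- derivative of f at 0
  have hu : HasDerivAt (fun x : ℝ => (1 + x) ^ b) b 0 := by
    have h1 : HasDerivAt (fun x : ℝ => 1 + x) 1 0 := (hasDerivAt_id 0).const_add 1
    have := h1.rpow_const (p := b) (Or.inl (by norm_num))
    simpa using this
  have hv : HasDerivAt (fun x : ℝ => (1 - x) ^ (-a)) a 0 := by
    have h1 : HasDerivAt (fun x : ℝ => 1 - x) (-1) 0 := by
      simpa using ((hasDerivAt_id (0:ℝ)).const_sub 1)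
    have := h1.rpow_const (p := -a) (Or.inl (by norm_num))
    simpa using this
  have hw : HasDerivAt Real.arccos (-1) 0 := by
    have := Real.hasDerivAt_arccos (x := 0) (by norm_num) (by norm_num)
    simpa using this
  have hdf : HasDerivAt f ((b + a) * (π / 2) - 1) 0 := by
    have := (hu.mul hv).mul hw
    refine HasDerivAt.congr_deriv this ?_
    simp [Real.one_rpow, Real.arccos_zero]
    ring
  -- f x ≥ π/2 on Ioo 0 1
  have hge : ∀ x ∈ Ioo (0:ℝ) 1, π / 2 ≤ f x := by
    intro x hx
    have hne : (𝓝[Ioo (0:ℝ) x] 0).NeBot := left_nhdsWithin_Ioo_neBot hx.1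
    have htend : Tendsto f (𝓝[Ioo (0:ℝ) x] 0) (𝓝 (π / 2)) := by
      have h0 : Tendsto f (𝓝[Ioo (0:ℝ) x] 0) (𝓝 (f 0)) :=
        hdf.continuousAt.tendsto.mono_left nhdsWithin_le_nhds
      rwa [hf0] at h0
    refine le_of_tendsto htend ?_
    filter_upwards [self_mem_nhdsWithin] with y hy
    exact (h ⟨hy.1, hy.2.trans hx.2⟩ hx hy.2).le
  -- derivative at 0 is nonneg
  have hd0 : 0 ≤ (b + a) * (π / 2) - 1 := by
    have hds : HasDerivWithinAt f ((b + a) * (π / 2) - 1) (Ioo (0:ℝ) 1) 0 :=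
      hdf.hasDerivWithinAt
    have hslope := hasDerivWithinAt_iff_tendsto_slope.mp hds
    have hne : (𝓝[Ioo (0:ℝ) 1 \ {0}] 0).NeBot := by
      rw [Set.diff_singleton_eq_self (by simp)]
      exact left_nhdsWithin_Ioo_neBot one_pos
    refine ge_of_tendsto hslope ?_
    filter_upwards [self_mem_nhdsWithin] with y hy
    have hy' : y ∈ Ioo (0:ℝ) 1 := hy.1
    rw [slope_def_field]
    have : f 0 ≤ f y := hf0 ▸ hge y hy'
    exact div_nonneg (by linarith) (by simpa using hy'.1.le)
  have hab : b + a ≥ 2 / π := by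
    rw [ge_iff_le, div_le_iff₀ hπ]
    nlinarith
  refine ⟨by linarith, ?_⟩
  -- now a ≥ 1/2
  by_contra ha
  push_neg at ha
  set q : ℝ := 1 / 2 - a with hq
  have hqpos : 0 < q := by simp [hq]; linarith
  set m : ℝ := max b 0 with hm
  -- arccos bound
  have harc : ∀ x ∈ Ioo (0:ℝ) 1, Real.arccos x ≤ π * Real.sqrt (1 - x) := by
    intro x hx
    set θ := Real.arccos x with hθ
    have hθ0 : 0 ≤ θ := Real.arccos_nonneg x
    have hθπ : θ ≤ π := Real.arccos_le_pi x
    have hcos : Real.cos θ = x := Real.cos_arccos (by linarith [hx.1]) hx.2.le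
    have hb2 : Real.cos θ ≤ 1 - 2 / π ^ 2 * θ ^ 2 :=
      Real.cos_le_one_sub_mul_cos_sq (by rw [abs_of_nonneg hθ0]; exact hθπ)
    have hsq : 2 * θ ^ 2 / π ^ 2 ≤ 1 - x := by
      rw [hcos] at hb2
      have : 2 / π ^ 2 * θ ^ 2 = 2 * θ ^ 2 / π ^ 2 := by ring
      linarith
    have key : 2 * θ ^ 2 ≤ (1 - x) * π ^ 2 := by
      rwa [div_le_iff₀ (by positivity)] at hsq
    have hs := Real.sq_sqrt (show (0:ℝ) ≤ 1 - x by linarith [hx.2])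
    have hsn := Real.sqrt_nonneg (1 - x)
    have hsq2 : θ ^ 2 ≤ (π * Real.sqrt (1 - x)) ^ 2 := by nlinarith [sq_nonneg θ]
    calc θ = Real.sqrt (θ ^ 2) := (Real.sqrt_sq hθ0).symm
      _ ≤ Real.sqrt ((π * Real.sqrt (1 - x)) ^ 2) := Real.sqrt_le_sqrt hsq2
      _ = π * Real.sqrt (1 - x) := Real.sqrt_sq (mul_nonneg hπ.le hsn)
  -- (1+x)^b bound
  have hpow : ∀ x ∈ Ioo (0:ℝ) 1, (1 + x) ^ b ≤ (2:ℝ) ^ m := by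
    intro x hx
    rcases le_or_gt 0 b with hb | hb
    · have : (1 + x) ^ b ≤ (2:ℝ) ^ b :=
        Real.rpow_le_rpow (by linarith [hx.1]) (by linarith [hx.2]) hb
      rwa [hm, max_eq_left hb]
    · have : (1 + x) ^ b ≤ 1 :=
        Real.rpow_le_one_of_one_le_of_nonpos (by linarith [hx.1]) hb.le
      rw [hm, max_eq_right hb.le, Real.rpow_zero]
      exact this
  -- main bound
  have hbound : ∀ x ∈ Ioo (0:ℝ) 1, f x ≤ π * 2 ^ m * (1 - x) ^ q := by
    intro x hx
    have h1x : (0:ℝ) < 1 - x := by linarith [hx.2]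
    have hsplit : (1 - x) ^ (-a) * (π * Real.sqrt (1 - x)) = π * (1 - x) ^ q := by
      rw [Real.sqrt_eq_rpow, show q = -a + 1 / 2 by rw [hq]; ring, Real.rpow_add h1x]
      ring
    have h2 : f x ≤ (2:ℝ) ^ m * ((1 - x) ^ (-a) * (π * Real.sqrt (1 - x))) := by
      have e1 : (1 + x) ^ b * (1 - x) ^ (-a) * Real.arccos x ≤
          (2:ℝ) ^ m * ((1 - x) ^ (-a) * Real.arccos x) := by
        rw [mul_assoc]
        exact mul_le_mul_of_nonneg_right (hpow x hx)
          (mul_nonneg (Real.rpow_nonneg h1x.le _) (Real.arccos_nonneg x))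
      have e2 : (1 - x) ^ (-a) * Real.arccos x ≤ (1 - x) ^ (-a) * (π * Real.sqrt (1 - x)) :=
        mul_le_mul_of_nonneg_left (harc x hx) (Real.rpow_nonneg h1x.le _)
      calc f x ≤ (2:ℝ) ^ m * ((1 - x) ^ (-a) * Real.arccos x) := e1
        _ ≤ _ := mul_le_mul_of_nonneg_left e2 (Real.rpow_nonneg (by norm_num) _)
    rw [hsplit] at h2
    calc f x ≤ (2:ℝ) ^ m * (π * (1 - x) ^ q) := h2
      _ = π * 2 ^ m * (1 - x) ^ q := by ring
  -- the bound tends to 0 at 1⁻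
  have htend : Tendsto (fun x : ℝ => π * 2 ^ m * (1 - x) ^ q) (𝓝[<] (1:ℝ)) (𝓝 0) := by
    have h1 : Tendsto (fun x : ℝ => 1 - x) (𝓝[<] (1:ℝ)) (𝓝 0) := by
      have : Tendsto (fun x : ℝ => 1 - x) (𝓝 (1:ℝ)) (𝓝 0) := by
        have hc : Continuous (fun x : ℝ => 1 - x) := by continuity
        simpa using hc.tendsto 1
      exact this.mono_left nhdsWithin_le_nhds
    have h2 : ContinuousAt (fun t : ℝ => t ^ q) 0 :=
      Real.continuousAt_rpow_const 0 q (Or.inr hqpos.le)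
    have h3 : Tendsto (fun x : ℝ => (1 - x) ^ q) (𝓝[<] (1:ℝ)) (𝓝 0) := by
      have := (h2.tendsto.comp h1)
      simpa [Function.comp_def, Real.zero_rpow hqpos.ne'] using this
    have := h3.const_mul (π * 2 ^ m)
    simpa using this
  -- get a contradiction
  have hx0 : (3/4 : ℝ) ∈ Ioo (0:ℝ) 1 := by norm_num
  have hfx0 : 0 < f (3/4 : ℝ) := by
    have h1 : (0:ℝ) < (1 + 3/4 : ℝ) ^ b := Real.rpow_pos_of_pos (by norm_num) _
    have h2 : (0:ℝ) < (1 - 3/4 : ℝ) ^ (-a) := Real.rpow_pos_of_pos (by norm_num) _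
    have h3 : (0:ℝ) < Real.arccos (3/4) := Real.arccos_pos.mpr (by norm_num)
    exact mul_pos (mul_pos h1 h2) h3
  have hev1 : ∀ᶠ x in 𝓝[<] (1:ℝ), π * 2 ^ m * (1 - x) ^ q < f (3/4 : ℝ) :=
    htend.eventually_lt_const hfx0
  have hev2 : ∀ᶠ x in 𝓝[<] (1:ℝ), x ∈ Ioo (3/4 : ℝ) 1 :=
    Ioo_mem_nhdsLT (by norm_num)
  obtain ⟨x, hx1, hx2⟩ := (hev1.and hev2).exists
  have hxI : x ∈ Ioo (0:ℝ) 1 := ⟨by linarith [hx2.1], hx2.2⟩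
  have hlt : f (3/4 : ℝ) < f x := h hx0 hxI hx2.1
  have : f x ≤ π * 2 ^ m * (1 - x) ^ q := hbound x hxI
  linarith
end

section
/- Let b be a real number with b ≥ 1/6. Then for every x ∈ (0,1), the double inequality (π/2) · (1−x)^{1/2} / (1+x)^b < arccos(x) < 2^{b+1/2} · (1−x)^{1/2} / (1+x)^b holds. -/
open Real Set

lemma nonneg_aux (f f' : ℝ → ℝ) (hd : ∀ x, HasDerivAt f (f' x) x)
    (h0 : f 0 = 0) (hf' : ∀ x, 0 ≤ x → 0 ≤ f' x) :
    ∀ x, 0 ≤ x → 0 ≤ f x := by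
  intro x hx
  have hmono : MonotoneOn f (Ici 0) := by
    apply monotoneOn_of_deriv_nonneg (convex_Ici 0)
      (fun y _ => (hd y).continuousAt.continuousWithinAt)
      (fun y _ => (hd y).differentiableAt.differentiableWithinAt)
    intro y hy
    rw [interior_Ici] at hy
    rw [(hd y).deriv]
    exact hf' y (le_of_lt hy)
  calc (0:ℝ) = f 0 := h0.symm
  _ ≤ f x := hmono self_mem_Ici hx hx

lemma sin_ge_poly : ∀ x : ℝ, 0 ≤ x → x - x^3/6 ≤ Real.sin x := by
  have h := nonneg_aux (fun x => Real.sin x - x + x^3/6)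
    (fun x => Real.cos x - 1 + x^2/2)
    (fun x => by
      have : HasDerivAt (fun x => Real.sin x - x + x^3/6)
          (Real.cos x - 1 + (↑3 * x^(3-1))/6) x :=
        ((Real.hasDerivAt_sin x).sub (hasDerivAt_id x)).add ((hasDerivAt_pow 3 x).div_const 6)
      convert this using 1; push_cast; ring)
    (by norm_num)
    (fun x _ => by nlinarith [Real.one_sub_sq_div_two_le_cos (x := x)])
  intro x hx; have := h x hx; (try simp only at this); linarith

lemma cos_le_poly : ∀ x : ℝ, 0 ≤ x → Real.cos x ≤ 1 - x^2/2 + x^4/24 := by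
  have h := nonneg_aux (fun x => 1 - x^2/2 + x^4/24 - Real.cos x)
    (fun x => -x + x^3/6 + Real.sin x)
    (fun x => by
      have : HasDerivAt (fun x => 1 - x^2/2 + x^4/24 - Real.cos x)
          (((0:ℝ) - (↑2 * x^(2-1))/2 + (↑4 * x^(4-1))/24) - (-Real.sin x)) x :=
        (((hasDerivAt_const x (1:ℝ)).sub ((hasDerivAt_pow 2 x).div_const 2)).add
          ((hasDerivAt_pow 4 x).div_const 24)).sub (Real.hasDerivAt_cos x)
      convert this using 1; push_cast; ring)
    (by norm_num)
    (fun x hx => by nlinarith [sin_ge_poly x hx])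
  intro x hx; have := h x hx; (try simp only at this); linarith

lemma sin_le_poly : ∀ x : ℝ, 0 ≤ x → Real.sin x ≤ x - x^3/6 + x^5/120 := by
  have h := nonneg_aux (fun x => x - x^3/6 + x^5/120 - Real.sin x)
    (fun x => 1 - x^2/2 + x^4/24 - Real.cos x)
    (fun x => by
      have : HasDerivAt (fun x => x - x^3/6 + x^5/120 - Real.sin x)
          (((1:ℝ) - (↑3 * x^(3-1))/6 + (↑5 * x^(5-1))/120) - Real.cos x) x :=
        (((hasDerivAt_id x).sub ((hasDerivAt_pow 3 x).div_const 6)).add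
          ((hasDerivAt_pow 5 x).div_const 120)).sub (Real.hasDerivAt_sin x)
      convert this using 1; push_cast; ring)
    (by norm_num)
    (fun x hx => by nlinarith [cos_le_poly x hx])
  intro x hx; have := h x hx; (try simp only at this); linarith

lemma cos_ge_poly : ∀ x : ℝ, 0 ≤ x → 1 - x^2/2 + x^4/24 - x^6/720 ≤ Real.cos x := by
  have h := nonneg_aux (fun x => Real.cos x - (1 - x^2/2 + x^4/24 - x^6/720))
    (fun x => -Real.sin x + (x - x^3/6 + x^5/120))
    (fun x => by
      have : HasDerivAt (fun x => Real.cos x - (1 - x^2/2 + x^4/24 - x^6/720))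
          (-Real.sin x - (((0:ℝ) - (↑2 * x^(2-1))/2 + (↑4 * x^(4-1))/24) - (↑6 * x^(6-1))/720)) x :=
        (Real.hasDerivAt_cos x).sub ((((hasDerivAt_const x (1:ℝ)).sub
          ((hasDerivAt_pow 2 x).div_const 2)).add ((hasDerivAt_pow 4 x).div_const 24)).sub
          ((hasDerivAt_pow 6 x).div_const 720))
      convert this using 1; push_cast; ring)
    (by norm_num)
    (fun x hx => by nlinarith [sin_le_poly x hx])
  intro x hx; have := h x hx; (try simp only at this); linarith

lemma cusa : ∀ v : ℝ, 0 < v → v < π/2 → 3 * Real.sin v < v * (2 + Real.cos v) := by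
  intro v hv hv2
  have h1 : v < 2 := by nlinarith [Real.pi_lt_d2]
  have hs := sin_le_poly v hv.le
  have hc := cos_ge_poly v hv.le
  have h3 : v^2 < 4 := by nlinarith
  have h2 : (0:ℝ) < v^5 * (12 - v^2) := mul_pos (pow_pos hv 5) (by linarith)
  nlinarith [mul_le_mul_of_nonneg_left hc hv.le]

lemma lemA : ∀ u : ℝ, 0 < u → u < π/4 → u^3 * Real.cos u < Real.sin u ^ 3 := by
  intro u hu hu4
  have h1 : u < 1 := by nlinarith [Real.pi_lt_d2]
  have hs := sin_ge_poly u hu.le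
  have hc := cos_le_poly u hu.le
  have hp : 0 < u - u^3/6 := by nlinarith
  have h3 : (u - u^3/6)^3 ≤ Real.sin u ^ 3 := pow_le_pow_left₀ hp.le hs 3
  have h4 : 0 < u^7 * (9 - u^2) := mul_pos (pow_pos hu 7) (by nlinarith)
  nlinarith [h3, h4, pow_pos hu 3]

lemma lemB : ∀ u : ℝ, 0 < u → u < π/4 → π^3 * Real.sin u ^ 3 < 32 * (u^3 * Real.cos u) := by
  intro u hu hu4
  set F : ℝ → ℝ := fun u => Real.sin u ^ 3 / (u ^ 3 * Real.cos u) with hF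
  have hpi4 : (0:ℝ) < π/4 := by positivity
  have hcospos : ∀ y : ℝ, y ∈ Set.Ioc 0 (π/4) → 0 < Real.cos y := fun y hy =>
    Real.cos_pos_of_mem_Ioo ⟨by linarith [hy.1, Real.pi_pos], by linarith [hy.2, Real.pi_pos]⟩
  have hden : ∀ y : ℝ, y ∈ Set.Ioc 0 (π/4) → 0 < y^3 * Real.cos y := fun y hy =>
    mul_pos (pow_pos hy.1 3) (hcospos y hy)
  have hcont : ContinuousOn F (Set.Ioc 0 (π/4)) := by
    apply ContinuousOn.div (Continuous.continuousOn (by continuity))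
      (Continuous.continuousOn (by continuity))
    exact fun y hy => (hden y hy).ne'
  have hderiv : ∀ y ∈ interior (Set.Ioc 0 (π/4)), 0 < deriv F y := by
    intro y hy
    rw [interior_Ioc] at hy
    have hy0 := hy.1
    have hy4 := hy.2
    have hymem : y ∈ Set.Ioc 0 (π/4) := ⟨hy.1, hy.2.le⟩
    have hcy := hcospos y hymem
    have hsy : 0 < Real.sin y := Real.sin_pos_of_pos_of_lt_pi hy0 (by linarith [Real.pi_lt_d2])
    have hnum : HasDerivAt (fun z => Real.sin z ^ 3) ((3:ℕ) * Real.sin y ^ 2 * Real.cos y) y := by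
      have := (Real.hasDerivAt_sin y).fun_pow 3
      simpa using this
    have hden' : HasDerivAt (fun z : ℝ => z^3 * Real.cos z)
        ((3:ℕ) * y^2 * Real.cos y + y^3 * (-Real.sin y)) y := by
      have := (hasDerivAt_pow 3 y).fun_mul (Real.hasDerivAt_cos y)
      simpa using this
    have hd : HasDerivAt F
        (((3:ℕ) * Real.sin y ^ 2 * Real.cos y * (y^3 * Real.cos y) -
          Real.sin y ^ 3 * ((3:ℕ) * y^2 * Real.cos y + y^3 * (-Real.sin y))) /
          (y^3 * Real.cos y)^2) y := hnum.div hden' (hden y hymem).ne'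
    rw [hd.deriv]
    apply div_pos _ (pow_pos (hden y hymem) 2)
    have hcu := cusa (2*y) (by linarith) (by linarith)
    rw [Real.sin_two_mul, Real.cos_two_mul] at hcu
    have hb : 3 * Real.sin y * Real.cos y < y * (3 * Real.cos y ^2 + Real.sin y ^2) := by
      nlinarith [Real.sin_sq_add_cos_sq y]
    push_cast
    nlinarith [mul_pos (mul_pos (pow_pos hy0 2) (pow_pos hsy 2)) (sub_pos.2 hb)]
  have hmono : StrictMonoOn F (Set.Ioc 0 (π/4)) :=
    strictMonoOn_of_deriv_pos (convex_Ioc _ _) hcont hderiv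
  have hlt : F u < F (π/4) :=
    hmono ⟨hu, hu4.le⟩ ⟨hpi4, le_refl _⟩ hu4
  have hFval : F (π/4) = 32 / π^3 := by
    have h2 : Real.sqrt 2 ^ 2 = 2 := Real.sq_sqrt (by norm_num)
    have hs2 : (0:ℝ) < Real.sqrt 2 := Real.sqrt_pos.2 (by norm_num)
    rw [hF]
    simp only [Real.sin_pi_div_four, Real.cos_pi_div_four]
    have hpi := Real.pi_pos
    field_simp
    linear_combination 64 * h2
  rw [hFval] at hlt
  have hd := hden u ⟨hu, hu4.le⟩
  rw [div_lt_div_iff₀ hd (by positivity)] at hlt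
  nlinarith [Real.pi_pos, hlt]

theorem carlson_arccos_double_ineq (b : ℝ) (hb : b ≥ 1 / 6) :
    ∀ x ∈ Set.Ioo (0 : ℝ) 1,
      Real.pi / 2 * (1 - x) ^ ((1 : ℝ) / 2) / (1 + x) ^ b < Real.arccos x ∧
      Real.arccos x < (2 : ℝ) ^ (b + 1 / 2) * (1 - x) ^ ((1 : ℝ) / 2) / (1 + x) ^ b := by
  rintro x ⟨hx0, hx1⟩
  have h1xpos : (0:ℝ) < 1 + x := by linarith
  have h1x2 : 1 + x < 2 := by linarith
  set u := Real.arccos x / 2 with hu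
  have ht0 : 0 < Real.arccos x := Real.arccos_pos.2 hx1
  have ht2 : Real.arccos x < π/2 := Real.arccos_lt_pi_div_two.2 hx0
  have hu0 : 0 < u := by positivity
  have hu4 : u < π/4 := by rw [hu]; linarith
  have htu : Real.arccos x = 2 * u := by rw [hu]; ring
  have hcos : Real.cos (Real.arccos x) = x := Real.cos_arccos (by linarith) (by linarith)
  have hcc : Real.cos (Real.arccos x) = 2 * Real.cos u ^ 2 - 1 := by
    rw [htu, Real.cos_two_mul]
  have hc : 0 < Real.cos u := Real.cos_pos_of_mem_Ioo
    ⟨by linarith [Real.pi_pos], by linarith [Real.pi_pos]⟩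
  have hs : 0 < Real.sin u := Real.sin_pos_of_pos_of_lt_pi hu0 (by linarith [Real.pi_lt_d2])
  have h2x : 1 + x = 2 * Real.cos u ^ 2 := by rw [← hcos, hcc]; ring
  have h1mx : 1 - x = 2 * Real.sin u ^ 2 := by
    have := Real.sin_sq_add_cos_sq u
    rw [← hcos, hcc]; nlinarith
  have hsqrt2 : (0:ℝ) < Real.sqrt 2 := Real.sqrt_pos.2 (by norm_num)
  have h2 : Real.sqrt 2 ^ 2 = 2 := Real.sq_sqrt (by norm_num)
  have hcube2 : Real.sqrt 2 ^ 3 = 2 * Real.sqrt 2 := by rw [pow_succ, h2]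
  have hsqrt : (1 - x) ^ ((1:ℝ)/2) = Real.sqrt 2 * Real.sin u := by
    rw [← Real.sqrt_eq_rpow, h1mx, Real.sqrt_mul (by norm_num), Real.sqrt_sq hs.le]
  set d : ℝ := (1 + x) ^ ((1:ℝ)/6) with hdd
  have hd0 : 0 < d := Real.rpow_pos_of_pos h1xpos _
  have hd3 : d ^ 3 = Real.sqrt 2 * Real.cos u := by
    have e : d ^ (3:ℕ) = (1+x) ^ ((1:ℝ)/2) := by
      rw [hdd, ← Real.rpow_natCast ((1+x) ^ ((1:ℝ)/6)) 3, ← Real.rpow_mul h1xpos.le]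
      norm_num
    rw [e, ← Real.sqrt_eq_rpow, h2x, Real.sqrt_mul (by norm_num), Real.sqrt_sq hc.le]
  have hbpow : (1 + x) ^ ((1:ℝ)/6) ≤ (1 + x) ^ b :=
    Real.rpow_le_rpow_of_exponent_le (by linarith) hb
  constructor
  · -- lower bound
    have step1 : π / 2 * (1 - x) ^ ((1:ℝ)/2) / (1 + x) ^ b ≤
        π / 2 * (1 - x) ^ ((1:ℝ)/2) / d := by
      apply div_le_div_of_nonneg_left _ hd0 hbpow
      have : (0:ℝ) ≤ (1 - x) ^ ((1:ℝ)/2) := Real.rpow_nonneg (by linarith) _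
      positivity
    refine lt_of_le_of_lt step1 ?_
    rw [div_lt_iff₀ hd0, hsqrt, htu]
    apply lt_of_pow_lt_pow_left₀ 3 (by positivity)
    have key := lemB u hu0 hu4
    calc (π / 2 * (Real.sqrt 2 * Real.sin u)) ^ 3
        = Real.sqrt 2 / 4 * (π ^ 3 * Real.sin u ^ 3) := by
          rw [mul_pow, mul_pow, div_pow, hcube2]; ring
      _ < Real.sqrt 2 / 4 * (32 * (u ^ 3 * Real.cos u)) := by
          apply mul_lt_mul_of_pos_left key (by positivity)
      _ = 8 * u ^ 3 * (Real.sqrt 2 * Real.cos u) := by ring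
      _ = (2 * u * d) ^ 3 := by rw [mul_pow, mul_pow, hd3]; try ring
  · -- upper bound
    have hc43 : ((2:ℝ) ^ ((2:ℝ)/3)) ^ 3 = 4 := by
      rw [← Real.rpow_natCast ((2:ℝ) ^ ((2:ℝ)/3)) 3, ← Real.rpow_mul (by norm_num)]
      norm_num
    have step1 : Real.arccos x < (2:ℝ) ^ ((2:ℝ)/3) * (1 - x) ^ ((1:ℝ)/2) / d := by
      rw [lt_div_iff₀ hd0, htu, hsqrt]
      apply lt_of_pow_lt_pow_left₀ 3 (by positivity)
      have key := lemA u hu0 hu4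
      calc (2 * u * d) ^ 3 = 8 * Real.sqrt 2 * (u ^ 3 * Real.cos u) := by
            rw [mul_pow, mul_pow, hd3]; ring
        _ < 8 * Real.sqrt 2 * Real.sin u ^ 3 := by
            apply mul_lt_mul_of_pos_left key (by positivity)
        _ = ((2:ℝ) ^ ((2:ℝ)/3) * (Real.sqrt 2 * Real.sin u)) ^ 3 := by
            rw [mul_pow, mul_pow, hc43, hcube2]; ring
    refine lt_of_lt_of_le step1 ?_
    -- monotonicity in b
    have hr : (1 + x) ^ (b - 1/6) ≤ (2:ℝ) ^ (b - 1/6) :=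
      Real.rpow_le_rpow h1xpos.le h1x2.le (by linarith)
    have e1 : (1 + x) ^ ((1:ℝ)/6) * (1 + x) ^ (b - 1/6) = (1 + x) ^ b := by
      rw [← Real.rpow_add h1xpos]; norm_num
    have e2 : (2:ℝ) ^ ((2:ℝ)/3) * (2:ℝ) ^ (b - 1/6) = 2 ^ (b + 1/2) := by
      rw [← Real.rpow_add (by norm_num)]; congr 1; ring
    have hnum : (0:ℝ) ≤ (1 - x) ^ ((1:ℝ)/2) := Real.rpow_nonneg (by linarith) _
    have hbpos : (0:ℝ) < (1 + x) ^ b := Real.rpow_pos_of_pos h1xpos _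
    rw [div_le_div_iff₀ hd0 hbpos]
    have h3 := mul_le_mul_of_nonneg_left hr
      (show (0:ℝ) ≤ (2:ℝ) ^ ((2:ℝ)/3) * (1 + x) ^ ((1:ℝ)/6) by positivity)
    have hfin : (2:ℝ) ^ ((2:ℝ)/3) * (1 + x) ^ b ≤ 2 ^ (b + 1/2) * (1 + x) ^ ((1:ℝ)/6) := by
      calc (2:ℝ) ^ ((2:ℝ)/3) * (1 + x) ^ b
          = (2:ℝ) ^ ((2:ℝ)/3) * (1 + x) ^ ((1:ℝ)/6) * ((1 + x) ^ (b - 1/6)) := by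
            rw [mul_assoc, e1]
        _ ≤ (2:ℝ) ^ ((2:ℝ)/3) * (1 + x) ^ ((1:ℝ)/6) * ((2:ℝ) ^ (b - 1/6)) := h3
        _ = (2:ℝ) ^ ((2:ℝ)/3) * (2:ℝ) ^ (b - 1/6) * (1 + x) ^ ((1:ℝ)/6) := by ring
        _ = 2 ^ (b + 1/2) * (1 + x) ^ ((1:ℝ)/6) := by rw [e2]
    calc (2:ℝ) ^ ((2:ℝ)/3) * (1 - x) ^ ((1:ℝ)/2) * (1 + x) ^ b
        = (1 - x) ^ ((1:ℝ)/2) * ((2:ℝ) ^ ((2:ℝ)/3) * (1 + x) ^ b) := by ring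
      _ ≤ (1 - x) ^ ((1:ℝ)/2) * (2 ^ (b + 1/2) * (1 + x) ^ ((1:ℝ)/6)) :=
          mul_le_mul_of_nonneg_left hfin hnum
      _ = 2 ^ (b + 1/2) * (1 - x) ^ ((1:ℝ)/2) * d := by rw [hdd]; ring
end

section
/- Let b be a real number. If the inequality arccos(x) < 2^{b+1/2} · (1−x)^{1/2} / (1+x)^b holds for every x ∈ (0,1), then b ≥ 1/6. (Together with the sufficiency, this inequality holds on (0,1) if and only if b ≥ 1/6.) -/
open Real Set

lemma sin_cube_aux : ∀ z : ℝ, 0 ≤ z → Real.sin z + Real.sin z ^ 3 / 6 ≤ z := by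
  intro z hz
  have key : Monotone (fun t : ℝ => t - Real.sin t - Real.sin t ^ 3 / 6) := by
    have hd : ∀ t : ℝ, HasDerivAt (fun t : ℝ => t - Real.sin t - Real.sin t ^ 3 / 6)
        (1 - Real.cos t - (3 : ℕ) * Real.sin t ^ 2 * Real.cos t / 6) t := by
      intro t
      have h1 := (Real.hasDerivAt_sin t)
      have := ((hasDerivAt_id' t).sub h1).sub ((h1.pow 3).div_const 6)
      have e : (fun t : ℝ => t - Real.sin t - Real.sin t ^ 3 / 6)
          = ((fun x => x) - Real.sin - fun x => (Real.sin ^ 3) x / 6) := by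
        funext x; simp
      rw [e]; convert this using 1
    apply monotone_of_deriv_nonneg
    · exact fun t => (hd t).differentiableAt
    · intro t
      rw [(hd t).deriv]
      have h1 := Real.cos_le_one t
      have h2 := Real.neg_one_le_cos t
      have h3 := Real.sin_sq_add_cos_sq t
      nlinarith [sq_nonneg (1 - Real.cos t), sq_nonneg (Real.sin t)]
  have h0 := key hz
  simp only [Real.sin_zero] at h0
  norm_num at h0
  linarith

lemma arcsin_lb (y : ℝ) (hy0 : 0 ≤ y) (hy1 : y ≤ 1) :
    y + y ^ 3 / 6 ≤ Real.arcsin y := by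
  have hs : Real.sin (Real.arcsin y) = y := Real.sin_arcsin (by linarith) hy1
  have hnn : 0 ≤ Real.arcsin y := Real.arcsin_nonneg.2 hy0
  have := sin_cube_aux (Real.arcsin y) hnn
  rwa [hs] at this

lemma arccos_eq (x : ℝ) (hx0 : 0 < x) (hx1 : x < 1) :
    Real.arccos x = 2 * Real.arcsin (Real.sqrt ((1 - x) / 2)) := by
  set y := Real.sqrt ((1 - x) / 2) with hy
  have hynn : 0 ≤ y := Real.sqrt_nonneg _
  have hysq : y ^ 2 = (1 - x) / 2 := Real.sq_sqrt (by linarith)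
  have hy1 : y ≤ 1 := by nlinarith [sq_nonneg (y - 1)]
  have harcsin_nn : 0 ≤ Real.arcsin y := Real.arcsin_nonneg.2 hynn
  have harcsin_le : Real.arcsin y ≤ π / 2 := Real.arcsin_le_pi_div_two y
  have hcos : Real.cos (2 * Real.arcsin y) = x := by
    rw [Real.cos_two_mul, Real.cos_arcsin]
    rw [Real.sq_sqrt (by nlinarith)]
    nlinarith
  have h1 : Real.arccos x ∈ Set.Icc 0 π :=
    ⟨Real.arccos_nonneg x, Real.arccos_le_pi x⟩
  have h2 : 2 * Real.arcsin y ∈ Set.Icc 0 π := by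
    constructor <;> nlinarith
  exact Real.injOn_cos h1 h2 (by rw [Real.cos_arccos (by linarith) (le_of_lt hx1), hcos])

lemma arccos_lb (x : ℝ) (hx0 : 0 < x) (hx1 : x < 1) :
    Real.sqrt (2 * (1 - x)) * (1 + (1 - x) / 12) ≤ Real.arccos x := by
  set y := Real.sqrt ((1 - x) / 2) with hy
  have hynn : 0 ≤ y := Real.sqrt_nonneg _
  have hysq : y ^ 2 = (1 - x) / 2 := Real.sq_sqrt (by linarith)
  have hy1 : y ≤ 1 := by nlinarith [sq_nonneg (y - 1)]
  have heq : Real.arccos x = 2 * Real.arcsin y := arccos_eq x hx0 hx1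
  have hlb := arcsin_lb y hynn hy1
  have h2y : Real.sqrt (2 * (1 - x)) = 2 * y := by
    rw [hy, show 2 * (1 - x) = (2:ℝ)^2 * ((1 - x) / 2) by ring,
      Real.sqrt_mul (by positivity), Real.sqrt_sq (by norm_num)]
  rw [heq, h2y]
  have : 2 * y * (1 + (1 - x) / 12) = 2 * (y + y ^ 3 / 6) := by
    have : y ^ 3 = y * ((1 - x) / 2) := by
      rw [← hysq]; ring
    rw [this]; ring
  rw [this]
  linarith

theorem carlson_arccos_upper_necessary (b : ℝ)
    (h : ∀ x ∈ Set.Ioo (0 : ℝ) 1,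
      Real.arccos x < (2 : ℝ) ^ (b + 1 / 2) * (1 - x) ^ ((1 : ℝ) / 2) / (1 + x) ^ b) :
    b ≥ 1 / 6 := by
  by_contra hb
  push_neg at hb
  set x : ℝ := max (1/2) (12 * b - 1) with hxdef
  have hx0 : (0:ℝ) < x := lt_of_lt_of_le (by norm_num) (le_max_left _ _)
  have hx1 : x < 1 := by
    apply max_lt <;> [norm_num; linarith]
  have hxb : 12 * b - 1 ≤ x := le_max_right _ _
  have h1x : (0:ℝ) < 1 - x := by linarith
  have h1px : (0:ℝ) < 1 + x := by linarith
  have hineq := h x ⟨hx0, hx1⟩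
  -- rewrite RHS
  have hrw : (2 : ℝ) ^ (b + 1 / 2) * (1 - x) ^ ((1 : ℝ) / 2) / (1 + x) ^ b
      = Real.sqrt (2 * (1 - x)) * (2 / (1 + x)) ^ b := by
    rw [Real.rpow_add (by norm_num : (0:ℝ) < 2), Real.div_rpow (by norm_num) h1px.le,
      Real.sqrt_eq_rpow, Real.mul_rpow (by norm_num) h1x.le]
    field_simp
  rw [hrw] at hineq
  have hC := arccos_lb x hx0 hx1
  have hsqrt : 0 < Real.sqrt (2 * (1 - x)) := Real.sqrt_pos.2 (by linarith)
  have hkey : 1 + (1 - x) / 12 < (2 / (1 + x)) ^ b :=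
    (mul_lt_mul_iff_right₀ hsqrt).1 (lt_of_le_of_lt hC hineq)
  rcases le_or_gt b 0 with hb0 | hb0
  · have hle : (2 / (1 + x)) ^ b ≤ 1 :=
      Real.rpow_le_one_of_one_le_of_nonpos (by rw [le_div_iff₀ h1px]; linarith) hb0
    linarith
  · have hb1 : b ≤ 1 := by linarith
    have hs0 : (0:ℝ) ≤ (1 - x) / (1 + x) := by positivity
    have hBer := rpow_one_add_le_one_add_mul_self (s := (1 - x) / (1 + x))
      (by linarith) hb0.le hb1
    have heq2 : (1:ℝ) + (1 - x) / (1 + x) = 2 / (1 + x) := by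
      field_simp
      norm_num
    rw [heq2] at hBer
    have hk : (1 - x) / 12 < b * ((1 - x) / (1 + x)) := by linarith
    have e : b * ((1 - x) / (1 + x)) * (1 + x) = b * (1 - x) := by
      field_simp
    nlinarith [mul_lt_mul_of_pos_right hk h1px]
end

section
/- Let b be a real number with b ≤ 2/π − 1/2. Then for every x ∈ (0,1), the reversed double inequality 2^{b+1/2} · (1−x)^{1/2} / (1+x)^b < arccos(x) < (π/2) · (1−x)^{1/2} / (1+x)^b holds. -/
set_option maxHeartbeats 1000000

open Real Set Filter Topology

lemma nonneg_of_deriv (f f' : ℝ → ℝ) (hf0 : f 0 = 0)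
    (hd : ∀ x, HasDerivAt f (f' x) x) (h' : ∀ x, 0 < x → 0 ≤ f' x) :
    ∀ x, 0 ≤ x → 0 ≤ f x := by
  intro x hx
  have hmono : MonotoneOn f (Ici 0) := by
    apply monotoneOn_of_deriv_nonneg (convex_Ici 0)
      (fun y _ => (hd y).continuousAt.continuousWithinAt)
    · exact fun y _ => (hd y).differentiableAt.differentiableWithinAt
    · intro y hy
      rw [interior_Ici] at hy
      rw [(hd y).deriv]
      exact h' y hy
  have := hmono self_mem_Ici hx hx
  rwa [hf0] at this

lemma polyO_hasDerivAt (a b c d e : ℝ) (y : ℝ) :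
    HasDerivAt (fun x : ℝ => a*x + b*x^3 + c*x^5 + d*x^7 + e*x^9)
      (a + 3*b*y^2 + 5*c*y^4 + 7*d*y^6 + 9*e*y^8) y := by
  have h1 := (hasDerivAt_id y).const_mul a
  have h3 := (hasDerivAt_pow 3 y).const_mul b
  have h5 := (hasDerivAt_pow 5 y).const_mul c
  have h7 := (hasDerivAt_pow 7 y).const_mul d
  have h9 := (hasDerivAt_pow 9 y).const_mul e
  exact ((((h1.add h3).add h5).add h7).add h9).congr_deriv (by push_cast; ring)

lemma polyE_hasDerivAt (a b c d e : ℝ) (y : ℝ) :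
    HasDerivAt (fun x : ℝ => a + b*x^2 + c*x^4 + d*x^6 + e*x^8)
      (2*b*y + 4*c*y^3 + 6*d*y^5 + 8*e*y^7) y := by
  have h0 := hasDerivAt_const y a
  have h2 := (hasDerivAt_pow 2 y).const_mul b
  have h4 := (hasDerivAt_pow 4 y).const_mul c
  have h6 := (hasDerivAt_pow 6 y).const_mul d
  have h8 := (hasDerivAt_pow 8 y).const_mul e
  exact ((((h0.add h2).add h4).add h6).add h8).congr_deriv (by push_cast; ring)

lemma my_sin_ge3 (x : ℝ) (hx : 0 ≤ x) : x - x^3/6 ≤ sin x := by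
  have := nonneg_of_deriv (fun x => sin x - ((1:ℝ)*x + (-1/6)*x^3 + 0*x^5 + 0*x^7 + 0*x^9))
    (fun x => cos x - ((1:ℝ) + (-1/2)*x^2 + 0*x^4 + 0*x^6 + 0*x^8))
    (by norm_num)
    (fun y => by
      exact ((Real.hasDerivAt_sin y).sub (polyO_hasDerivAt 1 (-1/6) 0 0 0 y)).congr_deriv (by ring))
    (fun y hy => by nlinarith [Real.one_sub_sq_div_two_le_cos (x := y)])
    x hx
  nlinarith [this]

lemma my_cos_le4 (x : ℝ) (hx : 0 ≤ x) : cos x ≤ 1 - x^2/2 + x^4/24 := by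
  have := nonneg_of_deriv
    (fun x => ((1:ℝ) + (-1/2)*x^2 + (1/24)*x^4 + 0*x^6 + 0*x^8) - cos x)
    (fun x => sin x - ((1:ℝ)*x + (-1/6)*x^3 + 0*x^5 + 0*x^7 + 0*x^9))
    (by norm_num)
    (fun y => by
      exact ((polyE_hasDerivAt 1 (-1/2) (1/24) 0 0 y).sub (Real.hasDerivAt_cos y)).congr_deriv (by ring))
    (fun y hy => by nlinarith [my_sin_ge3 y hy.le])
    x hx
  nlinarith [this]

lemma my_sin_le5 (x : ℝ) (hx : 0 ≤ x) : sin x ≤ x - x^3/6 + x^5/120 := by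
  have := nonneg_of_deriv
    (fun x => ((1:ℝ)*x + (-1/6)*x^3 + (1/120)*x^5 + 0*x^7 + 0*x^9) - sin x)
    (fun x => ((1:ℝ) + (-1/2)*x^2 + (1/24)*x^4 + 0*x^6 + 0*x^8) - cos x)
    (by norm_num)
    (fun y => by
      exact ((polyO_hasDerivAt 1 (-1/6) (1/120) 0 0 y).sub (Real.hasDerivAt_sin y)).congr_deriv (by ring))
    (fun y hy => by nlinarith [my_cos_le4 y hy.le])
    x hx
  nlinarith [this]

lemma my_cos_ge6 (x : ℝ) (hx : 0 ≤ x) : 1 - x^2/2 + x^4/24 - x^6/720 ≤ cos x := by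
  have := nonneg_of_deriv
    (fun x => cos x - ((1:ℝ) + (-1/2)*x^2 + (1/24)*x^4 + (-1/720)*x^6 + 0*x^8))
    (fun x => ((1:ℝ)*x + (-1/6)*x^3 + (1/120)*x^5 + 0*x^7 + 0*x^9) - sin x)
    (by norm_num)
    (fun y => by
      exact ((Real.hasDerivAt_cos y).sub (polyE_hasDerivAt 1 (-1/2) (1/24) (-1/720) 0 y)).congr_deriv (by ring))
    (fun y hy => by nlinarith [my_sin_le5 y hy.le])
    x hx
  nlinarith [this]

lemma my_sin_ge7 (x : ℝ) (hx : 0 ≤ x) : x - x^3/6 + x^5/120 - x^7/5040 ≤ sin x := by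
  have := nonneg_of_deriv
    (fun x => sin x - ((1:ℝ)*x + (-1/6)*x^3 + (1/120)*x^5 + (-1/5040)*x^7 + 0*x^9))
    (fun x => cos x - ((1:ℝ) + (-1/2)*x^2 + (1/24)*x^4 + (-1/720)*x^6 + 0*x^8))
    (by norm_num)
    (fun y => by
      exact ((Real.hasDerivAt_sin y).sub (polyO_hasDerivAt 1 (-1/6) (1/120) (-1/5040) 0 y)).congr_deriv (by ring))
    (fun y hy => by nlinarith [my_cos_ge6 y hy.le])
    x hx
  nlinarith [this]

lemma my_cos_le8 (x : ℝ) (hx : 0 ≤ x) : cos x ≤ 1 - x^2/2 + x^4/24 - x^6/720 + x^8/40320 := by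
  have := nonneg_of_deriv
    (fun x => ((1:ℝ) + (-1/2)*x^2 + (1/24)*x^4 + (-1/720)*x^6 + (1/40320)*x^8) - cos x)
    (fun x => sin x - ((1:ℝ)*x + (-1/6)*x^3 + (1/120)*x^5 + (-1/5040)*x^7 + 0*x^9))
    (by norm_num)
    (fun y => by
      exact ((polyE_hasDerivAt 1 (-1/2) (1/24) (-1/720) (1/40320) y).sub (Real.hasDerivAt_cos y)).congr_deriv (by ring))
    (fun y hy => by nlinarith [my_sin_ge7 y hy.le])
    x hx
  nlinarith [this]

lemma my_sin_le9 (x : ℝ) (hx : 0 ≤ x) : sin x ≤ x - x^3/6 + x^5/120 - x^7/5040 + x^9/362880 := by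
  have := nonneg_of_deriv
    (fun x => ((1:ℝ)*x + (-1/6)*x^3 + (1/120)*x^5 + (-1/5040)*x^7 + (1/362880)*x^9) - sin x)
    (fun x => ((1:ℝ) + (-1/2)*x^2 + (1/24)*x^4 + (-1/720)*x^6 + (1/40320)*x^8) - cos x)
    (by norm_num)
    (fun y => by
      exact ((polyO_hasDerivAt 1 (-1/6) (1/120) (-1/5040) (1/362880) y).sub (Real.hasDerivAt_sin y)).congr_deriv (by ring))
    (fun y hy => by nlinarith [my_cos_le8 y hy.le])
    x hx
  nlinarith [this]

lemma sin14_ge : (0.9853 : ℝ) ≤ sin 1.4 := by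
  have := my_sin_ge7 1.4 (by norm_num)
  norm_num at this ⊢; linarith

lemma sin14_le : sin 1.4 ≤ 0.98546 := by
  have := my_sin_le9 1.4 (by norm_num)
  norm_num at this ⊢; linarith

lemma cos14_le : cos (1.4:ℝ) ≤ 0.17 := by
  have := my_cos_le8 1.4 (by norm_num)
  norm_num at this ⊢; linarith

lemma D_pos (s : ℝ) (h0 : 0 < s) (h2 : s < π/2) :
    s * (2 + (π-2) * cos s) < π * sin s := by
  have pi_gt : (3.141592:ℝ) < π := Real.pi_gt_d6
  have pi_lt : π < 3.141593 := Real.pi_lt_d6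
  rcases le_or_gt s 1.4 with hA | hB
  · -- Taylor region
    have hsin := my_sin_ge7 s h0.le
    have hcos := my_cos_le8 s h0.le
    have h1 : π * (s - s^3/6 + s^5/120 - s^7/5040) ≤ π * sin s :=
      mul_le_mul_of_nonneg_left hsin Real.pi_pos.le
    have h2' : s * (2 + (π-2)*cos s) ≤
        s * (2 + (π-2)*(1 - s^2/2 + s^4/24 - s^6/720 + s^8/40320)) := by
      have : (π-2)*cos s ≤ (π-2)*(1 - s^2/2 + s^4/24 - s^6/720 + s^8/40320) :=
        mul_le_mul_of_nonneg_left hcos (by linarith)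
      nlinarith
    have hs2 : s^2 ≤ 1.96 := by nlinarith
    have hs6 : s^6 ≤ 7.529536 := by nlinarith [sq_nonneg s, sq_nonneg (s^2), mul_nonneg (sq_nonneg s) (sq_nonneg s)]
    have b1 : (4*π-10)/120 * s^2 ≤ (4*3.141593-10)/120 * 1.96 := by
      nlinarith [sq_nonneg s]
    have b3 : (π-2)/40320 * s^6 ≤ (3.141593-2)/40320 * 7.529536 := by
      nlinarith [pow_nonneg h0.le 6]
    have b2 : 0 ≤ (6*π-14)/5040 * s^4 := by
      have : (0:ℝ) ≤ s^4 := pow_nonneg h0.le 4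
      nlinarith
    have hbr : 0 < (π/3-1) - (4*π-10)/120 * s^2 + (6*π-14)/5040 * s^4 - (π-2)/40320 * s^6 := by
      linarith
    have e : π * (s - s^3/6 + s^5/120 - s^7/5040)
        - s * (2 + (π-2)*(1 - s^2/2 + s^4/24 - s^6/720 + s^8/40320))
        = s^3 * ((π/3-1) - (4*π-10)/120 * s^2 + (6*π-14)/5040 * s^4 - (π-2)/40320 * s^6) := by
      ring
    have key : 0 < π * (s - s^3/6 + s^5/120 - s^7/5040)
        - s * (2 + (π-2)*(1 - s^2/2 + s^4/24 - s^6/720 + s^8/40320)) := by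
      rw [e]; exact mul_pos (pow_pos h0 3) hbr
    linarith
  · -- monotonicity region [1.4, π/2]
    set D : ℝ → ℝ := fun t => π * sin t - t * (2 + (π-2) * cos t) with hD
    set D' : ℝ → ℝ := fun t => 2 * cos t - 2 + (π-2) * (t * sin t) with hD'
    have hdD : ∀ t, HasDerivAt D (D' t) t := by
      intro t
      have h1 := (Real.hasDerivAt_sin t).const_mul π
      have hc : HasDerivAt (fun u : ℝ => 2 + (π-2) * cos u) ((π-2) * -sin t) t := by
        exact ((hasDerivAt_const t (2:ℝ)).add ((Real.hasDerivAt_cos t).const_mul (π-2))).congr_deriv (by simp)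
      have h2 := (hasDerivAt_id t).mul hc
      exact (h1.sub h2).congr_deriv (by simp only [hD', id_eq]; ring)
    have hdD' : ∀ t, HasDerivAt D' ((π-4) * sin t + (π-2) * (t * cos t)) t := by
      intro t
      have h1 := (Real.hasDerivAt_cos t).const_mul 2
      have h2 := ((hasDerivAt_id t).mul (Real.hasDerivAt_sin t)).const_mul (π-2)
      exact ((h1.sub (hasDerivAt_const t (2:ℝ))).add h2).congr_deriv (by simp only [id_eq]; ring)
    have hD'anti : StrictAntiOn D' (Icc 1.4 (π/2)) := by
      apply strictAntiOn_of_deriv_neg (convex_Icc _ _)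
        (fun t _ => (hdD' t).continuousAt.continuousWithinAt)
      intro t ht
      rw [interior_Icc] at ht
      obtain ⟨ht1, ht2⟩ := ht
      rw [(hdD' t).deriv]
      have hm14 : (1.4:ℝ) ∈ Icc (-(π/2)) (π/2) := ⟨by linarith, by linarith⟩
      have hmt : t ∈ Icc (-(π/2)) (π/2) := ⟨by linarith, ht2.le⟩
      have hsint : (0.9853:ℝ) ≤ sin t :=
        le_trans sin14_ge (Real.strictMonoOn_sin.monotoneOn hm14 hmt ht1.le)
      have hcost : cos t ≤ 0.17 := by
        refine le_trans ?_ cos14_le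
        exact Real.strictAntiOn_cos.antitoneOn ⟨by norm_num, by linarith⟩
          ⟨by linarith, by linarith⟩ ht1.le
      have hcost0 : 0 ≤ cos t := Real.cos_nonneg_of_mem_Icc ⟨by linarith, ht2.le⟩
      have hsint1 : sin t ≤ 1 := Real.sin_le_one t
      have htc : t * cos t ≤ (π/2) * 0.17 :=
        mul_le_mul ht2.le hcost hcost0 (by linarith)
      nlinarith [mul_le_mul_of_nonpos_left hsint (by linarith : π - 4 ≤ 0)]
    have hD'14 : D' 1.4 < 0 := by
      have h1 := sin14_le
      have h2 := cos14_le
      have hs0 : (0:ℝ) ≤ sin 1.4 :=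
        Real.sin_nonneg_of_nonneg_of_le_pi (by norm_num) (by linarith)
      simp only [hD']
      have hp : (π-2) * (1.4*sin 1.4) ≤ 1.141593 * (1.4*0.98546) :=
        mul_le_mul (by linarith) (by nlinarith) (by nlinarith) (by norm_num)
      nlinarith
    have hD'neg : ∀ t ∈ Ico (1.4:ℝ) (π/2), D' t < 0 := by
      intro t ht
      rcases eq_or_lt_of_le ht.1 with h | h
      · rwa [← h]
      · exact lt_trans (hD'anti ⟨le_refl _, by linarith⟩ ⟨ht.1, ht.2.le⟩ h) hD'14
    have hDanti : StrictAntiOn D (Icc 1.4 (π/2)) := by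
      apply strictAntiOn_of_deriv_neg (convex_Icc _ _)
        (fun t _ => (hdD t).continuousAt.continuousWithinAt)
      intro t ht
      rw [interior_Icc] at ht
      rw [(hdD t).deriv]
      exact hD'neg t ⟨ht.1.le, ht.2⟩
    have hDend : D (π/2) = 0 := by
      simp [hD, Real.sin_pi_div_two, Real.cos_pi_div_two]
    have hfin := hDanti ⟨hB.le, h2.le⟩ ⟨by linarith, le_refl _⟩ h2
    rw [hDend] at hfin
    simp only [hD] at hfin
    linarith

lemma upper_core (θ : ℝ) (h0 : 0 < θ) (h2 : θ < π/2) :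
    θ * (1 + cos θ) ^ ((2:ℝ)/π) < π/2 * sin θ := by
  have pipos := Real.pi_pos
  set Φ : ℝ → ℝ := fun t => Real.log (π/2) + Real.log (sin t) - 2/π * Real.log (1 + cos t)
    - Real.log t with hΦ
  have hsin : ∀ t : ℝ, 0 < t → t ≤ π/2 → 0 < sin t := fun t h1 h2 =>
    Real.sin_pos_of_pos_of_lt_pi h1 (by linarith)
  have hcos : ∀ t : ℝ, 0 < t → t ≤ π/2 → 0 < 1 + cos t := fun t h1 h2 => by
    have := Real.cos_nonneg_of_mem_Icc (x := t) ⟨by linarith, h2⟩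
    linarith
  -- derivative
  have hderiv : ∀ t : ℝ, 0 < t → t ≤ π/2 →
      HasDerivAt Φ (cos t / sin t - 2/π * (-sin t / (1 + cos t)) - 1/t) t := by
    intro t h1 h2'
    have hs := hsin t h1 h2'
    have hc := hcos t h1 h2'
    have d1 : HasDerivAt (fun u : ℝ => Real.log (sin u)) (cos t / sin t) t :=
      (Real.hasDerivAt_sin t).log hs.ne'
    have d2 : HasDerivAt (fun u : ℝ => Real.log (1 + cos u)) (-sin t / (1 + cos t)) t := by
      have : HasDerivAt (fun u : ℝ => 1 + cos u) (-sin t) t := by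
        exact ((hasDerivAt_const t (1:ℝ)).add (Real.hasDerivAt_cos t)).congr_deriv (by simp)
      exact this.log hc.ne'
    have d3 : HasDerivAt Real.log (1/t) t := by
      simpa [one_div] using Real.hasDerivAt_log h1.ne'
    have := (((hasDerivAt_const t (Real.log (π/2))).add d1).sub (d2.const_mul (2/π))).sub d3
    exact this.congr_deriv (by ring)
  -- derivative negative
  have hderivneg : ∀ t : ℝ, 0 < t → t < π/2 →
      cos t / sin t - 2/π * (-sin t / (1 + cos t)) - 1/t < 0 := by
    intro t h1 h2'
    have hs := hsin t h1 h2'.le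
    have hc := hcos t h1 h2'.le
    have key := D_pos t h1 h2'
    have hM : 0 < π * t * sin t * (1 + cos t) := by positivity
    have hpyth := Real.sin_sq_add_cos_sq t
    have hmul : (cos t / sin t - 2/π * (-sin t / (1 + cos t)) - 1/t) * (π * t * sin t * (1 + cos t))
        = t * (1 + cos t) * (2 + (π-2) * cos t) - π * sin t * (1 + cos t) := by
      field_simp
      linear_combination (2 * t) * hpyth
    have hneg : (cos t / sin t - 2/π * (-sin t / (1 + cos t)) - 1/t) * (π * t * sin t * (1 + cos t))
        < 0 * (π * t * sin t * (1 + cos t)) := by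
      rw [hmul, zero_mul]
      nlinarith [mul_pos hc (show (0:ℝ) < π * sin t - t * (2 + (π-2) * cos t) by linarith)]
    exact lt_of_mul_lt_mul_right hneg hM.le
  have hanti : StrictAntiOn Φ (Ioc 0 (π/2)) := by
    apply strictAntiOn_of_deriv_neg (convex_Ioc _ _)
    · exact fun t ht => (hderiv t ht.1 ht.2).continuousAt.continuousWithinAt
    · intro t ht
      rw [interior_Ioc] at ht
      rw [(hderiv t ht.1 ht.2.le).deriv]
      exact hderivneg t ht.1 ht.2
  have hend : Φ (π/2) = 0 := by
    simp [hΦ, Real.sin_pi_div_two, Real.cos_pi_div_two]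
  have hθmem : θ ∈ Ioc 0 (π/2) := ⟨h0, h2.le⟩
  have hΦpos : 0 < Φ θ := by
    have := hanti hθmem ⟨by linarith, le_refl _⟩ h2
    rwa [hend] at this
  -- exponentiate
  have hsθ := hsin θ h0 h2.le
  have hcθ := hcos θ h0 h2.le
  have hlog : Real.log (θ * (1 + cos θ) ^ ((2:ℝ)/π)) < Real.log (π/2 * sin θ) := by
    rw [Real.log_mul h0.ne' (by positivity), Real.log_mul (by positivity) hsθ.ne',
      Real.log_rpow hcθ]
    simp only [hΦ] at hΦpos
    linarith
  have hL : 0 < θ * (1 + cos θ) ^ ((2:ℝ)/π) := by positivity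
  exact (Real.log_lt_log_iff hL (by positivity)).mp hlog

lemma lower_core (u : ℝ) (h0 : 0 < u) (h4 : u < π/4) :
    sin u < u * cos u ^ ((4:ℝ)/π - 1) := by
  have pipos := Real.pi_pos
  have pigt : (3.141592:ℝ) < π := Real.pi_gt_d6
  set H : ℝ → ℝ := fun t => Real.log t + (4/π - 1) * Real.log (cos t) - Real.log (sin t)
    with hH
  have hsin : ∀ t : ℝ, 0 < t → t < π/2 → 0 < sin t := fun t h1 h2 =>
    Real.sin_pos_of_pos_of_lt_pi h1 (by linarith)
  have hcos : ∀ t : ℝ, 0 < t → t < π/2 → 0 < cos t := fun t h1 h2 =>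
    Real.cos_pos_of_mem_Ioo ⟨by linarith, h2⟩
  have hderiv : ∀ t : ℝ, 0 < t → t < π/2 →
      HasDerivAt H (1/t + (4/π - 1) * (-sin t / cos t) - cos t / sin t) t := by
    intro t h1 h2
    have hs := hsin t h1 h2
    have hc := hcos t h1 h2
    have d1 : HasDerivAt Real.log (1/t) t := by
      simpa [one_div] using Real.hasDerivAt_log h1.ne'
    have d2 : HasDerivAt (fun v : ℝ => Real.log (cos v)) (-sin t / cos t) t :=
      (Real.hasDerivAt_cos t).log hc.ne'
    have d3 : HasDerivAt (fun v : ℝ => Real.log (sin v)) (cos t / sin t) t :=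
      (Real.hasDerivAt_sin t).log hs.ne'
    exact (d1.add (d2.const_mul (4/π - 1))).sub d3
  have hderivpos : ∀ t : ℝ, 0 < t → t < π/4 →
      0 < 1/t + (4/π - 1) * (-sin t / cos t) - cos t / sin t := by
    intro t h1 h2
    have h2' : t < π/2 := by linarith
    have hs := hsin t h1 h2'
    have hc := hcos t h1 h2'
    have key := D_pos (2*t) (by linarith) (by linarith)
    rw [Real.sin_two_mul, Real.cos_two_mul] at key
    have hpyth := Real.sin_sq_add_cos_sq t
    have hM : 0 < π * t * sin t * cos t := by positivity
    have hmul : (1/t + (4/π - 1) * (-sin t / cos t) - cos t / sin t) * (π * t * sin t * cos t)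
        = π * (sin t * cos t) - (4 - π) * t * sin t^2 - π * t * cos t^2 := by
      field_simp
      ring
    have hpos : 0 * (π * t * sin t * cos t)
        < (1/t + (4/π - 1) * (-sin t / cos t) - cos t / sin t) * (π * t * sin t * cos t) := by
      rw [hmul, zero_mul]
      have ht : t * sin t ^ 2 + t * cos t ^ 2 = t := by linear_combination t * hpyth
      nlinarith [key, ht]
    exact lt_of_mul_lt_mul_right hpos hM.le
  have hmono : StrictMonoOn H (Ioo 0 (π/4)) := by
    apply strictMonoOn_of_deriv_pos (convex_Ioo _ _)
    · exact fun t ht => (hderiv t ht.1 (by linarith [ht.2])).continuousAt.continuousWithinAt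
    · intro t ht
      rw [interior_Ioo] at ht
      rw [(hderiv t ht.1 (by linarith [ht.2])).deriv]
      exact hderivpos t ht.1 ht.2
  -- limit of H at 0+
  have hslope : Tendsto (fun v : ℝ => sin v / v) (𝓝[>] 0) (𝓝 1) := by
    have h := hasDerivAt_iff_tendsto_slope.mp (Real.hasDerivAt_sin 0)
    rw [Real.cos_zero] at h
    have h' := h.mono_left (nhdsWithin_mono 0 (fun v hv => ne_of_gt hv))
    apply h'.congr
    intro v
    simp [slope_def_field]
  have hev : ∀ᶠ v in 𝓝[>] (0:ℝ), (4/π - 1) * Real.log (cos v) - Real.log (sin v / v) = H v := by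
    filter_upwards [Ioo_mem_nhdsGT_of_mem (by constructor <;> norm_num : (0:ℝ) ∈ Ico 0 1)]
      with v hv
    have hsv : 0 < sin v := hsin v hv.1 (by linarith [hv.2])
    simp only [hH]
    rw [Real.log_div hsv.ne' hv.1.ne']
    ring
  have hlim : Tendsto H (𝓝[>] (0:ℝ)) (𝓝 0) := by
    have t1 : Tendsto (fun v : ℝ => Real.log (cos v)) (𝓝 0) (𝓝 0) := by
      have hcont : ContinuousAt (fun v : ℝ => Real.log (cos v)) 0 :=
        (Real.continuousAt_log (by simp)).comp Real.continuous_cos.continuousAt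
      simpa using hcont.tendsto
    have t2 : Tendsto (fun v : ℝ => Real.log (sin v / v)) (𝓝[>] 0) (𝓝 0) := by
      have := (Real.continuousAt_log one_ne_zero).tendsto.comp hslope
      simpa [Function.comp_def] using this
    have := ((t1.mono_left nhdsWithin_le_nhds).const_mul (4/π - 1)).sub t2
    simp only [mul_zero, sub_zero] at this
    exact this.congr' hev
  have hnn : ∀ w : ℝ, 0 < w → w < π/4 → 0 ≤ H w := by
    intro w hw1 hw2
    apply le_of_tendsto hlim
    filter_upwards [Ioo_mem_nhdsGT_of_mem (by constructor <;> linarith : (0:ℝ) ∈ Ico 0 w)]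
      with v hv
    exact (hmono ⟨hv.1, by linarith [hv.2]⟩ ⟨hw1, hw2⟩ hv.2).le
  have hHpos : 0 < H u := by
    have h1 := hnn (u/2) (by linarith) (by linarith)
    have h2 := hmono (⟨by linarith, by linarith⟩ : u/2 ∈ Ioo 0 (π/4)) ⟨h0, h4⟩ (by linarith)
    exact lt_of_le_of_lt h1 h2
  -- exponentiate
  have hs := hsin u h0 (by linarith)
  have hc := hcos u h0 (by linarith)
  have hlog : Real.log (sin u) < Real.log (u * cos u ^ ((4:ℝ)/π - 1)) := by
    rw [Real.log_mul h0.ne' (by positivity), Real.log_rpow hc]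
    simp only [hH] at hHpos
    linarith
  exact (Real.log_lt_log_iff hs (by positivity)).mp hlog

theorem carlson_arccos_reversed_double_ineq (b : ℝ) (hb : b ≤ 2 / Real.pi - 1 / 2) :
    ∀ x ∈ Set.Ioo (0 : ℝ) 1,
      (2 : ℝ) ^ (b + 1 / 2) * (1 - x) ^ ((1 : ℝ) / 2) / (1 + x) ^ b < Real.arccos x ∧
      Real.arccos x < Real.pi / 2 * (1 - x) ^ ((1 : ℝ) / 2) / (1 + x) ^ b := by
  intro x hx
  obtain ⟨hx1, hx2⟩ := hx
  have pipos := Real.pi_pos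
  have h1m : (0:ℝ) < 1 - x := by linarith
  have h1p : (0:ℝ) < 1 + x := by linarith
  set θ := Real.arccos x with hθdef
  have hθ1 : 0 < θ := Real.arccos_pos.2 hx2
  have hθ2 : θ < π/2 := Real.arccos_lt_pi_div_two.2 hx1
  have hcosθ : cos θ = x := Real.cos_arccos (by linarith) hx2.le
  constructor
  · -- LOWER BOUND
    set u := θ/2 with hudef
    have hu1 : 0 < u := by positivity
    have hu4 : u < π/4 := by rw [hudef]; linarith
    have hsinu : 0 < sin u := Real.sin_pos_of_pos_of_lt_pi hu1 (by linarith)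
    have hcosu : 0 < cos u := Real.cos_pos_of_mem_Ioo ⟨by linarith, by linarith⟩
    have hx2u : x = 2 * cos u ^ 2 - 1 := by
      rw [← hcosθ, show θ = 2*u by rw [hudef]; ring, Real.cos_two_mul]
    have hm : 1 - x = 2 * sin u ^ 2 := by
      have := Real.sin_sq_add_cos_sq u
      rw [hx2u]; nlinarith
    have hp : 1 + x = 2 * cos u ^ 2 := by rw [hx2u]; ring
    have hcore := lower_core u hu1 hu4
    have hcpow : (0:ℝ) < cos u ^ ((4:ℝ)/π - 1) := Real.rpow_pos_of_pos hcosu _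
    -- step L2 : value at b₀
    have e1 : ((1:ℝ)-x) ^ ((1:ℝ)/2) = 2 ^ ((1:ℝ)/2) * sin u := by
      rw [hm, Real.mul_rpow (by norm_num) (sq_nonneg _)]
      congr 1
      rw [← Real.sqrt_eq_rpow, Real.sqrt_sq hsinu.le]
    have e2 : ((1:ℝ)+x) ^ ((2:ℝ)/π - 1/2) = 2 ^ ((2:ℝ)/π - 1/2) * cos u ^ ((4:ℝ)/π - 1) := by
      rw [hp, Real.mul_rpow (by norm_num) (sq_nonneg _)]
      congr 1
      rw [← Real.rpow_natCast (cos u) 2, ← Real.rpow_mul hcosu.le]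
      congr 1
      push_cast; ring
    have hhalf : (2:ℝ) ^ ((1:ℝ)/2) * 2 ^ ((1:ℝ)/2) = 2 := by
      rw [← Real.rpow_add two_pos]; norm_num
    have h2split : (2:ℝ) ^ ((2:ℝ)/π) = 2 ^ ((2:ℝ)/π - 1/2) * 2 ^ ((1:ℝ)/2) := by
      rw [← Real.rpow_add two_pos]; congr 1; ring
    have hL2 : (2:ℝ) ^ ((2:ℝ)/π) * (1-x) ^ ((1:ℝ)/2) / (1+x) ^ ((2:ℝ)/π - 1/2) < θ := by
      rw [e1, e2, h2split]
      have hpow2 : (0:ℝ) < 2 ^ ((2:ℝ)/π - 1/2) := Real.rpow_pos_of_pos two_pos _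
      rw [div_lt_iff₀ (by positivity)]
      have key : 2 * sin u < 2 * (u * cos u ^ ((4:ℝ)/π - 1)) := by linarith
      have hθu : θ = 2*u := by rw [hudef]; ring
      calc 2 ^ ((2:ℝ)/π - 1/2) * 2 ^ ((1:ℝ)/2) * (2 ^ ((1:ℝ)/2) * sin u)
          = 2 ^ ((2:ℝ)/π - 1/2) * (2 ^ ((1:ℝ)/2) * 2 ^ ((1:ℝ)/2)) * sin u := by ring
        _ = 2 ^ ((2:ℝ)/π - 1/2) * 2 * sin u := by rw [hhalf]
        _ < 2 ^ ((2:ℝ)/π - 1/2) * 2 * (u * cos u ^ ((4:ℝ)/π - 1)) := by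
            have := mul_lt_mul_of_pos_left key hpow2
            calc 2 ^ ((2:ℝ)/π - 1/2) * 2 * sin u
                = 2 ^ ((2:ℝ)/π - 1/2) * (2 * sin u) := by ring
              _ < 2 ^ ((2:ℝ)/π - 1/2) * (2 * (u * cos u ^ ((4:ℝ)/π - 1))) := this
              _ = 2 ^ ((2:ℝ)/π - 1/2) * 2 * (u * cos u ^ ((4:ℝ)/π - 1)) := by ring
        _ = θ * (2 ^ ((2:ℝ)/π - 1/2) * cos u ^ ((4:ℝ)/π - 1)) := by rw [hθu]; ring
    -- step L1 : monotonicity in b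
    have hbase : (1:ℝ) ≤ 2/(1+x) := by
      rw [le_div_iff₀ h1p]; linarith
    have hform : ∀ c : ℝ, (2:ℝ) ^ (c + 1/2) * (1-x) ^ ((1:ℝ)/2) / (1+x) ^ c
        = (1-x) ^ ((1:ℝ)/2) * 2 ^ ((1:ℝ)/2) * (2/(1+x)) ^ c := by
      intro c
      rw [Real.rpow_add two_pos, Real.div_rpow (by norm_num) h1p.le]
      have hne : ((1:ℝ)+x) ^ c ≠ 0 := (Real.rpow_pos_of_pos h1p c).ne'
      field_simp
    have hL1 : (2:ℝ) ^ (b + 1/2) * (1-x) ^ ((1:ℝ)/2) / (1+x) ^ b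
        ≤ (2:ℝ) ^ ((2/π - 1/2) + 1/2) * (1-x) ^ ((1:ℝ)/2) / (1+x) ^ ((2:ℝ)/π - 1/2) := by
      rw [hform b, hform (2/π - 1/2)]
      apply mul_le_mul_of_nonneg_left (Real.rpow_le_rpow_of_exponent_le hbase hb)
      positivity
    have hexp : (2/π - 1/2) + 1/2 = (2:ℝ)/π := by ring
    rw [hexp] at hL1
    calc (2:ℝ) ^ (b + 1/2) * (1-x) ^ ((1:ℝ)/2) / (1+x) ^ b
        ≤ (2:ℝ) ^ ((2:ℝ)/π) * (1-x) ^ ((1:ℝ)/2) / (1+x) ^ ((2:ℝ)/π - 1/2) := hL1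
      _ < θ := hL2
  · -- UPPER BOUND
    have hcore := upper_core θ hθ1 hθ2
    rw [hcosθ] at hcore
    have hsinθ : sin θ = (1-x) ^ ((1:ℝ)/2) * (1+x) ^ ((1:ℝ)/2) := by
      rw [Real.sin_arccos, ← Real.mul_rpow h1m.le h1p.le,
        show (1-x)*(1+x) = 1 - x^2 by ring, Real.sqrt_eq_rpow]
    rw [hsinθ] at hcore
    have hU3 : θ < π/2 * (1-x) ^ ((1:ℝ)/2) / (1+x) ^ ((2:ℝ)/π - 1/2) := by
      rw [Real.rpow_sub h1p, div_div_eq_mul_div, lt_div_iff₀ (Real.rpow_pos_of_pos h1p _)]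
      calc θ * ((1+x) ^ ((2:ℝ)/π))
          < π/2 * ((1-x) ^ ((1:ℝ)/2) * (1+x) ^ ((1:ℝ)/2)) := hcore
        _ = π/2 * (1-x) ^ ((1:ℝ)/2) * (1+x) ^ ((1:ℝ)/2) := by ring
    have hU2 : π/2 * (1-x) ^ ((1:ℝ)/2) / (1+x) ^ ((2:ℝ)/π - 1/2)
        ≤ π/2 * (1-x) ^ ((1:ℝ)/2) / (1+x) ^ b := by
      apply div_le_div_of_nonneg_left (by positivity) (Real.rpow_pos_of_pos h1p _)
      exact Real.rpow_le_rpow_of_exponent_le (by linarith) hb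
    exact hU3.trans_le hU2
end

section
/- Let b be a real number. If the inequality arccos(x) < (π/2) · (1−x)^{1/2} / (1+x)^b holds for every x ∈ (0,1), then b ≤ 2/π − 1/2. (Together with the sufficiency, this inequality holds on (0,1) if and only if b ≤ 2/π − 1/2.) -/
open Real Set

theorem carlson_arccos_reversed_lower_necessary (b : ℝ)
    (h : ∀ x ∈ Set.Ioo (0 : ℝ) 1,
      Real.arccos x < Real.pi / 2 * (1 - x) ^ ((1 : ℝ) / 2) / (1 + x) ^ b) :
    b ≤ 2 / Real.pi - 1 / 2 := by
  by_contra hb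
  push_neg at hb
  set f : ℝ → ℝ := fun x => Real.arccos x * (1 + x) ^ b -
    Real.pi / 2 * (1 - x) ^ ((1 : ℝ) / 2) with hf
  -- derivative of f at 0
  have harc : HasDerivAt Real.arccos (-1 : ℝ) 0 := by
    have := Real.hasDerivAt_arccos (x := 0) (by norm_num) (by norm_num)
    simpa using this
  have hpow1 : HasDerivAt (fun x : ℝ => (1 + x) ^ b) b 0 := by
    have hbase : HasDerivAt (fun x : ℝ => 1 + x) 1 0 := by
      simpa using (hasDerivAt_id (0:ℝ)).const_add 1
    have := hbase.rpow_const (p := b) (by norm_num)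
    simpa using this
  have hpow2 : HasDerivAt (fun x : ℝ => (1 - x) ^ ((1:ℝ)/2)) (-(1/2)) 0 := by
    have hbase : HasDerivAt (fun x : ℝ => 1 - x) (-1) 0 := by
      simpa using (hasDerivAt_id (0:ℝ)).const_sub 1
    have := hbase.rpow_const (p := (1:ℝ)/2) (by norm_num)
    simpa using this
    
  have hderiv : HasDerivAt f (b * Real.pi / 2 + Real.pi / 4 - 1) 0 := by
    have h1 := (harc.mul hpow1).sub ((hpow2.const_mul (Real.pi / 2)))
    refine h1.congr_deriv ?_
    simp [Real.arccos_zero]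
    ring
  have hpi : (0:ℝ) < Real.pi := Real.pi_pos
  have hpos : 0 < b * Real.pi / 2 + Real.pi / 4 - 1 := by
    have : (2 / Real.pi - 1 / 2) * Real.pi / 2 + Real.pi / 4 - 1 = 0 := by
      field_simp
      ring
    nlinarith [mul_lt_mul_of_pos_right hb (by positivity : (0:ℝ) < Real.pi / 2)]
  have hslope := hasDerivAt_iff_tendsto_slope.mp hderiv
  have hev : ∀ᶠ x in nhdsWithin (0:ℝ) (Set.Ioi 0), 0 < slope f 0 x := by
    have h1 : ∀ᶠ y in nhds (b * Real.pi / 2 + Real.pi / 4 - 1), 0 < y :=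
      eventually_gt_nhds hpos
    have h2 := hslope.eventually h1
    exact nhdsWithin_mono (0:ℝ) (fun x hx => Set.mem_compl_singleton_iff.mpr
      (ne_of_gt hx)) h2
  have hev2 : ∀ᶠ x in nhdsWithin (0:ℝ) (Set.Ioi 0), x < 1 := by
    apply eventually_nhdsWithin_of_eventually_nhds
    exact Filter.Tendsto.eventually_lt_const one_pos (by exact Filter.tendsto_id) |>.mono
      (fun x hx => hx)
  obtain ⟨x, ⟨hx1, hx2⟩, hx3⟩ := ((hev.and hev2).and self_mem_nhdsWithin).exists
  -- hx1 : 0 < slope f 0 x, hx2 : x < 1, hx3 : x ∈ Ioi 0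
  have hx0 : (0:ℝ) < x := hx3
  have hf0 : f 0 = 0 := by simp [hf, Real.arccos_zero]
  have hslope_eq : slope f 0 x = f x / x := by
    simp [slope, hf0, div_eq_inv_mul]
  have hfx : 0 < f x := by
    rw [hslope_eq] at hx1
    exact (div_pos_iff.mp hx1).elim (fun ⟨a, _⟩ => a)
      (fun ⟨_, hneg⟩ => absurd hx0 (not_lt.mpr hneg.le))
  have hmem : x ∈ Set.Ioo (0:ℝ) 1 := ⟨hx0, hx2⟩
  have hineq := h x hmem
  have hpb : (0:ℝ) < (1 + x) ^ b := Real.rpow_pos_of_pos (by linarith) b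
  have : Real.arccos x * (1 + x) ^ b < Real.pi / 2 * (1 - x) ^ ((1:ℝ)/2) := by
    rw [lt_div_iff₀ hpb] at hineq
    linarith
  have : f x < 0 := by simp [hf]; linarith
  linarith
end

section
/- Let a, b be real numbers with 1/3 < a − b < 4/π² and 2/π − b < a ≤ 1/2. Suppose further that 16ab(b−a) + (a+b)² > 0 and that x₁ := ((a+b)(2b−2a+1) − √(16ab(b−a)+(a+b)²)) / (2(a−b)²) > 0. Then for every x ∈ (0,1), arccos(x) ≤ ((1+x₁)^{b+1/2} (1−x₁)^{1/2−a} / (a+b+(a−b)x₁)) · (1−x)^a / (1+x)^b. -/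
set_option maxHeartbeats 1000000

open Real Set


lemma auxA (a b x1 : ℝ) (hb : 0 < b) (hba : b < a) (ha2 : a ≤ 1/2)
    (hx0 : 0 < x1) (hx1 : x1 < 1)
    (hQ1 : ∀ t ∈ Icc (0:ℝ) x1, 0 ≤ (a-b)^2*t^2 - (a+b)*(2*b-2*a+1)*t + ((a+b)^2 - (a-b)))
    (hQ2 : ∀ t ∈ Icc x1 (1:ℝ), (a-b)^2*t^2 - (a+b)*(2*b-2*a+1)*t + ((a+b)^2 - (a-b)) ≤ 0) :
    ∀ t ∈ Ioo (0:ℝ) 1,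
      (1+t)^(b+1/2) * (1-t)^(1/2-a) / (a+b+(a-b)*t) ≤
      (1+x1)^(b+1/2) * (1-x1)^(1/2-a) / (a+b+(a-b)*x1) := by
  have hab : 0 < a + b := by linarith
  have hd : 0 < a - b := by linarith
  set L : ℝ → ℝ := fun t => (b+1/2) * Real.log (1+t) + (1/2-a) * Real.log (1-t)
      - Real.log (a+b+(a-b)*t) with hLdef
  have hw : ∀ t : ℝ, 0 ≤ t → 0 < a+b+(a-b)*t := fun t ht => by nlinarith
  have hder : ∀ t ∈ Ico (0:ℝ) 1, HasDerivAt L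
      ((b+1/2) * (1/(1+t)) + (1/2-a) * (-1/(1-t)) - (a-b)/(a+b+(a-b)*t)) t := by
    intro t ht
    obtain ⟨ht0, ht1⟩ := ht
    have h1 : (0:ℝ) < 1 + t := by linarith
    have h2 : (0:ℝ) < 1 - t := by linarith
    have h3 := hw t ht0
    have d1 : HasDerivAt (fun y : ℝ => 1 + y) 1 t := by
      simpa using (hasDerivAt_id t).const_add 1
    have d2 : HasDerivAt (fun y : ℝ => 1 - y) (-1) t := by
      exact (hasDerivAt_id t).const_sub 1
    have d3 : HasDerivAt (fun y : ℝ => a + b + (a-b)*y) (a-b) t := by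
      simpa using ((hasDerivAt_id t).const_mul (a-b)).const_add (a+b)
    have l1 := (d1.log h1.ne').const_mul (b+1/2)
    have l2 := (d2.log h2.ne').const_mul (1/2-a)
    have l3 := d3.log h3.ne'
    have := (l1.add l2).sub l3
    exact this
  have hderiv : ∀ t ∈ Ico (0:ℝ) 1, deriv L t =
      ((a-b)^2*t^2 - (a+b)*(2*b-2*a+1)*t + ((a+b)^2 - (a-b))) / ((1-t^2)*(a+b+(a-b)*t)) := by
    intro t ht
    rw [(hder t ht).deriv]
    obtain ⟨ht0, ht1⟩ := ht
    have h1 : (0:ℝ) < 1 + t := by linarith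
    have h2 : (0:ℝ) < 1 - t := by linarith
    have h3 := hw t ht0
    have h12 : (0:ℝ) < 1 - t^2 := by nlinarith
    field_simp
    ring
  -- monotone on [0, x1], antitone on [x1, 1)
  intro t ht
  have hcont : ∀ s : Set ℝ, s ⊆ Ico (0:ℝ) 1 → ContinuousOn L s := by
    intro s hs
    exact fun y hy => ((hder y (hs hy)).continuousAt).continuousWithinAt
  have key : L t ≤ L x1 := by
    rcases le_total t x1 with hcase | hcase
    · have hsub : Icc t x1 ⊆ Ico (0:ℝ) 1 := fun y hy => ⟨le_trans ht.1.le hy.1, lt_of_le_of_lt hy.2 hx1⟩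
      have hmono : MonotoneOn L (Icc t x1) := by
        apply monotoneOn_of_deriv_nonneg (convex_Icc t x1) (hcont _ hsub)
        · intro y hy
          rw [interior_Icc] at hy
          exact ((hder y (hsub ⟨hy.1.le, hy.2.le⟩)).differentiableAt).differentiableWithinAt
        · intro y hy
          rw [interior_Icc] at hy
          have hy' : y ∈ Ico (0:ℝ) 1 := hsub ⟨hy.1.le, hy.2.le⟩
          rw [hderiv y hy']
          apply div_nonneg
          · exact hQ1 y ⟨le_trans ht.1.le hy.1.le, hy.2.le⟩
          · have h12 : (0:ℝ) < 1 - y^2 := by nlinarith [hy'.1, hy'.2]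
            exact (mul_pos h12 (hw y hy'.1)).le
      exact hmono (left_mem_Icc.mpr hcase) (right_mem_Icc.mpr hcase) hcase
    · have hsub : Icc x1 t ⊆ Ico (0:ℝ) 1 := fun y hy => ⟨le_trans hx0.le hy.1, lt_of_le_of_lt hy.2 ht.2⟩
      have hmono : AntitoneOn L (Icc x1 t) := by
        apply antitoneOn_of_deriv_nonpos (convex_Icc x1 t) (hcont _ hsub)
        · intro y hy
          rw [interior_Icc] at hy
          exact ((hder y (hsub ⟨hy.1.le, hy.2.le⟩)).differentiableAt).differentiableWithinAt
        · intro y hy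
          rw [interior_Icc] at hy
          have hy' : y ∈ Ico (0:ℝ) 1 := hsub ⟨hy.1.le, hy.2.le⟩
          rw [hderiv y hy']
          apply div_nonpos_of_nonpos_of_nonneg
          · exact hQ2 y ⟨hy.1.le, le_trans hy.2.le (le_of_lt ht.2)⟩
          · have h12 : (0:ℝ) < 1 - y^2 := by nlinarith [hy'.1, hy'.2]
            exact (mul_pos h12 (hw y hy'.1)).le
      exact hmono (left_mem_Icc.mpr hcase) (right_mem_Icc.mpr hcase) hcase
  have hGexp : ∀ y : ℝ, 0 ≤ y → y < 1 →
      (1+y)^(b+1/2) * (1-y)^(1/2-a) / (a+b+(a-b)*y) = Real.exp (L y) := by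
    intro y hy0 hy1
    have h1 : (0:ℝ) < 1 + y := by linarith
    have h2 : (0:ℝ) < 1 - y := by linarith
    have h3 := hw y hy0
    rw [hLdef]
    simp only []
    rw [Real.rpow_def_of_pos h1, Real.rpow_def_of_pos h2, Real.exp_sub, Real.exp_add,
      Real.exp_log h3]
    ring_nf
  rw [hGexp t ht.1.le ht.2, hGexp x1 hx0.le hx1]
  exact Real.exp_le_exp.mpr key


lemma auxB (a b C : ℝ) (ha : 0 < a) (hb : 0 < b)
    (hC : ∀ t ∈ Ioo (0:ℝ) 1,
      (1+t)^(b+1/2) * (1-t)^(1/2-a) / (a+b+(a-b)*t) ≤ C) :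
    ∀ x ∈ Ioo (0:ℝ) 1, Real.arccos x ≤ C * ((1-x)^a / (1+x)^b) := by
  intro x hx
  set g : ℝ → ℝ := fun y => C * ((1-y)^a / (1+y)^b) - Real.arccos y with hgdef
  have hg1 : g 1 = 0 := by
    simp [hgdef, Real.zero_rpow ha.ne', Real.arccos_one]
  have hkey : ∀ y ∈ Ioo x 1, 1/Real.sqrt (1-y^2) ≤ C * ((a+b+(a-b)*y) * ((1-y)^(a-1) * (1+y)^(-b-1))) := by
    intro y hy
    have hy0 : 0 < y := lt_trans hx.1 hy.1
    have hy1 : y < 1 := hy.2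
    have hu : (0:ℝ) < 1 - y := by linarith
    have hv : (0:ℝ) < 1 + y := by linarith
    have hw : (0:ℝ) < a + b + (a-b)*y := by nlinarith
    have hCy := hC y ⟨hy0, hy1⟩
    have hpos : (0:ℝ) < (a+b+(a-b)*y) * ((1-y)^(a-1) * (1+y)^(-b-1)) := by
      have := Real.rpow_pos_of_pos hu (a-1)
      have := Real.rpow_pos_of_pos hv (-b-1)
      positivity
    have hmul := mul_le_mul_of_nonneg_right hCy hpos.le
    have hident : (1+y)^(b+1/2) * (1-y)^(1/2-a) / (a+b+(a-b)*y) *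
        ((a+b+(a-b)*y) * ((1-y)^(a-1) * (1+y)^(-b-1))) = 1/Real.sqrt (1-y^2) := by
      have e1 : (1-y)^(1/2-a) * (1-y)^(a-1) = (1-y)^(-(1/2) : ℝ) := by
        rw [← Real.rpow_add hu]; congr 1; ring
      have e2 : (1+y)^(b+1/2) * (1+y)^(-b-1) = (1+y)^(-(1/2) : ℝ) := by
        rw [← Real.rpow_add hv]; congr 1; ring
      have e3 : Real.sqrt (1-y^2) = (1-y)^((1/2:ℝ)) * (1+y)^((1/2:ℝ)) := by
        rw [show (1:ℝ)-y^2 = (1-y)*(1+y) by ring, Real.sqrt_eq_rpow,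
          Real.mul_rpow hu.le hv.le]
      have hstep : ∀ (A X : ℝ), A/(a+b+(a-b)*y)*((a+b+(a-b)*y)*X) = A*X := by
        intro A X; field_simp
      rw [hstep]
      rw [show (1+y)^(b+1/2) * (1-y)^(1/2-a) * ((1-y)^(a-1) * (1+y)^(-b-1)) =
        ((1-y)^(1/2-a) * (1-y)^(a-1)) * ((1+y)^(b+1/2) * (1+y)^(-b-1)) from by ring, e1, e2, e3]
      rw [Real.rpow_neg hu.le, Real.rpow_neg hv.le]
      field_simp
    calc 1/Real.sqrt (1-y^2) = (1+y)^(b+1/2) * (1-y)^(1/2-a) / (a+b+(a-b)*y) *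
        ((a+b+(a-b)*y) * ((1-y)^(a-1) * (1+y)^(-b-1))) := hident.symm
      _ ≤ C * ((a+b+(a-b)*y) * ((1-y)^(a-1) * (1+y)^(-b-1))) := hmul
  -- derivative of g on (x,1)
  have hder : ∀ y ∈ Ioo x 1, HasDerivAt g
      (C * ((-1 * a * (1-y)^(a-1)) * (1+y)^b - (1-y)^a * (1 * b * (1+y)^(b-1))) / ((1+y)^b)^2
        - (-(1 / Real.sqrt (1 - y^2)))) y := by
    intro y hy
    have hy0 : 0 < y := lt_trans hx.1 hy.1
    have hy1 : y < 1 := hy.2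
    have hu : (0:ℝ) < 1 - y := by linarith
    have hv : (0:ℝ) < 1 + y := by linarith
    have d2 : HasDerivAt (fun z : ℝ => 1 - z) (-1) y := by
      exact (hasDerivAt_id y).const_sub 1
    have d1 : HasDerivAt (fun z : ℝ => 1 + z) 1 y := by
      simpa using (hasDerivAt_id y).const_add 1
    have dnum : HasDerivAt (fun z : ℝ => (1-z)^a) (-1 * a * (1-y)^(a-1)) y := by
      have := d2.rpow_const (p := a) (Or.inl hu.ne')
      convert this using 1
    have dden : HasDerivAt (fun z : ℝ => (1+z)^b) (1 * b * (1+y)^(b-1)) y := by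
      have := d1.rpow_const (p := b) (Or.inl hv.ne')
      convert this using 1
    have hdenne : (1+y)^b ≠ 0 := (Real.rpow_pos_of_pos hv b).ne'
    have ddiv := (dnum.div dden hdenne).const_mul C
    have darc : HasDerivAt Real.arccos (-(1 / Real.sqrt (1 - y^2))) y :=
      Real.hasDerivAt_arccos (by linarith) (by linarith)
    have := ddiv.sub darc
    exact this.congr_deriv (by ring)
  have hanti : AntitoneOn g (Icc x 1) := by
    apply antitoneOn_of_deriv_nonpos (convex_Icc x 1)
    · have c1 : ContinuousOn (fun y : ℝ => (1-y)^a) (Icc x 1) := by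
        intro y hy
        exact (ContinuousAt.rpow_const (by fun_prop) (Or.inr ha.le)).continuousWithinAt
      have c2 : ContinuousOn (fun y : ℝ => (1+y)^b) (Icc x 1) := by
        intro y hy
        have hv : (0:ℝ) < 1 + y := by have := hy.1; have := hx.1; linarith
        exact (ContinuousAt.rpow_const (by fun_prop) (Or.inl hv.ne')).continuousWithinAt
      have c3 : ∀ y ∈ Icc x 1, (1+y)^b ≠ 0 := by
        intro y hy
        have hv : (0:ℝ) < 1 + y := by have := hy.1; have := hx.1; linarith
        exact (Real.rpow_pos_of_pos hv b).ne'
      exact (((c1.div c2 c3).const_smul C).sub Real.continuous_arccos.continuousOn).congr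
        (fun y _ => by simp [hgdef, smul_eq_mul])
    · intro y hy
      rw [interior_Icc] at hy
      exact (hder y hy).differentiableAt.differentiableWithinAt
    · intro y hy
      rw [interior_Icc] at hy
      rw [(hder y hy).deriv]
      have hy0 : 0 < y := lt_trans hx.1 hy.1
      have hy1 : y < 1 := hy.2
      have hu : (0:ℝ) < 1 - y := by linarith
      have hv : (0:ℝ) < 1 + y := by linarith
      have hE : C * ((-1 * a * (1-y)^(a-1)) * (1+y)^b - (1-y)^a * (1 * b * (1+y)^(b-1))) / ((1+y)^b)^2
          = -(C * ((a+b+(a-b)*y) * ((1-y)^(a-1) * (1+y)^(-b-1)))) := by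
        have eu : (1-y)^a = (1-y)^(a-1) * (1-y) := by
          rw [← Real.rpow_add_one hu.ne' (a-1)]; congr 1; ring
        have ev : (1+y)^b = (1+y)^(b-1) * (1+y) := by
          rw [← Real.rpow_add_one hv.ne' (b-1)]; congr 1; ring
        have ev2 : (1+y)^(-b-1) * ((1+y)^b)^2 = (1+y)^(b-1) := by
          rw [← Real.rpow_natCast ((1+y)^b) 2, ← Real.rpow_mul hv.le, ← Real.rpow_add hv]
          congr 1; push_cast; ring
        rw [eu, div_eq_iff (by positivity : ((1+y)^b)^2 ≠ 0)]
        rw [show -(C * ((a+b+(a-b)*y) * ((1-y)^(a-1) * (1+y)^(-b-1)))) * ((1+y)^b)^2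
          = -(C * ((a+b+(a-b)*y) * ((1-y)^(a-1) * ((1+y)^(-b-1) * ((1+y)^b)^2)))) from by ring, ev2]
        rw [ev]
        ring
      rw [hE]
      have := hkey y hy
      linarith
  have hfin := hanti (left_mem_Icc.mpr hx.2.le) (right_mem_Icc.mpr hx.2.le) hx.2.le
  rw [hg1] at hfin
  have h0 : 0 ≤ g x := hfin
  simp only [hgdef] at h0
  linarith

theorem carlson_arccos_upper_bound_extreme (a b : ℝ)
    (h1 : 1 / 3 < a - b) (h2 : a - b < 4 / Real.pi ^ 2)
    (h3 : 2 / Real.pi - b < a) (h4 : a ≤ 1 / 2)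
    (h5 : 16 * a * b * (b - a) + (a + b) ^ 2 > 0)
    (h6 : ((a + b) * (2 * b - 2 * a + 1) -
        Real.sqrt (16 * a * b * (b - a) + (a + b) ^ 2)) / (2 * (a - b) ^ 2) > 0) :
    ∀ x ∈ Set.Ioo (0 : ℝ) 1,
      Real.arccos x ≤
        ((1 + ((a + b) * (2 * b - 2 * a + 1) -
              Real.sqrt (16 * a * b * (b - a) + (a + b) ^ 2)) / (2 * (a - b) ^ 2)) ^ (b + 1 / 2) *
          (1 - ((a + b) * (2 * b - 2 * a + 1) -
              Real.sqrt (16 * a * b * (b - a) + (a + b) ^ 2)) / (2 * (a - b) ^ 2)) ^ (1 / 2 - a) /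
          (a + b + (a - b) * (((a + b) * (2 * b - 2 * a + 1) -
              Real.sqrt (16 * a * b * (b - a) + (a + b) ^ 2)) / (2 * (a - b) ^ 2)))) *
        ((1 - x) ^ a / (1 + x) ^ b) := by
  have hpi3 : (3:ℝ) < Real.pi := Real.pi_gt_three
  have hpi4 : Real.pi < 3.15 := Real.pi_lt_d2
  have hpip : (0:ℝ) < Real.pi := Real.pi_pos
  have hd : 0 < a - b := by linarith
  have hab2 : 2 / Real.pi < a + b := by linarith
  have habl : (2:ℝ)/3.15 < 2/Real.pi := by
    apply div_lt_div_of_pos_left <;> norm_num <;> linarith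
  have hb : 0 < b := by
    have : (2:ℝ)/3.15 < a + b := lt_trans habl hab2
    norm_num at this
    linarith
  have ha : 0 < a := by linarith
  have hd2 : a - b < 1/2 := by
    have h9 : (9:ℝ) < Real.pi^2 := by nlinarith
    have : 4/Real.pi^2 < 4/9 := by
      apply div_lt_div_of_pos_left <;> norm_num <;> linarith
    linarith
  set s := Real.sqrt (16 * a * b * (b - a) + (a + b) ^ 2) with hsdef
  have hs0 : 0 ≤ s := Real.sqrt_nonneg _
  have hs2 : s^2 = 16 * a * b * (b - a) + (a + b) ^ 2 := Real.sq_sqrt h5.le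
  set x1 := ((a + b) * (2 * b - 2 * a + 1) - s) / (2 * (a - b) ^ 2) with hx1def
  have hx0 : 0 < x1 := h6
  have hdsq : (0:ℝ) < (a-b)^2 := by positivity
  have hx1eq : 2*(a-b)^2 * x1 = (a+b)*(2*b-2*a+1) - s := by
    rw [hx1def]; field_simp
  have hMlt : (a+b)*(2*b-2*a+1) < 2*(a-b)^2 := by
    nlinarith [mul_nonneg (by linarith : (0:ℝ) ≤ 1-(a-b)-(a+b)) (by linarith : (0:ℝ) ≤ 1-2*(a-b))]
  have hx1lt : x1 < 1 := by nlinarith [hx1eq, hs0, hMlt, hdsq]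
  have key2 : 2*(a-b)^2 - (a+b)*(2*b-2*a+1) ≤ s := by
    rw [hsdef]
    apply (Real.le_sqrt (by linarith) h5.le).mpr
    nlinarith [mul_nonneg (mul_nonneg hdsq.le ha.le) (by linarith : (0:ℝ) ≤ 1-2*a)]
  have hs2' : s^2 = ((a+b)*(2*b-2*a+1))^2 - 4*(a-b)^2*((a+b)^2-(a-b)) := by rw [hs2]; ring
  have hmul : 4*(a-b)^2 * ((a-b)^2*x1^2 - (a+b)*(2*b-2*a+1)*x1 + ((a+b)^2 - (a-b))) = 0 := by
    linear_combination (2*(a-b)^2*x1 - (a+b)*(2*b-2*a+1) - s) * hx1eq + hs2'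
  have hQx1 : (a-b)^2*x1^2 - (a+b)*(2*b-2*a+1)*x1 + ((a+b)^2 - (a-b)) = 0 :=
    (mul_eq_zero.mp hmul).resolve_left (by positivity)
  have hQ1 : ∀ t ∈ Icc (0:ℝ) x1, 0 ≤ (a-b)^2*t^2 - (a+b)*(2*b-2*a+1)*t + ((a+b)^2 - (a-b)) := by
    intro t ht
    have hf1 : t - x1 ≤ 0 := by linarith [ht.2]
    have hf2 : (a-b)^2*(t+x1) - (a+b)*(2*b-2*a+1) ≤ 0 := by
      nlinarith [mul_nonneg hdsq.le (sub_nonneg.mpr ht.2)]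
    nlinarith [mul_nonneg (neg_nonneg.mpr hf1) (neg_nonneg.mpr hf2)]
  have hQ2 : ∀ t ∈ Icc x1 (1:ℝ), (a-b)^2*t^2 - (a+b)*(2*b-2*a+1)*t + ((a+b)^2 - (a-b)) ≤ 0 := by
    intro t ht
    have hf1 : 0 ≤ t - x1 := by linarith [ht.1]
    have hf2 : (a-b)^2*(t+x1) - (a+b)*(2*b-2*a+1) ≤ 0 := by
      nlinarith [mul_nonneg hdsq.le (sub_nonneg.mpr ht.2)]
    nlinarith [mul_nonpos_of_nonneg_of_nonpos hf1 hf2]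
  have hC := auxA a b x1 hb (by linarith) h4 hx0 hx1lt hQ1 hQ2
  exact auxB a b _ ha hb hC
end
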